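/- arXiv:0808.1307 — 7 statements merged into one kernel-verified Lean document; each statement's English description precedes it below -/
import Mathlib

section
/- Let n ≥ 1, θ > 0, let Q : [0,∞) → Mat(n,ℂ) be continuous, let F : [0,∞) → ℂⁿ be continuous and integrable, and let U : [0,∞) → ℂⁿ be a bounded, square-integrable C¹ solution of U'(z) = Q(z)U(z) + F(z) with U(z) → 0 as z → ∞. Suppose S ∈ Mat(n,ℂ) is Hermitian with ⟨Su,u⟩ ≥ |u|² for all u ∈ ℂⁿ, and Re(S Q(z)) ≥ θ·Id as Hermitian forms for every z ≥ 0. Then there is a constant C > 0, depending only on the operator norm ‖S‖ (in particular independent of θ, Q, F, U), such that sup_{z≥0} |U(z)|² + θ ∫₀^∞ |U(z)|² dz ≤ C (∫₀^∞ |F(z)| dz)². -/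
open MeasureTheory Set Matrix

variable {n : ℕ}

lemma aux_apply (A : Matrix (Fin n) (Fin n) ℂ) (u : EuclideanSpace ℂ (Fin n)) :
    Matrix.toEuclideanCLM (𝕜 := ℂ) A u = Matrix.toEuclideanLin A u := rfl

lemma aux_re_le (S : Matrix (Fin n) (Fin n) ℂ) (u v : EuclideanSpace ℂ (Fin n)) :
    (inner (𝕜 := ℂ) (Matrix.toEuclideanLin S u) v).re ≤
      ‖Matrix.toEuclideanCLM (𝕜 := ℂ) S‖ * ‖u‖ * ‖v‖ := by
  calc (inner (𝕜 := ℂ) (Matrix.toEuclideanLin S u) v).re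
      ≤ ‖(inner (𝕜 := ℂ) (Matrix.toEuclideanLin S u) v)‖ := Complex.re_le_norm _
    _ ≤ ‖Matrix.toEuclideanLin S u‖ * ‖v‖ := norm_inner_le_norm _ _
    _ ≤ ‖Matrix.toEuclideanCLM (𝕜 := ℂ) S‖ * ‖u‖ * ‖v‖ := by
        rw [← aux_apply]
        exact mul_le_mul_of_nonneg_right ((Matrix.toEuclideanCLM (𝕜 := ℂ) S).le_opNorm u)
          (norm_nonneg _)

lemma aux_herm (S : Matrix (Fin n) (Fin n) ℂ) (hS : S.IsHermitian)
    (u v : EuclideanSpace ℂ (Fin n)) :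
    inner (𝕜 := ℂ) (Matrix.toEuclideanLin S u) v = inner (𝕜 := ℂ) u (Matrix.toEuclideanLin S v) := by
  rw [← aux_apply, ← aux_apply]
  have h1 : Matrix.toEuclideanCLM (𝕜 := ℂ) Sᴴ = star (Matrix.toEuclideanCLM (𝕜 := ℂ) S) :=
    map_star _ _
  have h2 : star (Matrix.toEuclideanCLM (𝕜 := ℂ) S) = Matrix.toEuclideanCLM (𝕜 := ℂ) S := by
    rw [← h1, hS.eq]
  calc inner (𝕜 := ℂ) (Matrix.toEuclideanCLM (𝕜 := ℂ) S u) v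
      = inner (𝕜 := ℂ) (ContinuousLinearMap.adjoint (Matrix.toEuclideanCLM (𝕜 := ℂ) S) u) v := by
        rw [← ContinuousLinearMap.star_eq_adjoint, h2]
    _ = inner (𝕜 := ℂ) u (Matrix.toEuclideanCLM (𝕜 := ℂ) S v) :=
        ContinuousLinearMap.adjoint_inner_left _ _ _

lemma aux_symm_re (B : Matrix (Fin n) (Fin n) ℂ) (u : EuclideanSpace ℂ (Fin n)) :
    (inner (𝕜 := ℂ) (Matrix.toEuclideanLin ((2⁻¹ : ℂ) • (B + Bᴴ)) u) u).re =
      (inner (𝕜 := ℂ) (Matrix.toEuclideanLin B u) u).re := by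
  have hadj : inner (𝕜 := ℂ) (Matrix.toEuclideanLin Bᴴ u) u
      = starRingEnd ℂ (inner (𝕜 := ℂ) (Matrix.toEuclideanLin B u) u) := by
    rw [← aux_apply, ← aux_apply]
    have h1 : Matrix.toEuclideanCLM (𝕜 := ℂ) Bᴴ = star (Matrix.toEuclideanCLM (𝕜 := ℂ) B) :=
      map_star _ _
    rw [h1, ContinuousLinearMap.star_eq_adjoint, ContinuousLinearMap.adjoint_inner_left,
      ← inner_conj_symm]
  have : Matrix.toEuclideanLin ((2⁻¹ : ℂ) • (B + Bᴴ)) u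
      = (2⁻¹ : ℂ) • (Matrix.toEuclideanLin B u + Matrix.toEuclideanLin Bᴴ u) := by
    simp [map_add, _root_.map_smul]
  rw [this, inner_smul_left, inner_add_left, hadj]
  simp [Complex.add_re, Complex.mul_re]
  rw [← inner_conj_symm (Matrix.toEuclideanLin B u) u, Complex.conj_re]
  ring

lemma aux_mul (A B : Matrix (Fin n) (Fin n) ℂ) (u : EuclideanSpace ℂ (Fin n)) :
    Matrix.toEuclideanLin (A * B) u = Matrix.toEuclideanLin A (Matrix.toEuclideanLin B u) := by
  rw [← aux_apply, ← aux_apply, ← aux_apply, _root_.map_mul]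
  rfl

set_option maxHeartbeats 1000000 in
lemma aux_deriv (U : ℝ → EuclideanSpace ℂ (Fin n)) (U' : EuclideanSpace ℂ (Fin n))
    (S : Matrix (Fin n) (Fin n) ℂ) (hS : S.IsHermitian) (s : Set ℝ) (z : ℝ)
    (hU : HasDerivWithinAt U U' s z) :
    HasDerivWithinAt (fun w => (inner (𝕜 := ℂ) (Matrix.toEuclideanLin S (U w)) (U w)).re)
      (2 * (inner (𝕜 := ℂ) (Matrix.toEuclideanLin S U') (U z)).re) s z := by
  have hSU : HasDerivWithinAt ((Matrix.toEuclideanCLM (𝕜 := ℂ) S) ∘ U)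
      (Matrix.toEuclideanCLM (𝕜 := ℂ) S U') s z :=
    ((Matrix.toEuclideanCLM (𝕜 := ℂ) S).restrictScalars ℝ).hasFDerivAt
      (x := U z)|>.comp_hasDerivWithinAt z hU
  have h2 := hSU.inner ℂ hU
  have h3 : HasDerivWithinAt (fun w => (inner (𝕜 := ℂ) (Matrix.toEuclideanLin S (U w)) (U w)).re)
      (Complex.reCLM (inner (𝕜 := ℂ) (Matrix.toEuclideanCLM (𝕜 := ℂ) S (U z)) U'
        + inner (𝕜 := ℂ) (Matrix.toEuclideanCLM (𝕜 := ℂ) S U') (U z))) s z :=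
    (Complex.reCLM.hasFDerivAt.comp_hasDerivWithinAt z h2)
  convert h3 using 1
  have h4 : inner (𝕜 := ℂ) (Matrix.toEuclideanCLM (𝕜 := ℂ) S (U z)) U'
      = inner (𝕜 := ℂ) (U z) (Matrix.toEuclideanLin S U') := by
    rw [aux_apply]; exact aux_herm S hS _ _
  have h5 : (inner (𝕜 := ℂ) (U z) (Matrix.toEuclideanLin S U')).re
      = (inner (𝕜 := ℂ) (Matrix.toEuclideanLin S U') (U z)).re := by
    rw [← inner_conj_symm (Matrix.toEuclideanLin S U') (U z), Complex.conj_re]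
  have h6 : (inner (𝕜 := ℂ) (Matrix.toEuclideanLin S (U z)) U').re
      = (inner (𝕜 := ℂ) (Matrix.toEuclideanLin S U') (U z)).re := by
    rw [aux_herm S hS, ← inner_conj_symm (Matrix.toEuclideanLin S U') (U z), Complex.conj_re]
  simp only [Complex.reCLM_apply, Complex.add_re, Function.comp_apply, h4, h5, aux_apply, h6]
  ring

/-- Symmetrizer energy estimate (positive symmetrizer case), Lemma 4.2 of the paper:
if `S` is Hermitian with `⟨Su,u⟩ ≥ |u|²` and `Re (S Q z) ≥ θ Id` as Hermitian forms,
then any bounded square-integrable decaying solution of `U' = Q U + F` on `[0,∞)` satisfies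
`sup |U|² + θ ∫ |U|² ≤ C (∫ |F|)²` with `C` depending only on the operator norm of `S`. -/
theorem stmt_0 (n : ℕ) (hn : 1 ≤ n) (K : ℝ) :
    ∃ C : ℝ, 0 < C ∧
      ∀ (θ : ℝ), 0 < θ →
      ∀ (Q : ℝ → Matrix (Fin n) (Fin n) ℂ)
        (F U : ℝ → EuclideanSpace ℂ (Fin n))
        (S : Matrix (Fin n) (Fin n) ℂ),
        ContinuousOn Q (Ici 0) →
        ContinuousOn F (Ici 0) →
        IntegrableOn (fun z => ‖F z‖) (Ici 0) →
        (∃ M : ℝ, ∀ z ∈ Ici (0:ℝ), ‖U z‖ ≤ M) →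
        IntegrableOn (fun z => ‖U z‖ ^ 2) (Ici 0) →
        (∀ z ∈ Ici (0:ℝ), HasDerivWithinAt U
            (Matrix.toEuclideanLin (Q z) (U z) + F z) (Ici 0) z) →
        Filter.Tendsto U Filter.atTop (nhds 0) →
        S.IsHermitian →
        (∀ u : EuclideanSpace ℂ (Fin n),
            ‖u‖ ^ 2 ≤ (inner (𝕜 := ℂ) (Matrix.toEuclideanLin S u) u).re) →
        (∀ z ∈ Ici (0:ℝ), ∀ u : EuclideanSpace ℂ (Fin n),
            θ * ‖u‖ ^ 2 ≤
              (inner (𝕜 := ℂ)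
                (Matrix.toEuclideanLin
                  ((2⁻¹ : ℂ) • (S * Q z + (S * Q z)ᴴ)) u) u).re) →
        ‖Matrix.toEuclideanCLM (𝕜 := ℂ) S‖ ≤ K →
        ∀ x ∈ Ici (0:ℝ),
          ‖U x‖ ^ 2 + θ * ∫ z in Ici (0:ℝ), ‖U z‖ ^ 2 ≤
            C * (∫ z in Ici (0:ℝ), ‖F z‖) ^ 2 := by
  set K' := max K 1 with hK'
  have hK1 : (1:ℝ) ≤ K' := le_max_right _ _
  have hK0 : (0:ℝ) < K' := lt_of_lt_of_le one_pos hK1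
  refine ⟨6 * K' ^ 2 + 1, by positivity, ?_⟩
  intro θ hθ Q F U S hQc hFc hFi hUb hUi hUd hU0 hS hScoer hSQ hSK x hx
  obtain ⟨M, hM⟩ := hUb
  have hTK : ‖Matrix.toEuclideanCLM (𝕜 := ℂ) S‖ ≤ K' := hSK.trans (le_max_left _ _)
  set U' : ℝ → EuclideanSpace ℂ (Fin n) := fun z => Matrix.toEuclideanLin (Q z) (U z) + F z
    with hU'
  set E : ℝ → ℝ := fun z => (inner (𝕜 := ℂ) (Matrix.toEuclideanLin S (U z)) (U z)).re with hE
  have hEd : ∀ z ∈ Ici (0:ℝ), HasDerivWithinAt E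
      (2 * (inner (𝕜 := ℂ) (Matrix.toEuclideanLin S (U' z)) (U z)).re) (Ici 0) z :=
    fun z hz => aux_deriv U (U' z) S hS _ z (hUd z hz)
  have hUc : ContinuousOn U (Ici 0) := fun z hz => (hUd z hz).continuousWithinAt
  have hEc : ContinuousOn E (Ici 0) := fun z hz => (hEd z hz).continuousWithinAt
  -- the supremum of ‖U‖
  set m := sSup ((fun z => ‖U z‖) '' Ici 0) with hm
  have hne : ((fun z => ‖U z‖) '' Ici 0).Nonempty := ⟨‖U 0‖, ⟨0, self_mem_Ici, rfl⟩⟩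
  have hbdd : BddAbove ((fun z => ‖U z‖) '' Ici 0) := ⟨M, by rintro y ⟨z, hz, rfl⟩; exact hM z hz⟩
  have hmle : ∀ z ∈ Ici (0:ℝ), ‖U z‖ ≤ m := fun z hz => le_csSup hbdd ⟨z, hz, rfl⟩
  have hm0 : 0 ≤ m := le_trans (norm_nonneg _) (hmle 0 self_mem_Ici)
  set IF := ∫ z in Ici (0:ℝ), ‖F z‖ with hIF
  have hIF0 : 0 ≤ IF := setIntegral_nonneg measurableSet_Ici (fun z _ => norm_nonneg _)
  -- pointwise derivative lower bound
  have hpt : ∀ z ∈ Ici (0:ℝ), 2*θ*‖U z‖^2 - 2*K'*(‖F z‖*m) ≤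
      2 * (inner (𝕜 := ℂ) (Matrix.toEuclideanLin S (U' z)) (U z)).re := by
    intro z hz
    have hsplit : inner (𝕜 := ℂ) (Matrix.toEuclideanLin S (U' z)) (U z)
        = inner (𝕜 := ℂ) (Matrix.toEuclideanLin (S * Q z) (U z)) (U z)
          + inner (𝕜 := ℂ) (Matrix.toEuclideanLin S (F z)) (U z) := by
      rw [hU', aux_mul]
      rw [← inner_add_left, ← map_add]
    have h1 : θ * ‖U z‖^2 ≤ (inner (𝕜 := ℂ) (Matrix.toEuclideanLin (S * Q z) (U z)) (U z)).re := by
      have := hSQ z hz (U z)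
      rwa [aux_symm_re] at this
    have h2 : -(K' * (‖F z‖ * m)) ≤ (inner (𝕜 := ℂ) (Matrix.toEuclideanLin S (F z)) (U z)).re := by
      have hb := aux_re_le S (F z) (-(U z))
      rw [inner_neg_right, Complex.neg_re, norm_neg] at hb
      have : ‖Matrix.toEuclideanCLM (𝕜 := ℂ) S‖ * ‖F z‖ * ‖U z‖ ≤ K' * (‖F z‖ * m) := by
        have hUm := hmle z hz
        have := mul_le_mul (mul_le_mul hTK le_rfl (norm_nonneg _) hK0.le) hUm (norm_nonneg _)
          (mul_nonneg hK0.le (norm_nonneg (F z)))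
        calc ‖Matrix.toEuclideanCLM (𝕜 := ℂ) S‖ * ‖F z‖ * ‖U z‖ ≤ K' * ‖F z‖ * m := this
          _ = K' * (‖F z‖ * m) := by ring
      linarith
    rw [hsplit, Complex.add_re]
    linarith
  -- FTC inequality
  have hIciSub : ∀ a : ℝ, 0 ≤ a → Icc a x ⊆ Ici (0:ℝ) := by
    intro a ha y hy; exact le_trans ha hy.1
  have key : ∀ a b : ℝ, 0 ≤ a → a ≤ b →
      (∫ z in a..b, (2*θ*‖U z‖^2 - 2*K'*(‖F z‖*m))) ≤ E b - E a := by
    intro a b ha hab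
    have hsub : Icc a b ⊆ Ici (0:ℝ) := fun y hy => le_trans ha hy.1
    have hφc : ContinuousOn (fun z => 2*θ*‖U z‖^2 - 2*K'*(‖F z‖*m)) (Icc a b) := by
      apply ContinuousOn.sub
      · exact continuousOn_const.mul (((hUc.mono hsub).norm).pow 2)
      · exact continuousOn_const.mul (((hFc.mono hsub).norm).mul continuousOn_const)
    refine intervalIntegral.integral_le_sub_of_hasDeriv_right_of_le
      (g' := fun t => 2 * (inner (𝕜 := ℂ) (Matrix.toEuclideanLin S (U' t)) (U t)).re)
      hab (hEc.mono hsub)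
      (fun t ht => ?_) (hφc.integrableOn_Icc) (fun t ht => ?_)
    · have ht0 : t ∈ Ici (0:ℝ) := le_trans ha ht.1.le
      exact (hEd t ht0).mono (fun y hy => mem_Ici.mpr (le_trans (mem_Ici.mp ht0) (le_of_lt (mem_Ioi.mp hy))))
    · exact hpt t (le_trans ha ht.1.le)
  -- bound on ‖F‖ interval integrals
  have hBf : ∀ a b : ℝ, 0 ≤ a → a ≤ b → (∫ z in a..b, ‖F z‖) ≤ IF := by
    intro a b ha hab
    rw [intervalIntegral.integral_of_le hab]
    refine setIntegral_mono_set hFi ?_ ?_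
    · exact Filter.Eventually.of_forall (fun z => norm_nonneg _)
    · exact HasSubset.Subset.eventuallyLE (fun y hy => le_trans ha hy.1.le)
  have hintU : ∀ a b : ℝ, 0 ≤ a → a ≤ b → IntervalIntegrable (fun z => ‖U z‖^2) volume a b := by
    intro a b ha hab
    have hsub : Icc a b ⊆ Ici (0:ℝ) := fun y hy => le_trans ha hy.1
    exact (((hUc.mono hsub).norm).pow 2).intervalIntegrable_of_Icc hab
  have hintF : ∀ a b : ℝ, 0 ≤ a → a ≤ b → IntervalIntegrable (fun z => ‖F z‖*m) volume a b := by
    intro a b ha hab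
    have hsub : Icc a b ⊆ Ici (0:ℝ) := fun y hy => le_trans ha hy.1
    exact (((hFc.mono hsub).norm).mul continuousOn_const).intervalIntegrable_of_Icc hab
  -- rewrite key
  have key2 : ∀ a b : ℝ, 0 ≤ a → a ≤ b →
      E a + 2*θ*(∫ z in a..b, ‖U z‖^2) ≤ E b + 2*K'*m*IF := by
    intro a b ha hab
    have h1 := key a b ha hab
    have heq : (∫ z in a..b, (2*θ*‖U z‖^2 - 2*K'*(‖F z‖*m)))
        = 2*θ*(∫ z in a..b, ‖U z‖^2) - 2*K'*(∫ z in a..b, ‖F z‖*m) := by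
      rw [intervalIntegral.integral_sub ((hintU a b ha hab).const_mul _)
        ((hintF a b ha hab).const_mul _), intervalIntegral.integral_const_mul,
        intervalIntegral.integral_const_mul]
    have heq2 : (∫ z in a..b, ‖F z‖*m) = (∫ z in a..b, ‖F z‖) * m := by
      rw [← intervalIntegral.integral_mul_const]
    have h2 : (∫ z in a..b, ‖F z‖*m) ≤ IF * m := by
      rw [heq2]
      exact mul_le_mul_of_nonneg_right (hBf a b ha hab) hm0
    rw [heq] at h1
    have h3 := mul_le_mul_of_nonneg_left h2 (by linarith : (0:ℝ) ≤ 2*K')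
    linarith [h1, h3]
  -- E bounds
  have hElb : ∀ z, ‖U z‖^2 ≤ E z := fun z => hScoer (U z)
  have hEub : ∀ z, E z ≤ K' * ‖U z‖^2 := by
    intro z
    have := aux_re_le S (U z) (U z)
    have h := mul_le_mul_of_nonneg_right
      (mul_le_mul_of_nonneg_right hTK (norm_nonneg (U z))) (norm_nonneg (U z))
    calc E z ≤ ‖Matrix.toEuclideanCLM (𝕜 := ℂ) S‖ * ‖U z‖ * ‖U z‖ := this
      _ ≤ K' * ‖U z‖ * ‖U z‖ := h
      _ = K' * ‖U z‖^2 := by ring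
  -- limit facts
  have hUn0 : Filter.Tendsto (fun b => K' * ‖U b‖^2) Filter.atTop (nhds 0) := by
    have h1 : Filter.Tendsto (fun b => ‖U b‖) Filter.atTop (nhds 0) := by
      simpa using hU0.norm
    have h2 : Filter.Tendsto (fun b => ‖U b‖^2) Filter.atTop (nhds 0) := by
      simpa using h1.pow 2
    simpa using h2.const_mul K'
  -- step 1 : sup bound
  have step1 : ∀ x' ∈ Ici (0:ℝ), ‖U x'‖^2 ≤ 2*K'*m*IF := by
    intro x' hx'
    have hev : ∀ᶠ b in Filter.atTop, ‖U x'‖^2 ≤ K' * ‖U b‖^2 + 2*K'*m*IF := by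
      filter_upwards [Filter.eventually_ge_atTop x'] with b hb
      have h1 := key2 x' b hx' hb
      have h2 : 0 ≤ ∫ z in x'..b, ‖U z‖^2 :=
        intervalIntegral.integral_nonneg hb (fun z _ => by positivity)
      have h3 : 0 ≤ 2*θ*(∫ z in x'..b, ‖U z‖^2) := mul_nonneg (by linarith) h2
      linarith [hElb x', hEub b, h1, h3]
    have hlim : Filter.Tendsto (fun b => K' * ‖U b‖^2 + 2*K'*m*IF) Filter.atTop
        (nhds (2*K'*m*IF)) := by
      simpa using hUn0.add (tendsto_const_nhds (x := 2*K'*m*IF))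
    exact ge_of_tendsto hlim hev
  -- step 2 : m ≤ 2K'IF (when m > 0)
  have step2 : m * m ≤ 2*K'*IF * m := by
    have hs : ∀ z ∈ Ici (0:ℝ), ‖U z‖ ≤ Real.sqrt (2*K'*m*IF) := by
      intro z hz
      have := step1 z hz
      have h1 : ‖U z‖ = Real.sqrt (‖U z‖^2) := by
        rw [Real.sqrt_sq (norm_nonneg _)]
      rw [h1]
      exact Real.sqrt_le_sqrt this
    have hms : m ≤ Real.sqrt (2*K'*m*IF) := by
      apply csSup_le hne
      rintro y ⟨z, hz, rfl⟩
      exact hs z hz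
    have h2 : m^2 ≤ 2*K'*m*IF := by
      calc m^2 ≤ (Real.sqrt (2*K'*m*IF))^2 := pow_le_pow_left₀ hm0 hms 2
        _ = 2*K'*m*IF := Real.sq_sqrt
            (mul_nonneg (mul_nonneg (mul_nonneg (by norm_num) hK0.le) hm0) hIF0)
    calc m * m = m^2 := (sq m).symm
      _ ≤ 2*K'*m*IF := h2
      _ = 2*K'*IF * m := by ring
  -- step 3 : integral bound
  have hJ : Filter.Tendsto (fun b => ∫ z in (0:ℝ)..b, ‖U z‖^2) Filter.atTop
      (nhds (∫ z in Ioi (0:ℝ), ‖U z‖^2)) :=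
    MeasureTheory.intervalIntegral_tendsto_integral_Ioi 0 (hUi.mono_set Ioi_subset_Ici_self)
      Filter.tendsto_id
  have step3 : 2*θ*(∫ z in Ioi (0:ℝ), ‖U z‖^2) ≤ 2*K'*m*IF := by
    have hev : ∀ᶠ b in Filter.atTop, 2*θ*(∫ z in (0:ℝ)..b, ‖U z‖^2)
        ≤ K' * ‖U b‖^2 + 2*K'*m*IF := by
      filter_upwards [Filter.eventually_ge_atTop (0:ℝ)] with b hb
      have h1 := key2 0 b le_rfl hb
      linarith [hElb 0, hEub b, h1, sq_nonneg (‖U 0‖)]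
    have hliml : Filter.Tendsto (fun b => 2*θ*(∫ z in (0:ℝ)..b, ‖U z‖^2)) Filter.atTop
        (nhds (2*θ*(∫ z in Ioi (0:ℝ), ‖U z‖^2))) := hJ.const_mul _
    have hlimr : Filter.Tendsto (fun b => K' * ‖U b‖^2 + 2*K'*m*IF) Filter.atTop
        (nhds (2*K'*m*IF)) := by
      simpa using hUn0.add (tendsto_const_nhds (x := 2*K'*m*IF))
    exact le_of_tendsto_of_tendsto hliml hlimr hev
  have hIoi : (∫ z in Ici (0:ℝ), ‖U z‖^2) = ∫ z in Ioi (0:ℝ), ‖U z‖^2 :=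
    MeasureTheory.integral_Ici_eq_integral_Ioi
  -- conclude
  have hmIF : 3*K'*(m*IF) ≤ 6*K'^2*IF^2 := by
    rcases eq_or_lt_of_le hm0 with hm | hm
    · have h0 : (0:ℝ) ≤ 6*K'^2*IF^2 := by positivity
      rw [← hm]
      simpa using h0
    · have hm2 : m ≤ 2*K'*IF := le_of_mul_le_mul_right (by linarith [step2]) hm
      have h4 : m * IF ≤ (2*K'*IF)*IF := mul_le_mul_of_nonneg_right hm2 hIF0
      have h5 : 3*K'*(m*IF) ≤ 3*K'*((2*K'*IF)*IF) :=
        mul_le_mul_of_nonneg_left h4 (by linarith)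
      calc 3*K'*(m*IF) ≤ 3*K'*((2*K'*IF)*IF) := h5
        _ = 6*K'^2*IF^2 := by ring
  have h1 := step1 x hx
  rw [hIoi]
  linarith [h1, step3, hmIF, sq_nonneg IF]
end

section
/- Let n ≥ 1, θ > 0, let Q : [0,∞) → Mat(n,ℂ) be continuous, let F : [0,∞) → ℂⁿ be continuous and integrable, and let U : [0,∞) → ℂⁿ be a bounded, square-integrable C¹ solution of U'(z) = Q(z)U(z) + F(z) with U(z) → 0 as z → ∞. Suppose S ∈ Mat(n,ℂ) is Hermitian with ⟨Su,u⟩ ≤ −|u|² for all u ∈ ℂⁿ, and Re(S Q(z)) ≥ θ·Id as Hermitian forms for every z ≥ 0. Then there is a constant C > 0, depending only on the operator norm ‖S‖ (in particular independent of θ, Q, F, U), such that sup_{z≥0} |U(z)|² + θ ∫₀^∞ |U(z)|² dz ≤ C ( |U(0)|² + (∫₀^∞ |F(z)| dz)² ). -/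
open MeasureTheory Set Matrix

set_option maxHeartbeats 1000000

/-- Symmetrizer energy estimate (negative symmetrizer case), Lemma 4.2 of the paper:
if `S` is Hermitian with `⟨Su,u⟩ ≤ -|u|²` and `Re (S Q z) ≥ θ Id` as Hermitian forms,
then any bounded square-integrable decaying solution of `U' = Q U + F` on `[0,∞)` satisfies
`sup |U|² + θ ∫ |U|² ≤ C (|U(0)|² + (∫ |F|)²)` with `C` depending only on `‖S‖`. -/
theorem stmt_1 (n : ℕ) (hn : 1 ≤ n) (K : ℝ) :
    ∃ C : ℝ, 0 < C ∧
      ∀ (θ : ℝ), 0 < θ →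
      ∀ (Q : ℝ → Matrix (Fin n) (Fin n) ℂ)
        (F U : ℝ → EuclideanSpace ℂ (Fin n))
        (S : Matrix (Fin n) (Fin n) ℂ),
        ContinuousOn Q (Ici 0) →
        ContinuousOn F (Ici 0) →
        IntegrableOn (fun z => ‖F z‖) (Ici 0) →
        (∃ M : ℝ, ∀ z ∈ Ici (0:ℝ), ‖U z‖ ≤ M) →
        IntegrableOn (fun z => ‖U z‖ ^ 2) (Ici 0) →
        (∀ z ∈ Ici (0:ℝ), HasDerivWithinAt U
            (Matrix.toEuclideanLin (Q z) (U z) + F z) (Ici 0) z) →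
        Filter.Tendsto U Filter.atTop (nhds 0) →
        S.IsHermitian →
        (∀ u : EuclideanSpace ℂ (Fin n),
            (inner (𝕜 := ℂ) (Matrix.toEuclideanLin S u) u).re ≤ -‖u‖ ^ 2) →
        (∀ z ∈ Ici (0:ℝ), ∀ u : EuclideanSpace ℂ (Fin n),
            θ * ‖u‖ ^ 2 ≤
              (inner (𝕜 := ℂ)
                (Matrix.toEuclideanLin
                  ((2⁻¹ : ℂ) • (S * Q z + (S * Q z)ᴴ)) u) u).re) →
        ‖Matrix.toEuclideanCLM (𝕜 := ℂ) S‖ ≤ K →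
        ∀ x ∈ Ici (0:ℝ),
          ‖U x‖ ^ 2 + θ * ∫ z in Ici (0:ℝ), ‖U z‖ ^ 2 ≤
            C * (‖U 0‖ ^ 2 + (∫ z in Ici (0:ℝ), ‖F z‖) ^ 2) := by

  refine ⟨6 * (max K 1) ^ 2, by positivity, ?_⟩
  intro θ hθ Q F U S hQc hFc hFi hUb hUi hUd hUtend hS hSneg hSQ hKb
  set K' : ℝ := max K 1 with hK'def
  have hK'1 : (1 : ℝ) ≤ K' := le_max_right _ _
  have hK'0 : (0 : ℝ) ≤ K' := zero_le_one.trans hK'1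
  set T : EuclideanSpace ℂ (Fin n) →L[ℂ] EuclideanSpace ℂ (Fin n) :=
    Matrix.toEuclideanCLM (𝕜 := ℂ) S with hTdef
  have hTK : ∀ v : EuclideanSpace ℂ (Fin n), ‖T v‖ ≤ K' * ‖v‖ := fun v =>
    (T.le_opNorm v).trans
      (mul_le_mul_of_nonneg_right (hKb.trans (le_max_left _ _)) (norm_nonneg v))
  have hTapp : ∀ v : EuclideanSpace ℂ (Fin n), T v = Matrix.toEuclideanLin S v := by
    intro v
    rw [hTdef, ← Matrix.coe_toEuclideanCLM_eq_toEuclideanLin]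
    rfl
  have hUc : ContinuousOn U (Ici 0) := fun z hz => (hUd z hz).continuousWithinAt
  have hq : Continuous fun v : EuclideanSpace ℂ (Fin n) => (inner (𝕜 := ℂ) (T v) v).re :=
    Complex.continuous_re.comp ((T.continuous).inner continuous_id)
  set E : ℝ → ℝ := fun z => (inner (𝕜 := ℂ) (T (U z)) (U z)).re with hEdef
  set V : ℝ → EuclideanSpace ℂ (Fin n) :=
    fun z => Matrix.toEuclideanLin (Q z) (U z) + F z with hVdef
  set g : ℝ → ℝ := fun z => 2 * (inner (𝕜 := ℂ) (T (V z)) (U z)).re with hgdef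
  have hsymm : ∀ v w : EuclideanSpace ℂ (Fin n),
      (inner (𝕜 := ℂ) (T v) w) = inner (𝕜 := ℂ) v (T w) := by
    have h := Matrix.isHermitian_iff_isSymmetric.mp hS
    intro v w
    rw [hTapp v, hTapp w]
    exact h v w
  have hEderiv : ∀ z ∈ Ici (0:ℝ), HasDerivWithinAt E (g z) (Ici 0) z := by
    intro z hz
    have hU' : HasDerivWithinAt U (V z) (Ici 0) z := hUd z hz
    have hTU : HasDerivWithinAt (fun t => T (U t)) (T (V z)) (Ici 0) z :=
      ((T.restrictScalars ℝ).hasFDerivAt).comp_hasDerivWithinAt z hU'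
    have hinner := HasDerivWithinAt.inner ℂ hTU hU'
    have hcomp := (Complex.reCLM.hasFDerivAt).comp_hasDerivWithinAt z hinner
    have h1 : (inner (𝕜 := ℂ) (T (U z)) (V z)).re = (inner (𝕜 := ℂ) (T (V z)) (U z)).re := by
      rw [hsymm, ← inner_conj_symm]
      exact Complex.conj_re _
    have hval : Complex.reCLM
        (inner (𝕜 := ℂ) (T (U z)) (V z) + inner (𝕜 := ℂ) (T (V z)) (U z)) = g z := by
      simp only [Complex.reCLM_apply, Complex.add_re, h1, hgdef]
      ring
    exact hval ▸ hcomp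
  have hQuad : ∀ z ∈ Ici (0:ℝ), ∀ u : EuclideanSpace ℂ (Fin n),
      θ * ‖u‖ ^ 2 ≤ (inner (𝕜 := ℂ) (T (Matrix.toEuclideanLin (Q z) u)) u).re := by
    intro z hz u
    refine (hSQ z hz u).trans (le_of_eq ?_)
    have hmul : T (Matrix.toEuclideanLin (Q z) u) = Matrix.toEuclideanLin (S * Q z) u := by
      rw [hTapp]
      simp [Matrix.toEuclideanLin_apply, Matrix.mulVec_mulVec]
    set A := S * Q z with hA
    have hexp : Matrix.toEuclideanLin ((2⁻¹ : ℂ) • (A + Aᴴ)) u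
        = (2⁻¹ : ℂ) • (Matrix.toEuclideanLin A u + Matrix.toEuclideanLin Aᴴ u) := by
      simp [map_add, _root_.map_smul]
    rw [hmul, hexp, inner_smul_left, inner_add_left,
      Matrix.toEuclideanLin_conjTranspose_eq_adjoint, LinearMap.adjoint_inner_left,
      ← inner_conj_symm (Matrix.toEuclideanLin A u) u]
    simp [Complex.mul_re, Complex.add_re, Complex.conj_re, Complex.conj_im]
    rw [← inner_conj_symm, Complex.conj_re]
    ring
  have hCLMcont : Continuous
      (fun A : Matrix (Fin n) (Fin n) ℂ => Matrix.toEuclideanCLM (𝕜 := ℂ) A) := by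
    let φ : Matrix (Fin n) (Fin n) ℂ →ₗ[ℂ]
        (EuclideanSpace ℂ (Fin n) →L[ℂ] EuclideanSpace ℂ (Fin n)) :=
      { toFun := fun A => Matrix.toEuclideanCLM (𝕜 := ℂ) A
        map_add' := fun A B => by simp
        map_smul' := fun c A => by simp }
    exact φ.continuous_of_finiteDimensional
  have hVc : ContinuousOn V (Ici 0) := by
    have h1 : ContinuousOn (fun z => Matrix.toEuclideanCLM (𝕜 := ℂ) (Q z)) (Ici 0) :=
      hCLMcont.comp_continuousOn hQc
    have h2 : ContinuousOn (fun z => Matrix.toEuclideanCLM (𝕜 := ℂ) (Q z) (U z)) (Ici 0) :=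
      h1.clm_apply hUc
    have h3 : ∀ z, Matrix.toEuclideanLin (Q z) (U z)
        = Matrix.toEuclideanCLM (𝕜 := ℂ) (Q z) (U z) := by
      intro z
      rw [← Matrix.coe_toEuclideanCLM_eq_toEuclideanLin]
      rfl
    have h4 : ContinuousOn (fun z => Matrix.toEuclideanLin (Q z) (U z)) (Ici 0) := by
      simpa only [h3] using h2
    exact h4.add hFc
  have hgc : ContinuousOn g (Ici 0) := by
    exact continuousOn_const.mul (Complex.continuous_re.comp_continuousOn
      ((T.continuous.comp_continuousOn hVc).inner hUc))
  obtain ⟨M, hM⟩ := hUb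
  set M₀ : ℝ := sSup ((fun z => ‖U z‖) '' Ici 0) with hM0def
  have hbdd : BddAbove ((fun z => ‖U z‖) '' Ici 0) := ⟨M, by rintro _ ⟨z, hz, rfl⟩; exact hM z hz⟩
  have hne : ((fun z => ‖U z‖) '' Ici 0).Nonempty := ⟨‖U 0‖, ⟨0, self_mem_Ici, rfl⟩⟩
  have hM₀ : ∀ x ∈ Ici (0:ℝ), ‖U x‖ ≤ M₀ := fun x hx => le_csSup hbdd ⟨x, hx, rfl⟩
  have hM₀0 : 0 ≤ M₀ := (norm_nonneg (U 0)).trans (hM₀ 0 self_mem_Ici)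
  set G : ℝ := ∫ z in Ici (0:ℝ), ‖F z‖ with hGdef
  have hG0 : 0 ≤ G := setIntegral_nonneg measurableSet_Ici (fun z _ => norm_nonneg _)
  have hglb : ∀ z ∈ Ici (0:ℝ), 2*θ*‖U z‖^2 - 2*(K'*M₀)*‖F z‖ ≤ g z := by
    intro z hz
    have hsplit : g z = 2 * ((inner (𝕜 := ℂ) (T (Matrix.toEuclideanLin (Q z) (U z))) (U z)).re
        + (inner (𝕜 := ℂ) (T (F z)) (U z)).re) := by
      simp [hgdef, hVdef, map_add, inner_add_left, Complex.add_re]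
    have h1 := hQuad z hz (U z)
    have h2 : -(K' * M₀ * ‖F z‖) ≤ (inner (𝕜 := ℂ) (T (F z)) (U z)).re := by
      have habs : |(inner (𝕜 := ℂ) (T (F z)) (U z)).re| ≤ K' * M₀ * ‖F z‖ := by
        calc |(inner (𝕜 := ℂ) (T (F z)) (U z)).re|
            ≤ ‖(inner (𝕜 := ℂ) (T (F z)) (U z) : ℂ)‖ := Complex.abs_re_le_norm _
          _ ≤ ‖T (F z)‖ * ‖U z‖ := norm_inner_le_norm _ _
          _ ≤ (K' * ‖F z‖) * M₀ := by
              exact mul_le_mul (hTK (F z)) (hM₀ z hz) (norm_nonneg _)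
                (mul_nonneg hK'0 (norm_nonneg _))
          _ = K' * M₀ * ‖F z‖ := by ring
      linarith [neg_abs_le ((inner (𝕜 := ℂ) (T (F z)) (U z) : ℂ)).re]
    rw [hsplit]
    nlinarith [h1, h2]
  have hUsqc : ContinuousOn (fun z => ‖U z‖^2) (Ici 0) := (hUc.norm).pow 2
  have hFnc : ContinuousOn (fun z => ‖F z‖) (Ici 0) := hFc.norm
  have key : ∀ a b : ℝ, 0 ≤ a → a ≤ b →
      2*θ*(∫ z in a..b, ‖U z‖^2) - 2*(K'*M₀)*G ≤ E b - E a := by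
    intro a b ha hab
    have hsub : Icc a b ⊆ Ici 0 := fun x hx => ha.trans hx.1
    have hsub' : uIcc a b ⊆ Ici 0 := by rw [uIcc_of_le hab]; exact hsub
    have hEc : ContinuousOn E (Icc a b) := (hq.comp_continuousOn hUc).mono hsub
    have hgi : IntervalIntegrable g volume a b := (hgc.mono hsub').intervalIntegrable
    have hftc : ∫ y in a..b, g y = E b - E a :=
      intervalIntegral.integral_eq_sub_of_hasDeriv_right_of_le hab hEc
        (fun x hx => (hEderiv x (hsub (Ioo_subset_Icc_self hx))).mono
          (fun y hy => le_of_lt (lt_of_le_of_lt (ha.trans hx.1.le) hy)))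
        hgi
    have hloi : IntervalIntegrable (fun z => 2*θ*‖U z‖^2 - 2*(K'*M₀)*‖F z‖) volume a b := by
      exact (((continuousOn_const.mul hUsqc).sub
        (continuousOn_const.mul hFnc)).mono hsub').intervalIntegrable
    have hmono : (∫ z in a..b, (2*θ*‖U z‖^2 - 2*(K'*M₀)*‖F z‖)) ≤ ∫ y in a..b, g y :=
      intervalIntegral.integral_mono_on hab hloi hgi (fun x hx => hglb x (hsub hx))
    have hFab : (∫ z in a..b, ‖F z‖) ≤ G := by
      rw [intervalIntegral.integral_of_le hab]
      exact setIntegral_mono_set hFi (Filter.Eventually.of_forall fun z => norm_nonneg _)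
        ((Ioc_subset_Icc_self.trans hsub).eventuallyLE)
    have hsplit2 : (∫ z in a..b, (2*θ*‖U z‖^2 - 2*(K'*M₀)*‖F z‖))
        = 2*θ*(∫ z in a..b, ‖U z‖^2) - 2*(K'*M₀)*(∫ z in a..b, ‖F z‖) := by
      rw [intervalIntegral.integral_sub (f := fun z => 2*θ*‖U z‖^2) (g := fun z => 2*(K'*M₀)*‖F z‖) ((continuousOn_const.mul hUsqc).mono
          hsub').intervalIntegrable ((continuousOn_const.mul hFnc).mono hsub').intervalIntegrable,
        intervalIntegral.integral_const_mul, intervalIntegral.integral_const_mul]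
    have hcoef : 0 ≤ 2*(K'*M₀) := by positivity
    nlinarith [mul_le_mul_of_nonneg_left hFab hcoef]
  have hEle : ∀ z : ℝ, E z ≤ -‖U z‖^2 := by
    intro z
    have := hSneg (U z)
    rw [← hTapp] at this
    exact this
  have hEabs : ∀ z : ℝ, |E z| ≤ K' * ‖U z‖^2 := by
    intro z
    calc |E z| ≤ ‖(inner (𝕜 := ℂ) (T (U z)) (U z) : ℂ)‖ := Complex.abs_re_le_norm _
      _ ≤ ‖T (U z)‖ * ‖U z‖ := norm_inner_le_norm _ _
      _ ≤ (K' * ‖U z‖) * ‖U z‖ :=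
          mul_le_mul_of_nonneg_right (hTK (U z)) (norm_nonneg _)
      _ = K' * ‖U z‖^2 := by ring
  have hE0 : -E 0 ≤ K' * ‖U 0‖^2 := by
    have h := hEabs 0
    have := neg_le_abs (E 0)
    linarith
  have hEtend : Filter.Tendsto E Filter.atTop (nhds 0) := by
    have h0 : (inner (𝕜 := ℂ) (T (0 : EuclideanSpace ℂ (Fin n))) 0).re = 0 := by simp
    have := (hq.tendsto (0 : EuclideanSpace ℂ (Fin n))).comp hUtend
    rw [h0] at this
    exact this
  have hB1 : ∀ x ∈ Ici (0:ℝ), ‖U x‖^2 ≤ K' * ‖U 0‖^2 + 2*(K'*M₀)*G := by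
    intro x hx
    have hk := key 0 x le_rfl hx
    have hnn : 0 ≤ ∫ z in (0:ℝ)..x, ‖U z‖^2 :=
      intervalIntegral.integral_nonneg hx (fun z _ => sq_nonneg _)
    have h1 := hEle x
    nlinarith [mul_nonneg (mul_nonneg (by norm_num : (0:ℝ) ≤ 2) hθ.le) hnn]
  have hB2 : 2*θ*(∫ z in Ici (0:ℝ), ‖U z‖^2) ≤ K' * ‖U 0‖^2 + 2*(K'*M₀)*G := by
    have htend1 : Filter.Tendsto (fun b => 2*θ*(∫ z in (0:ℝ)..b, ‖U z‖^2)) Filter.atTop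
        (nhds (2*θ*(∫ z in Ioi (0:ℝ), ‖U z‖^2))) :=
      (MeasureTheory.intervalIntegral_tendsto_integral_Ioi 0
        (hUi.mono_set Ioi_subset_Ici_self) Filter.tendsto_id).const_mul _
    have htend2 : Filter.Tendsto (fun b => E b - E 0 + 2*(K'*M₀)*G) Filter.atTop
        (nhds (0 - E 0 + 2*(K'*M₀)*G)) := (hEtend.sub_const _).add_const _
    have hle : ∀ᶠ b in Filter.atTop,
        2*θ*(∫ z in (0:ℝ)..b, ‖U z‖^2) ≤ E b - E 0 + 2*(K'*M₀)*G :=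
      (Filter.eventually_ge_atTop 0).mono fun b hb => by linarith [key 0 b le_rfl hb]
    have hlim := le_of_tendsto_of_tendsto htend1 htend2 hle
    rw [MeasureTheory.integral_Ici_eq_integral_Ioi]
    linarith
  have hBnn : 0 ≤ K' * ‖U 0‖^2 + 2*(K'*M₀)*G := by positivity
  have hM₀le : M₀ ≤ Real.sqrt (K' * ‖U 0‖^2 + 2*(K'*M₀)*G) := by
    apply csSup_le hne
    rintro _ ⟨x, hx, rfl⟩
    have h := hB1 x hx
    show ‖U x‖ ≤ _
    calc ‖U x‖ = Real.sqrt (‖U x‖^2) := (Real.sqrt_sq (norm_nonneg _)).symm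
      _ ≤ _ := Real.sqrt_le_sqrt h
  have hM₀sq : M₀^2 ≤ K' * ‖U 0‖^2 + 2*(K'*M₀)*G := by
    have h := pow_le_pow_left₀ hM₀0 hM₀le 2
    rwa [Real.sq_sqrt hBnn] at h
  intro x hx
  have h1 := hB1 x hx
  have h2 := hB2
  nlinarith [sq_nonneg (M₀ - 2*K'*G), sq_nonneg (‖U 0‖), mul_nonneg hK'0 hG0,
    mul_nonneg (mul_nonneg (sub_nonneg.mpr hK'1) hK'0) (sq_nonneg ‖U 0‖),
    mul_nonneg (mul_nonneg (sub_nonneg.mpr hK'1) hK'0) (sq_nonneg G),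
    mul_nonneg hM₀0 hG0, hθ.le, mul_nonneg hK'0 (mul_nonneg hM₀0 hG0)]
end

section
/- Let n ≥ 1 and K ≥ 0. Let H : [0,∞) → Mat(n,ℂ) be continuous with operator norm ‖H(x)‖ ≤ K for all x ≥ 0, let F : [0,∞) → ℂⁿ be continuous and integrable, and let U : [0,∞) → ℂⁿ be a bounded, square-integrable C¹ solution of U'(x) = H(x)U(x) + F(x). Then sup_{x≥0} |U(x)|² ≤ 2|U(0)|² + 4K ∫₀^∞ |U(x)|² dx + 4 (∫₀^∞ |F(x)| dx)². -/
open MeasureTheory Set Matrix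

/-- The key pointwise estimate (2.19) of the paper: for a bounded, square-integrable C¹
solution of `U' = H U + F` on `[0,∞)` with `‖H(x)‖ ≤ K` (operator norm),
`sup |U|² ≤ 2|U(0)|² + 4K ∫ |U|² + 4 (∫ |F|)²`. -/
theorem stmt_2 (n : ℕ) (hn : 1 ≤ n) (K : ℝ) (hK : 0 ≤ K)
    (H : ℝ → Matrix (Fin n) (Fin n) ℂ)
    (F U : ℝ → EuclideanSpace ℂ (Fin n))
    (hHcont : ContinuousOn H (Ici 0))
    (hHbound : ∀ x ∈ Ici (0:ℝ), ‖Matrix.toEuclideanCLM (𝕜 := ℂ) (H x)‖ ≤ K)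
    (hFcont : ContinuousOn F (Ici 0))
    (hFint : IntegrableOn (fun x => ‖F x‖) (Ici 0))
    (hUbdd : ∃ M : ℝ, ∀ x ∈ Ici (0:ℝ), ‖U x‖ ≤ M)
    (hUL2 : IntegrableOn (fun x => ‖U x‖ ^ 2) (Ici 0))
    (hODE : ∀ x ∈ Ici (0:ℝ), HasDerivWithinAt U
        (Matrix.toEuclideanLin (H x) (U x) + F x) (Ici 0) x) :
    ∀ x ∈ Ici (0:ℝ),
      ‖U x‖ ^ 2 ≤ 2 * ‖U 0‖ ^ 2 + 4 * K * (∫ z in Ici (0:ℝ), ‖U z‖ ^ 2)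
        + 4 * (∫ z in Ici (0:ℝ), ‖F z‖) ^ 2 := by
  obtain ⟨M, hM⟩ := hUbdd
  have hUcont : ContinuousOn U (Ici 0) := fun x hx => (hODE x hx).continuousWithinAt
  set V : ℝ → EuclideanSpace ℂ (Fin n) :=
    fun x => Matrix.toEuclideanLin (H x) (U x) + F x with hVdef
  have hVcont : ContinuousOn V (Ici 0) := by
    refine ContinuousOn.add ?_ hFcont
    have heq : (fun x => (Matrix.toEuclideanLin (H x)) (U x))
        = fun x => (WithLp.equiv 2 (Fin n → ℂ)).symm (H x *ᵥ (WithLp.equiv 2 (Fin n → ℂ)) (U x)) :=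
      funext fun x => Matrix.toEuclideanLin_apply _ _
    rw [heq]
    have hU' : ContinuousOn (fun x => (WithLp.equiv 2 (Fin n → ℂ)) (U x)) (Ici 0) :=
      (PiLp.continuous_ofLp 2 fun _ : Fin n => ℂ).comp_continuousOn hUcont
    have hHij : ∀ i j, ContinuousOn (fun x => H x i j) (Ici 0) := fun i j =>
      (continuous_apply j).comp_continuousOn ((continuous_apply i).comp_continuousOn hHcont)
    have hmv : ContinuousOn (fun x => H x *ᵥ (WithLp.equiv 2 (Fin n → ℂ)) (U x)) (Ici 0) := by
      apply continuousOn_pi.2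
      intro i
      simp only [Matrix.mulVec, dotProduct]
      apply continuousOn_finset_sum
      intro j _
      exact (hHij i j).mul ((continuous_apply j).comp_continuousOn hU')
    exact (PiLp.continuous_toLp 2 fun _ : Fin n => ℂ).comp_continuousOn hmv
  set Φ : ℝ → ℝ := fun t => 2 * RCLike.re (inner (𝕜 := ℂ) (V t) (U t)) with hΦdef
  -- derivative of ‖U‖²
  have hg : ∀ x ∈ Ici (0:ℝ), HasDerivWithinAt (fun t => ‖U t‖ ^ 2) (Φ x) (Ici 0) x := by
    intro x hx
    have h1 := (hODE x hx).inner ℂ (hODE x hx)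
    have h2 := (RCLike.reCLM (K := ℂ)).hasFDerivAt.comp_hasDerivWithinAt x h1
    have heq : (fun t => (RCLike.reCLM (K := ℂ)) (inner (𝕜 := ℂ) (U t) (U t)))
        = fun t => ‖U t‖ ^ 2 := by
      funext t; exact inner_self_eq_norm_sq (𝕜 := ℂ) (U t)
    simp only [Function.comp_def] at h2
    rw [heq] at h2
    convert h2 using 1
    · rfl
    · rfl
    have hVx : (Matrix.toEuclideanLin (H x)) (U x) + F x = V x := rfl
    rw [hVx]
    have hconj : inner (𝕜 := ℂ) (U x) (V x) = starRingEnd ℂ (inner (𝕜 := ℂ) (V x) (U x)) :=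
      (inner_conj_symm _ _).symm
    rw [map_add, hconj]
    simp only [hΦdef, RCLike.reCLM_apply, RCLike.conj_re]
    ring
  -- norm bound on Φ
  have hΦbound : ∀ t ∈ Ici (0:ℝ), Φ t ≤ 2 * K * ‖U t‖ ^ 2 + 2 * ‖F t‖ * ‖U t‖ := by
    intro t ht
    simp only [hΦdef]
    have h1 : RCLike.re (inner (𝕜 := ℂ) (V t) (U t)) ≤ ‖V t‖ * ‖U t‖ :=
      re_inner_le_norm _ _
    have h2 : ‖V t‖ ≤ K * ‖U t‖ + ‖F t‖ := by
      refine le_trans (norm_add_le _ _) ?_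
      have h3 : ‖(Matrix.toEuclideanLin (H t)) (U t)‖
          = ‖(Matrix.toEuclideanCLM (𝕜 := ℂ) (H t)) (U t)‖ := by
        rw [← Matrix.coe_toEuclideanCLM_eq_toEuclideanLin]
        rfl
      have h4 : ‖(Matrix.toEuclideanCLM (𝕜 := ℂ) (H t)) (U t)‖ ≤ K * ‖U t‖ :=
        le_trans ((Matrix.toEuclideanCLM (𝕜 := ℂ) (H t)).le_opNorm (U t))
          (mul_le_mul_of_nonneg_right (hHbound t ht) (norm_nonneg _))
      rw [h3]; exact add_le_add h4 le_rfl
    have h5 : 0 ≤ ‖U t‖ := norm_nonneg _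
    nlinarith [norm_nonneg (F t)]
  have hΦcont : ContinuousOn Φ (Ici 0) := by
    have : ContinuousOn (fun t => inner (𝕜 := ℂ) (V t) (U t)) (Ici 0) :=
      (continuous_inner (𝕜 := ℂ)).comp_continuousOn (hVcont.prodMk hUcont)
    exact continuousOn_const.mul (RCLike.continuous_re.comp_continuousOn this)
  set B := ∫ z in Ici (0:ℝ), ‖F z‖ with hB
  set IU := ∫ z in Ici (0:ℝ), ‖U z‖ ^ 2 with hIU
  have hBnn : 0 ≤ B := setIntegral_nonneg measurableSet_Ici fun z _ => norm_nonneg _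
  have hIUnn : 0 ≤ IU := setIntegral_nonneg measurableSet_Ici fun z _ => sq_nonneg _
  set S := sSup ((fun x => ‖U x‖) '' Ici 0) with hSdef
  have hbdd : BddAbove ((fun x => ‖U x‖) '' Ici 0) := by
    refine ⟨M, ?_⟩; rintro _ ⟨y, hy, rfl⟩; exact hM y hy
  have hSle : ∀ x ∈ Ici (0:ℝ), ‖U x‖ ≤ S := fun x hx => le_csSup hbdd ⟨x, hx, rfl⟩
  have hSnn : 0 ≤ S := le_trans (norm_nonneg (U 0)) (hSle 0 Set.self_mem_Ici)
  -- pointwise key estimate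
  have key : ∀ x ∈ Ici (0:ℝ), ‖U x‖ ^ 2 ≤ ‖U 0‖ ^ 2 + 2 * K * IU + 2 * S * B := by
    intro x hx
    have hx0 : (0:ℝ) ≤ x := hx
    have hIcc : Icc (0:ℝ) x ⊆ Ici 0 := Icc_subset_Ici_self
    have hΦint : IntervalIntegrable Φ volume 0 x := by
      refine ContinuousOn.intervalIntegrable ?_
      rw [uIcc_of_le hx0]
      exact hΦcont.mono hIcc
    have hftc : ∫ t in (0:ℝ)..x, Φ t = ‖U x‖ ^ 2 - ‖U 0‖ ^ 2 := by
      refine intervalIntegral.integral_eq_sub_of_hasDeriv_right_of_le (f := fun t => ‖U t‖ ^ 2) hx0 ?_ ?_ hΦint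
      · exact ((hUcont.mono hIcc).norm.pow 2)
      · intro t ht
        exact ((hg t (hIcc ⟨le_of_lt ht.1, le_of_lt ht.2⟩)).hasDerivAt
          (Ici_mem_nhds ht.1)).hasDerivWithinAt
    have hGint : IntegrableOn (fun t => 2 * K * ‖U t‖ ^ 2 + 2 * S * ‖F t‖) (Ici 0) :=
      (hUL2.const_mul _).add (hFint.const_mul _)
    have hGint2 : IntervalIntegrable (fun t => 2 * K * ‖U t‖ ^ 2 + 2 * S * ‖F t‖) volume 0 x := by
      apply IntegrableOn.intervalIntegrable
      rw [uIcc_of_le hx0]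
      exact hGint.mono_set hIcc
    have hmono : ∫ t in (0:ℝ)..x, Φ t
        ≤ ∫ t in (0:ℝ)..x, (2 * K * ‖U t‖ ^ 2 + 2 * S * ‖F t‖) := by
      refine intervalIntegral.integral_mono_on hx0 hΦint hGint2 ?_
      intro t ht
      have h1 := hΦbound t (hIcc ht)
      have h2 := hSle t (hIcc ht)
      nlinarith [norm_nonneg (F t)]
    have htail : ∫ t in (0:ℝ)..x, (2 * K * ‖U t‖ ^ 2 + 2 * S * ‖F t‖)
        ≤ 2 * K * IU + 2 * S * B := by
      rw [intervalIntegral.integral_of_le hx0]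
      have h1 : ∫ t in Ioc (0:ℝ) x, (2 * K * ‖U t‖ ^ 2 + 2 * S * ‖F t‖)
          ≤ ∫ t in Ici (0:ℝ), (2 * K * ‖U t‖ ^ 2 + 2 * S * ‖F t‖) := by
        refine setIntegral_mono_set hGint ?_ (HasSubset.Subset.eventuallyLE (fun t ht => le_of_lt ht.1))
        filter_upwards with t
        positivity
      refine le_trans h1 (le_of_eq ?_)
      rw [integral_add (hUL2.const_mul _) (hFint.const_mul _),
        integral_const_mul, integral_const_mul]
    linarith [hftc ▸ le_trans hmono htail]
  -- sup bound
  have hS2 : S ^ 2 ≤ ‖U 0‖ ^ 2 + 2 * K * IU + 2 * S * B := by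
    have hA : 0 ≤ ‖U 0‖ ^ 2 + 2 * K * IU + 2 * S * B := by positivity
    have h1 : S ≤ Real.sqrt (‖U 0‖ ^ 2 + 2 * K * IU + 2 * S * B) := by
      refine csSup_le ⟨‖U 0‖, 0, Set.self_mem_Ici, rfl⟩ ?_
      rintro _ ⟨y, hy, rfl⟩
      show ‖U y‖ ≤ _
      rw [show ‖U y‖ = Real.sqrt (‖U y‖ ^ 2) by rw [Real.sqrt_sq (norm_nonneg _)]]
      exact Real.sqrt_le_sqrt (key y hy)
    calc S ^ 2 ≤ Real.sqrt (‖U 0‖ ^ 2 + 2 * K * IU + 2 * S * B) ^ 2 :=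
          pow_le_pow_left₀ hSnn h1 2
      _ = _ := Real.sq_sqrt hA
  intro x hx
  have h1 : ‖U x‖ ^ 2 ≤ S ^ 2 := pow_le_pow_left₀ (norm_nonneg _) (hSle x hx) 2
  nlinarith [sq_nonneg (S - 2 * B)]
end

section
/- Let d ≥ 3 be an integer and θ, r > 0. Then there exists a constant C > 0 such that for all t > 0, ∫_{{ξ ∈ ℝ^{d−1} : |ξ| ≤ r}} ( ∫_{−r}^{r} e^{−θ(k² + |ξ|²) t} (k² + |ξ|²)^{−3/4} dk )² dξ ≤ C (1 + t)^{−(d−2)/2}. -/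
open Real Set MeasureTheory

/-! ### Auxiliary lemmas -/

/-- Pointwise bound `(x² + a)^{-3/4} ≤ 2 (|x| + √a)^{-3/2}`. -/
lemma stmt6_rpow_aux {x a : ℝ} (ha : 0 < a) :
    (x ^ 2 + a) ^ (-(3/4 : ℝ)) ≤ 2 * (|x| + Real.sqrt a) ^ (-(3/2 : ℝ)) := by
  set c := Real.sqrt a with hc
  have hc0 : 0 < c := Real.sqrt_pos.2 ha
  have hxc : 0 < |x| + c := by positivity
  have hsq : (|x| + c) ^ 2 ≤ 2 * (x ^ 2 + a) := by
    have h1 : 2 * |x| * c ≤ |x| ^ 2 + c ^ 2 := two_mul_le_add_sq _ _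
    have h2 : c ^ 2 = a := Real.sq_sqrt ha.le
    have h3 : |x| ^ 2 = x ^ 2 := sq_abs x
    nlinarith
  have key : (x ^ 2 + a) ^ (-(3/4 : ℝ)) ≤ ((|x| + c) ^ 2 / 2) ^ (-(3/4 : ℝ)) := by
    apply Real.rpow_le_rpow_of_nonpos (by positivity) (by linarith) (by norm_num)
  refine key.trans ?_
  have e1 : ((|x| + c) ^ 2 / 2 : ℝ) ^ (-(3/4 : ℝ))
      = ((|x| + c) ^ 2) ^ (-(3/4 : ℝ)) * ((2:ℝ) ^ (-(3/4:ℝ)))⁻¹ := by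
    rw [Real.div_rpow (by positivity) (by norm_num)]
    ring
  have e2 : ((|x| + c) ^ 2 : ℝ) ^ (-(3/4 : ℝ)) = (|x| + c) ^ (-(3/2 : ℝ)) := by
    rw [← Real.rpow_two, ← Real.rpow_mul hxc.le]
    norm_num
  have e3 : ((2:ℝ) ^ (-(3/4:ℝ)))⁻¹ = (2:ℝ) ^ ((3/4:ℝ)) := by
    rw [← Real.rpow_neg (by norm_num)]; norm_num
  have e4 : (2:ℝ) ^ ((3/4:ℝ)) ≤ 2 := by
    calc (2:ℝ) ^ ((3/4:ℝ)) ≤ (2:ℝ) ^ (1:ℝ) :=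
      Real.rpow_le_rpow_of_exponent_le (by norm_num) (by norm_num)
    _ = 2 := Real.rpow_one 2
  rw [e1, e2, e3]
  calc (|x| + c) ^ (-(3/2 : ℝ)) * (2:ℝ) ^ ((3/4:ℝ))
      ≤ (|x| + c) ^ (-(3/2 : ℝ)) * 2 := by
        apply mul_le_mul_of_nonneg_left e4 (Real.rpow_nonneg hxc.le _)
    _ = 2 * (|x| + c) ^ (-(3/2 : ℝ)) := by ring

lemma stmt6_halfline_int {c r : ℝ} (hc : 0 < c) (hr : 0 < r) :
    ∫ k in (0:ℝ)..r, (k + c) ^ (-(3/2 : ℝ)) ≤ 2 * c ^ (-(1/2 : ℝ)) := by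
  have h1 : ∫ k in (0:ℝ)..r, (k + c) ^ (-(3/2 : ℝ))
      = ∫ u in c..(r+c), u ^ (-(3/2 : ℝ)) := by
    have := intervalIntegral.integral_comp_add_right (a := (0:ℝ)) (b := r)
      (fun u : ℝ => u ^ (-(3/2:ℝ))) c
    simpa using this
  have h2 : ∫ u in c..(r+c), u ^ (-(3/2 : ℝ))
      = ((r+c) ^ (-(3/2:ℝ) + 1) - c ^ (-(3/2:ℝ) + 1)) / (-(3/2:ℝ) + 1) := by
    apply integral_rpow
    right
    refine ⟨by norm_num, ?_⟩
    intro h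
    rw [Set.mem_uIcc] at h
    rcases h with ⟨h, _⟩ | ⟨_, h⟩ <;> linarith
  rw [h1, h2]
  have he : (-(3/2:ℝ) + 1) = -(1/2:ℝ) := by norm_num
  rw [he]
  have hrc : (0:ℝ) < r + c := by linarith
  have h3 : (0:ℝ) ≤ (r+c) ^ (-(1/2:ℝ)) := Real.rpow_nonneg hrc.le _
  have h4 : ((r+c) ^ (-(1/2:ℝ)) - c ^ (-(1/2:ℝ))) / (-(1/2:ℝ))
      = 2 * (c ^ (-(1/2:ℝ)) - (r+c) ^ (-(1/2:ℝ))) := by ring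
  rw [h4]
  nlinarith [Real.rpow_nonneg hc.le (-(1/2:ℝ))]

lemma stmt6_even_int {c r : ℝ} (hc : 0 < c) (hr : 0 < r) :
    ∫ k in (-r)..r, (|k| + c) ^ (-(3/2 : ℝ)) ≤ 4 * c ^ (-(1/2 : ℝ)) := by
  have hcont : Continuous fun k : ℝ => (|k| + c) ^ (-(3/2 : ℝ)) := by
    apply Continuous.rpow_const (continuous_abs.add continuous_const)
    intro x; left; exact (show 0 < |x| + c by positivity).ne'
  have h1 : IntervalIntegrable (fun k : ℝ => (|k| + c) ^ (-(3/2 : ℝ))) volume (-r) 0 :=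
    hcont.intervalIntegrable _ _
  have h2 : IntervalIntegrable (fun k : ℝ => (|k| + c) ^ (-(3/2 : ℝ))) volume 0 r :=
    hcont.intervalIntegrable _ _
  have hsplit := intervalIntegral.integral_add_adjacent_intervals h1 h2
  have hleft : ∫ k in (-r)..(0:ℝ), (|k| + c) ^ (-(3/2 : ℝ))
      = ∫ k in (0:ℝ)..r, (k + c) ^ (-(3/2 : ℝ)) := by
    have e1 : ∫ k in (-r)..(0:ℝ), (|k| + c) ^ (-(3/2 : ℝ))
        = ∫ k in (-r)..(0:ℝ), ((-k) + c) ^ (-(3/2 : ℝ)) := by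
      apply intervalIntegral.integral_congr
      intro k hk
      rw [Set.uIcc_of_le (by linarith : -r ≤ (0:ℝ))] at hk
      show (|k| + c) ^ (-(3/2:ℝ)) = (-k + c) ^ (-(3/2:ℝ)); rw [abs_of_nonpos hk.2]
    rw [e1]
    have := intervalIntegral.integral_comp_neg (a := -r) (b := 0)
      (fun k : ℝ => (k + c) ^ (-(3/2 : ℝ)))
    simpa using this
  have hright : ∫ k in (0:ℝ)..r, (|k| + c) ^ (-(3/2 : ℝ))
      = ∫ k in (0:ℝ)..r, (k + c) ^ (-(3/2 : ℝ)) := by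
    apply intervalIntegral.integral_congr
    intro k hk
    rw [Set.uIcc_of_le hr.le] at hk
    show (|k| + c) ^ (-(3/2:ℝ)) = (k + c) ^ (-(3/2:ℝ)); rw [abs_of_nonneg hk.1]
  have := stmt6_halfline_int hc hr
  calc ∫ k in (-r)..r, (|k| + c) ^ (-(3/2 : ℝ))
      = (∫ k in (-r)..(0:ℝ), (|k| + c) ^ (-(3/2 : ℝ)))
        + ∫ k in (0:ℝ)..r, (|k| + c) ^ (-(3/2 : ℝ)) := hsplit.symm
    _ = 2 * ∫ k in (0:ℝ)..r, (k + c) ^ (-(3/2 : ℝ)) := by rw [hleft, hright]; ring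
    _ ≤ 2 * (2 * c ^ (-(1/2 : ℝ))) := by linarith
    _ = 4 * c ^ (-(1/2 : ℝ)) := by ring

/-- The key bound on the inner (one-dimensional) integral. -/
lemma stmt6_inner_bound {θ t r a : ℝ} (hθ : 0 < θ) (ht : 0 < t) (hr : 0 < r) (ha : 0 < a) :
    ∫ k in (-r)..r, Real.exp (-θ * (k ^ 2 + a) * t) * (k ^ 2 + a) ^ (-(3/4 : ℝ)) ≤
      8 * (Real.exp (-θ * a * t) * a ^ (-(1/4 : ℝ))) := by
  set c := Real.sqrt a with hcdef
  have hc : 0 < c := Real.sqrt_pos.2 ha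
  have hfc : Continuous fun k : ℝ =>
      Real.exp (-θ * (k ^ 2 + a) * t) * (k ^ 2 + a) ^ (-(3/4 : ℝ)) := by
    apply Continuous.mul
    · exact Real.continuous_exp.comp (by continuity)
    · apply Continuous.rpow_const (by continuity)
      intro x; left; positivity
  have hgc : Continuous fun k : ℝ =>
      Real.exp (-θ * a * t) * (2 * (|k| + c) ^ (-(3/2 : ℝ))) := by
    apply Continuous.mul continuous_const
    apply Continuous.mul continuous_const
    apply Continuous.rpow_const (continuous_abs.add continuous_const)
    intro x; left; exact (show 0 < |x| + c by positivity).ne'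
  have hmono : ∫ k in (-r)..r, Real.exp (-θ * (k ^ 2 + a) * t) * (k ^ 2 + a) ^ (-(3/4 : ℝ))
      ≤ ∫ k in (-r)..r, Real.exp (-θ * a * t) * (2 * (|k| + c) ^ (-(3/2 : ℝ))) := by
    apply intervalIntegral.integral_mono_on (by linarith)
      (hfc.intervalIntegrable _ _) (hgc.intervalIntegrable _ _)
    intro k hk
    have hexp : Real.exp (-θ * (k ^ 2 + a) * t) ≤ Real.exp (-θ * a * t) := by
      apply Real.exp_le_exp.2
      nlinarith [mul_nonneg (mul_nonneg hθ.le (sq_nonneg k)) ht.le]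
    have := stmt6_rpow_aux (x := k) ha
    have h0 : (0:ℝ) ≤ (k ^ 2 + a) ^ (-(3/4 : ℝ)) := Real.rpow_nonneg (by positivity) _
    calc Real.exp (-θ * (k ^ 2 + a) * t) * (k ^ 2 + a) ^ (-(3/4 : ℝ))
        ≤ Real.exp (-θ * a * t) * (k ^ 2 + a) ^ (-(3/4 : ℝ)) :=
          mul_le_mul_of_nonneg_right hexp h0
      _ ≤ Real.exp (-θ * a * t) * (2 * (|k| + c) ^ (-(3/2 : ℝ))) :=
          mul_le_mul_of_nonneg_left this (Real.exp_nonneg _)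
  have heq : ∫ k in (-r)..r, Real.exp (-θ * a * t) * (2 * (|k| + c) ^ (-(3/2 : ℝ)))
      = (Real.exp (-θ * a * t) * 2) * ∫ k in (-r)..r, (|k| + c) ^ (-(3/2 : ℝ)) := by
    rw [← intervalIntegral.integral_const_mul]
    congr 1; ext k; ring
  have hc4 : c ^ (-(1/2 : ℝ)) = a ^ (-(1/4 : ℝ)) := by
    rw [hcdef, Real.sqrt_eq_rpow, ← Real.rpow_mul ha.le]
    norm_num
  have hkey := stmt6_even_int hc hr
  rw [heq] at hmono
  calc ∫ k in (-r)..r, Real.exp (-θ * (k ^ 2 + a) * t) * (k ^ 2 + a) ^ (-(3/4 : ℝ))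
      ≤ (Real.exp (-θ * a * t) * 2) * ∫ k in (-r)..r, (|k| + c) ^ (-(3/2 : ℝ)) := hmono
    _ ≤ (Real.exp (-θ * a * t) * 2) * (4 * c ^ (-(1/2 : ℝ))) := by
        apply mul_le_mul_of_nonneg_left hkey (by positivity)
    _ = 8 * (Real.exp (-θ * a * t) * a ^ (-(1/4 : ℝ))) := by rw [hc4]; ring

lemma stmt6_coord_null {n : ℕ} (i : Fin n) :
    (volume : Measure (EuclideanSpace ℝ (Fin n))) {ξ | ξ i = 0} = 0 := by
  have h := (EuclideanSpace.volume_preserving_symm_measurableEquiv_toLp (Fin n)).measure_preimage_equiv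
    {x : Fin n → ℝ | x i = 0}
  have h2 : (volume : Measure (Fin n → ℝ)) {x | x i = 0} = 0 := by
    rw [volume_pi]
    exact Measure.pi_hyperplane _ i 0
  rw [h2] at h
  convert h using 2
  rfl

lemma stmt6_abs_rpow_exp_integrable {b s : ℝ} (hb : 0 < b) (hs : -1 < s) :
    Integrable fun x : ℝ => |x| ^ s * Real.exp (-b * x ^ 2) := by
  have hIoi : IntegrableOn (fun x : ℝ => |x| ^ s * Real.exp (-b * x ^ 2)) (Ioi 0) := by
    refine (integrableOn_rpow_mul_exp_neg_mul_sq hb hs).congr_fun ?_ measurableSet_Ioi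
    intro x hx
    show x ^ s * Real.exp (-b * x ^ 2) = |x| ^ s * Real.exp (-b * x ^ 2)
    rw [abs_of_pos hx]
  rw [← integrableOn_univ, ← @Iio_union_Ici _ _ (0 : ℝ), integrableOn_union,
    integrableOn_Ici_iff_integrableOn_Ioi]
  refine ⟨?_, hIoi⟩
  rw [← (Measure.measurePreserving_neg (volume : Measure ℝ)).integrableOn_comp_preimage
      (Homeomorph.neg ℝ).measurableEmbedding]
  simp only [Function.comp_def, abs_neg, neg_sq, neg_preimage, neg_Iio, neg_zero]
  exact hIoi

lemma stmt6_norm_sq_eq_sum {n : ℕ} (ξ : EuclideanSpace ℝ (Fin n)) :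
    ‖ξ‖ ^ 2 = ∑ i, (ξ i) ^ 2 := by
  rw [EuclideanSpace.norm_eq, Real.sq_sqrt (by positivity)]
  simp [sq_abs]

/-- Integrability of the radial majorant `‖ξ‖⁻¹ e^{-b‖ξ‖²}` on `ℝⁿ`, `n ≥ 2`. -/
lemma stmt6_key_integrable {n : ℕ} (hn : 2 ≤ n) {b : ℝ} (hb : 0 < b) :
    Integrable (fun ξ : EuclideanSpace ℝ (Fin n) =>
      ‖ξ‖ ^ (-(1:ℝ)) * Real.exp (-b * ‖ξ‖ ^ 2)) := by
  have hnR : (0:ℝ) < n := by positivity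
  set f : Fin n → ℝ → ℝ := fun _ x => |x| ^ (-(1/(n:ℝ))) * Real.exp (-b * x ^ 2) with hf
  have hprod_pi : Integrable (fun x : Fin n → ℝ => ∏ i, f i (x i)) := by
    apply Integrable.fintype_prod (𝕜 := ℝ)
    intro i
    exact stmt6_abs_rpow_exp_integrable hb (by
      rw [neg_lt_neg_iff]
      calc 1/(n:ℝ) ≤ 1/2 := by
            apply div_le_div_of_nonneg_left (by norm_num) (by norm_num)
            exact_mod_cast hn
        _ < 1 := by norm_num)
  have hprod : Integrable (fun ξ : EuclideanSpace ℝ (Fin n) => ∏ i, f i (ξ i)) := by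
    have hmp := EuclideanSpace.volume_preserving_symm_measurableEquiv_toLp (Fin n)
    rw [← hmp.integrable_comp_emb (MeasurableEquiv.measurableEmbedding _)] at hprod_pi
    exact hprod_pi
  have hae : ∀ᵐ ξ : EuclideanSpace ℝ (Fin n), ∀ i, ξ i ≠ 0 := by
    rw [MeasureTheory.ae_all_iff]
    intro i
    rw [ae_iff]
    convert stmt6_coord_null i using 2
    simp
  refine Integrable.mono' hprod ?_ ?_
  · apply Measurable.aestronglyMeasurable
    fun_prop
  · filter_upwards [hae] with ξ hξ
    have hnorm : 0 < ‖ξ‖ := by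
      rw [norm_pos_iff]
      intro h0
      exact hξ ⟨0, by omega⟩ (by rw [h0]; rfl)
    have hcoord : ∀ i, |ξ i| ≤ ‖ξ‖ := by
      intro i
      have h1 : (ξ i) ^ 2 ≤ ‖ξ‖ ^ 2 := by
        rw [stmt6_norm_sq_eq_sum]
        exact Finset.single_le_sum (fun j _ => sq_nonneg (ξ j)) (Finset.mem_univ i)
      calc |ξ i| = Real.sqrt ((ξ i) ^ 2) := (Real.sqrt_sq_eq_abs _).symm
        _ ≤ Real.sqrt (‖ξ‖ ^ 2) := Real.sqrt_le_sqrt h1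
        _ = ‖ξ‖ := by rw [Real.sqrt_sq hnorm.le]
    have hprodpos : 0 < ∏ i, |ξ i| ^ ((1:ℝ)/(n:ℝ)) := by
      apply Finset.prod_pos
      intro i _
      exact Real.rpow_pos_of_pos (abs_pos.2 (hξ i)) _
    have hprodle : ∏ i, |ξ i| ^ ((1:ℝ)/(n:ℝ)) ≤ ‖ξ‖ := by
      calc ∏ i, |ξ i| ^ ((1:ℝ)/(n:ℝ)) ≤ ∏ i : Fin n, ‖ξ‖ ^ ((1:ℝ)/(n:ℝ)) := by
            apply Finset.prod_le_prod
            · intro i _; positivity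
            · intro i _; exact Real.rpow_le_rpow (abs_nonneg _) (hcoord i) (by positivity)
        _ = (‖ξ‖ ^ ((1:ℝ)/(n:ℝ))) ^ (n : ℕ) := by
            rw [Finset.prod_const, Finset.card_univ, Fintype.card_fin]
        _ = ‖ξ‖ := by
            rw [← Real.rpow_natCast (‖ξ‖ ^ ((1:ℝ)/(n:ℝ))) n, ← Real.rpow_mul hnorm.le]
            rw [one_div, inv_mul_cancel₀ (ne_of_gt hnR), Real.rpow_one]
    have hinv : ‖ξ‖ ^ (-(1:ℝ)) ≤ ∏ i, |ξ i| ^ (-(1/(n:ℝ))) := by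
      have h1 : ‖ξ‖⁻¹ ≤ (∏ i, |ξ i| ^ ((1:ℝ)/(n:ℝ)))⁻¹ :=
        inv_anti₀ hprodpos hprodle
      calc ‖ξ‖ ^ (-(1:ℝ)) = ‖ξ‖⁻¹ := by rw [Real.rpow_neg_one]
        _ ≤ (∏ i, |ξ i| ^ ((1:ℝ)/(n:ℝ)))⁻¹ := h1
        _ = ∏ i, (|ξ i| ^ ((1:ℝ)/(n:ℝ)))⁻¹ := by rw [← Finset.prod_inv_distrib]
        _ = ∏ i, |ξ i| ^ (-(1/(n:ℝ))) := by
            refine Finset.prod_congr rfl fun i _ => ?_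
            rw [← Real.rpow_neg (abs_nonneg _)]
    have hexp : Real.exp (-b * ‖ξ‖ ^ 2) = ∏ i, Real.exp (-b * (ξ i) ^ 2) := by
      rw [← Real.exp_sum]
      congr 1
      rw [stmt6_norm_sq_eq_sum, Finset.mul_sum]
    rw [Real.norm_eq_abs, abs_of_nonneg (by positivity)]
    calc ‖ξ‖ ^ (-(1:ℝ)) * Real.exp (-b * ‖ξ‖ ^ 2)
        ≤ (∏ i, |ξ i| ^ (-(1/(n:ℝ)))) * ∏ i, Real.exp (-b * (ξ i) ^ 2) := by
          rw [hexp]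
          exact mul_le_mul_of_nonneg_right hinv
            (Finset.prod_nonneg fun i _ => (Real.exp_pos _).le)
      _ = ∏ i, f i (ξ i) := by rw [← Finset.prod_mul_distrib]

/-- Exact value of the radial Gaussian-type integral. -/
lemma stmt6_gauss_val {n : ℕ} (hn : 2 ≤ n) {b : ℝ} (hb : 0 < b) :
    ∫ ξ : EuclideanSpace ℝ (Fin n), ‖ξ‖ ^ (-(1:ℝ)) * Real.exp (-b * ‖ξ‖ ^ 2)
      = ((n : ℝ) * (volume (Metric.ball (0 : EuclideanSpace ℝ (Fin n)) 1)).toReal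
          * ((1:ℝ)/2) * Real.Gamma (((n:ℝ) - 1)/2)) * b ^ (-(((n:ℝ) - 1)/2)) := by
  haveI : Nonempty (Fin n) := ⟨⟨0, by omega⟩⟩
  haveI : Nontrivial (EuclideanSpace ℝ (Fin n)) := by
    refine ⟨0, EuclideanSpace.single ⟨0, by omega⟩ 1, ?_⟩
    intro h
    have := congrArg (fun ξ : EuclideanSpace ℝ (Fin n) => ξ ⟨0, by omega⟩) h
    simp [EuclideanSpace.single_apply] at this
  have h := MeasureTheory.integral_fun_norm_addHaar
    (volume : Measure (EuclideanSpace ℝ (Fin n)))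
    (fun y : ℝ => y ^ (-(1:ℝ)) * Real.exp (-b * y ^ 2))
  rw [finrank_euclideanSpace_fin] at h
  rw [h]
  have hrad : ∫ y in Ioi (0:ℝ), y ^ (n - 1) • (y ^ (-(1:ℝ)) * Real.exp (-b * y ^ 2))
      = ∫ y in Ioi (0:ℝ), y ^ ((n:ℝ) - 2) * Real.exp (-b * y ^ (2:ℝ)) := by
    refine setIntegral_congr_fun measurableSet_Ioi (fun y hy => ?_)
    have hy0 : (0:ℝ) < y := hy
    have e1 : y ^ (n - 1 : ℕ) = y ^ (((n:ℝ) - 1)) := by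
      rw [← Real.rpow_natCast y (n-1), Nat.cast_sub (by omega)]
      norm_num
    have e2 : y ^ ((2:ℕ) : ℝ) = y ^ (2:ℝ) := by norm_num
    rw [smul_eq_mul, e1, ← mul_assoc, ← Real.rpow_add hy0]
    rw [show y ^ (2:ℕ) = y ^ ((2:ℕ):ℝ) from (Real.rpow_natCast y 2).symm, e2]
    congr 1
    ring
  rw [hrad, integral_rpow_mul_exp_neg_mul_rpow (by norm_num) (by
    push_cast; linarith [(show (2:ℝ) ≤ n by exact_mod_cast hn)]) hb]
  rw [nsmul_eq_mul, smul_eq_mul]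
  have : (n:ℝ) - 2 + 1 = (n:ℝ) - 1 := by ring
  rw [this, neg_div]
  simp only [measureReal_def]
  ring

set_option maxHeartbeats 1600000 in
/-- Frequency-space integral estimate behind the L² bound on the low-frequency solution
operator `S₁(t)` (Proposition 2.1): for `d ≥ 3`, `θ, r > 0`, there is `C > 0` such that
`∫_{|ξ| ≤ r} (∫_{-r}^r e^{-θ(k²+|ξ|²)t} (k²+|ξ|²)^{-3/4} dk)² dξ ≤ C (1+t)^{-(d-2)/2}`. -/
theorem stmt_6 (d : ℕ) (hd : 3 ≤ d) (θ r : ℝ) (hθ : 0 < θ) (hr : 0 < r) :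
    ∃ C : ℝ, 0 < C ∧ ∀ t : ℝ, 0 < t →
      (∫ ξ in {ξ : EuclideanSpace ℝ (Fin (d - 1)) | ‖ξ‖ ≤ r},
          (∫ k in (-r)..r,
            Real.exp (-θ * (k ^ 2 + ‖ξ‖ ^ 2) * t) *
              (k ^ 2 + ‖ξ‖ ^ 2) ^ (-(3 / 4 : ℝ))) ^ 2) ≤
        C * (1 + t) ^ (-(((d : ℝ) - 2) / 2)) := by
  set n := d - 1 with hndef
  have hn2 : 2 ≤ n := by omega
  have hcast : ((n:ℝ) - 1) = (d:ℝ) - 2 := by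
    rw [hndef, Nat.cast_sub (by omega)]
    push_cast; ring
  set p := (((d:ℝ) - 2) / 2) with hpdef
  have hp0 : 0 < p := by
    rw [hpdef]
    have : (3:ℝ) ≤ d := by exact_mod_cast hd
    linarith
  have hpe : ((n:ℝ) - 1)/2 = p := by rw [hcast]
  set κ := ((n : ℝ) * (volume (Metric.ball (0 : EuclideanSpace ℝ (Fin n)) 1)).toReal
      * ((1:ℝ)/2) * Real.Gamma (((n:ℝ) - 1)/2)) with hκdef
  have hκ : 0 < κ := by
    rw [hκdef]
    have h1 : (0:ℝ) < n := by positivity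
    have h2 : (0:ℝ) < (volume (Metric.ball (0 : EuclideanSpace ℝ (Fin n)) 1)).toReal := by
      apply ENNReal.toReal_pos
      · exact (Metric.measure_ball_pos volume 0 one_pos).ne'
      · exact measure_ball_lt_top.ne
    have h3 : (0:ℝ) < Real.Gamma (((n:ℝ) - 1)/2) := by
      apply Real.Gamma_pos_of_pos
      rw [hpe]; exact hp0
    positivity
  set L := 64 * κ * (2*θ) ^ (-p) with hLdef
  have hL : 0 < L := by
    rw [hLdef]
    have : (0:ℝ) < (2*θ) ^ (-p) := Real.rpow_pos_of_pos (by linarith) _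
    positivity
  have h2ppos : (0:ℝ) < 2 ^ p := Real.rpow_pos_of_pos (by norm_num) p
  clear_value L κ p n
  refine ⟨L * 2 ^ p * (1 + Real.exp (2*θ*r^2)), by
    have := Real.exp_pos (2*θ*r^2)
    exact mul_pos (mul_pos hL h2ppos) (by linarith), ?_⟩
  intro t ht
  set S := {ξ : EuclideanSpace ℝ (Fin n) | ‖ξ‖ ≤ r} with hSdef
  -- a.e. nonvanishing on the restricted measure
  have hae0 : ∀ᵐ ξ : EuclideanSpace ℝ (Fin n) ∂(volume.restrict S), ξ ≠ 0 := by
    apply ae_restrict_of_ae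
    rw [ae_iff]
    refine measure_mono_null (fun ξ hξ => ?_) (stmt6_coord_null (⟨0, by omega⟩ : Fin n))
    have hξ0 : ξ = 0 := not_not.mp hξ
    show ξ (⟨0, by omega⟩ : Fin n) = 0
    rw [hξ0]
    rfl
  have hSmeas : MeasurableSet S := by
    have : S = Metric.closedBall (0 : EuclideanSpace ℝ (Fin n)) r := by
      ext ξ; simp [hSdef, Metric.mem_closedBall, dist_zero_right]
    rw [this]; exact measurableSet_closedBall
  have haeS : ∀ᵐ ξ : EuclideanSpace ℝ (Fin n) ∂(volume.restrict S), ξ ∈ S :=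
    ae_restrict_mem hSmeas
  -- pointwise squared bound
  have hptwise : ∀ ξ : EuclideanSpace ℝ (Fin n), ξ ≠ 0 →
      (∫ k in (-r)..r, Real.exp (-θ * (k ^ 2 + ‖ξ‖ ^ 2) * t) *
          (k ^ 2 + ‖ξ‖ ^ 2) ^ (-(3 / 4 : ℝ))) ^ 2
        ≤ 64 * (‖ξ‖ ^ (-(1:ℝ)) * Real.exp (-(2*θ*t) * ‖ξ‖ ^ 2)) := by
    intro ξ hξ
    have hnorm : 0 < ‖ξ‖ := norm_pos_iff.2 hξ
    have ha : (0:ℝ) < ‖ξ‖ ^ 2 := by positivity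
    have hIB := stmt6_inner_bound hθ ht hr ha
    have hInn : 0 ≤ ∫ k in (-r)..r, Real.exp (-θ * (k ^ 2 + ‖ξ‖ ^ 2) * t) *
        (k ^ 2 + ‖ξ‖ ^ 2) ^ (-(3 / 4 : ℝ)) := by
      apply intervalIntegral.integral_nonneg (by linarith)
      intro k _
      positivity
    have hsq := pow_le_pow_left₀ hInn hIB 2
    refine hsq.trans_eq ?_
    have hA : ((‖ξ‖ ^ 2 : ℝ) ^ (-(1/4:ℝ))) ^ 2 = ‖ξ‖ ^ (-(1:ℝ)) := by
      rw [← Real.rpow_natCast ((‖ξ‖ ^ 2 : ℝ) ^ (-(1/4:ℝ))) 2, ← Real.rpow_mul ha.le]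
      rw [show ‖ξ‖ ^ 2 = ‖ξ‖ ^ ((2:ℕ):ℝ) from (Real.rpow_natCast ‖ξ‖ 2).symm]
      rw [← Real.rpow_mul hnorm.le]
      norm_num
    have hE : (Real.exp (-θ * ‖ξ‖ ^ 2 * t)) ^ 2 = Real.exp (-(2*θ*t) * ‖ξ‖ ^ 2) := by
      rw [sq, ← Real.exp_add]
      congr 1
      ring
    calc (8 * (Real.exp (-θ * ‖ξ‖ ^ 2 * t) * (‖ξ‖ ^ 2 : ℝ) ^ (-(1/4:ℝ)))) ^ 2
        = 64 * ((Real.exp (-θ * ‖ξ‖ ^ 2 * t)) ^ 2 * ((‖ξ‖ ^ 2 : ℝ) ^ (-(1/4:ℝ))) ^ 2) := by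
          ring
      _ = 64 * (‖ξ‖ ^ (-(1:ℝ)) * Real.exp (-(2*θ*t) * ‖ξ‖ ^ 2)) := by
          rw [hA, hE]; ring
  rcases le_or_gt 1 t with htc | htc
  · -- large time : use the majorant with Gaussian weight e^{-2θt‖ξ‖²}
    have hb' : (0:ℝ) < 2*θ*t := by positivity
    have hint : Integrable (fun ξ : EuclideanSpace ℝ (Fin n) =>
        64 * (‖ξ‖ ^ (-(1:ℝ)) * Real.exp (-(2*θ*t) * ‖ξ‖ ^ 2))) :=
      (stmt6_key_integrable hn2 hb').const_mul 64
    have step1 : (∫ ξ in S,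
        (∫ k in (-r)..r, Real.exp (-θ * (k ^ 2 + ‖ξ‖ ^ 2) * t) *
          (k ^ 2 + ‖ξ‖ ^ 2) ^ (-(3 / 4 : ℝ))) ^ 2)
        ≤ ∫ ξ in S, 64 * (‖ξ‖ ^ (-(1:ℝ)) * Real.exp (-(2*θ*t) * ‖ξ‖ ^ 2)) := by
      apply integral_mono_of_nonneg (Filter.Eventually.of_forall fun ξ => sq_nonneg _)
        hint.restrict
      filter_upwards [hae0] with ξ hξ
      exact hptwise ξ hξ
    have step2 : (∫ ξ in S, 64 * (‖ξ‖ ^ (-(1:ℝ)) * Real.exp (-(2*θ*t) * ‖ξ‖ ^ 2)))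
        ≤ ∫ ξ : EuclideanSpace ℝ (Fin n),
            64 * (‖ξ‖ ^ (-(1:ℝ)) * Real.exp (-(2*θ*t) * ‖ξ‖ ^ 2)) := by
      apply setIntegral_le_integral hint
      apply Filter.Eventually.of_forall
      intro ξ
      positivity
    have step3 : (∫ ξ : EuclideanSpace ℝ (Fin n),
          64 * (‖ξ‖ ^ (-(1:ℝ)) * Real.exp (-(2*θ*t) * ‖ξ‖ ^ 2)))
        = 64 * (κ * (2*θ*t) ^ (-p)) := by
      rw [MeasureTheory.integral_const_mul, stmt6_gauss_val hn2 hb', hκdef, hpe]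
    have hmulrpow : (2*θ*t) ^ (-p) = (2*θ) ^ (-p) * t ^ (-p) := by
      rw [Real.mul_rpow (by positivity) ht.le]
    have htp : t ^ (-p) ≤ 2 ^ p * (1+t) ^ (-p) := by
      have h1 : (1+t) ^ p ≤ 2 ^ p * t ^ p := by
        rw [← Real.mul_rpow (by norm_num) ht.le]
        exact Real.rpow_le_rpow (by linarith) (by linarith) hp0.le
      rw [Real.rpow_neg ht.le, Real.rpow_neg (by linarith)]
      calc (t ^ p)⁻¹ = 1 / t ^ p := (one_div _).symm
        _ ≤ 2 ^ p / (1+t) ^ p := by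
            rw [div_le_div_iff₀ (by positivity) (by positivity)]
            linarith
        _ = 2 ^ p * ((1+t) ^ p)⁻¹ := by rw [div_eq_mul_inv]
    calc (∫ ξ in S,
        (∫ k in (-r)..r, Real.exp (-θ * (k ^ 2 + ‖ξ‖ ^ 2) * t) *
          (k ^ 2 + ‖ξ‖ ^ 2) ^ (-(3 / 4 : ℝ))) ^ 2)
        ≤ 64 * (κ * (2*θ*t) ^ (-p)) := by
          rw [← step3]; exact step1.trans step2
      _ = L * t ^ (-p) := by rw [hmulrpow, hLdef]; ring
      _ ≤ L * (2 ^ p * (1+t) ^ (-p)) := mul_le_mul_of_nonneg_left htp hL.le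
      _ = (L * 2 ^ p) * (1+t) ^ (-p) := by ring
      _ ≤ (L * 2 ^ p * (1 + Real.exp (2*θ*r^2))) * (1+t) ^ (-p) := by
          have h1 : (0:ℝ) ≤ (1+t) ^ (-p) := Real.rpow_nonneg (by linarith) _
          have h2 : L * 2 ^ p ≤ L * 2 ^ p * (1 + Real.exp (2*θ*r^2)) := by
            nlinarith [Real.exp_pos (2*θ*r^2), mul_pos hL
              (Real.rpow_pos_of_pos (show (0:ℝ) < 2 by norm_num) p)]
          exact mul_le_mul_of_nonneg_right h2 h1
  · -- small time : use the fixed majorant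
    have hb' : (0:ℝ) < 2*θ := by linarith
    have hint : Integrable (fun ξ : EuclideanSpace ℝ (Fin n) =>
        (64 * Real.exp (2*θ*r^2)) * (‖ξ‖ ^ (-(1:ℝ)) * Real.exp (-(2*θ) * ‖ξ‖ ^ 2))) :=
      (stmt6_key_integrable hn2 hb').const_mul _
    have step1 : (∫ ξ in S,
        (∫ k in (-r)..r, Real.exp (-θ * (k ^ 2 + ‖ξ‖ ^ 2) * t) *
          (k ^ 2 + ‖ξ‖ ^ 2) ^ (-(3 / 4 : ℝ))) ^ 2)
        ≤ ∫ ξ in S, (64 * Real.exp (2*θ*r^2)) *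
            (‖ξ‖ ^ (-(1:ℝ)) * Real.exp (-(2*θ) * ‖ξ‖ ^ 2)) := by
      apply integral_mono_of_nonneg (Filter.Eventually.of_forall fun ξ => sq_nonneg _)
        hint.restrict
      filter_upwards [hae0, haeS] with ξ hξ hξS
      refine (hptwise ξ hξ).trans ?_
      have hnorm : 0 ≤ ‖ξ‖ := norm_nonneg _
      have hN : 0 ≤ ‖ξ‖ ^ (-(1:ℝ)) := Real.rpow_nonneg hnorm _
      have hSr : ‖ξ‖ ≤ r := hξS
      have hexp : Real.exp (-(2*θ*t) * ‖ξ‖ ^ 2)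
          ≤ Real.exp (2*θ*r^2) * Real.exp (-(2*θ) * ‖ξ‖ ^ 2) := by
        rw [← Real.exp_add]
        apply Real.exp_le_exp.2
        nlinarith [mul_nonneg (mul_nonneg (show (0:ℝ) ≤ 2*θ by linarith) ht.le)
          (sq_nonneg ‖ξ‖), mul_self_le_mul_self hnorm hSr]
      calc 64 * (‖ξ‖ ^ (-(1:ℝ)) * Real.exp (-(2*θ*t) * ‖ξ‖ ^ 2))
          ≤ 64 * (‖ξ‖ ^ (-(1:ℝ)) * (Real.exp (2*θ*r^2) * Real.exp (-(2*θ) * ‖ξ‖ ^ 2))) := by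
            apply mul_le_mul_of_nonneg_left _ (by norm_num)
            exact mul_le_mul_of_nonneg_left hexp hN
        _ = (64 * Real.exp (2*θ*r^2)) * (‖ξ‖ ^ (-(1:ℝ)) * Real.exp (-(2*θ) * ‖ξ‖ ^ 2)) := by
            ring
    have step2 : (∫ ξ in S, (64 * Real.exp (2*θ*r^2)) *
          (‖ξ‖ ^ (-(1:ℝ)) * Real.exp (-(2*θ) * ‖ξ‖ ^ 2)))
        ≤ ∫ ξ : EuclideanSpace ℝ (Fin n), (64 * Real.exp (2*θ*r^2)) *
            (‖ξ‖ ^ (-(1:ℝ)) * Real.exp (-(2*θ) * ‖ξ‖ ^ 2)) := by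
      apply setIntegral_le_integral hint
      apply Filter.Eventually.of_forall
      intro ξ
      positivity
    have step3 : (∫ ξ : EuclideanSpace ℝ (Fin n), (64 * Real.exp (2*θ*r^2)) *
          (‖ξ‖ ^ (-(1:ℝ)) * Real.exp (-(2*θ) * ‖ξ‖ ^ 2)))
        = (64 * Real.exp (2*θ*r^2)) * (κ * (2*θ) ^ (-p)) := by
      rw [MeasureTheory.integral_const_mul, stmt6_gauss_val hn2 hb', hκdef, hpe]
    have h2p : (2:ℝ) ^ p * (2:ℝ) ^ (-p) = 1 := by
      rw [← Real.rpow_add (by norm_num : (0:ℝ) < 2), add_neg_cancel, Real.rpow_zero]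
    have hfin : (64 * Real.exp (2*θ*r^2)) * (κ * (2*θ) ^ (-p))
        ≤ (L * 2 ^ p * (1 + Real.exp (2*θ*r^2))) * (1+t) ^ (-p) := by
      have hlow : (2:ℝ) ^ (-p) ≤ (1+t) ^ (-p) :=
        Real.rpow_le_rpow_of_nonpos (by linarith) (by linarith) (by linarith)
      have hexpe : Real.exp (2*θ*r^2) ≤ 1 + Real.exp (2*θ*r^2) := by linarith
      have hcoef : (64 * Real.exp (2*θ*r^2)) * (κ * (2*θ) ^ (-p))
          ≤ (L * 2 ^ p * (1 + Real.exp (2*θ*r^2))) * 2 ^ (-p) := by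
        have he : (L * 2 ^ p * (1 + Real.exp (2*θ*r^2))) * 2 ^ (-p)
            = L * (1 + Real.exp (2*θ*r^2)) := by
          rw [show (L * 2 ^ p * (1 + Real.exp (2*θ*r^2))) * 2 ^ (-p)
              = L * (1 + Real.exp (2*θ*r^2)) * (2 ^ p * 2 ^ (-p)) by ring, h2p, mul_one]
        rw [he]
        have he2 : (64 * Real.exp (2*θ*r^2)) * (κ * (2*θ) ^ (-p))
            = L * Real.exp (2*θ*r^2) := by rw [hLdef]; ring
        rw [he2]
        exact mul_le_mul_of_nonneg_left hexpe hL.le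
      calc (64 * Real.exp (2*θ*r^2)) * (κ * (2*θ) ^ (-p))
          ≤ (L * 2 ^ p * (1 + Real.exp (2*θ*r^2))) * 2 ^ (-p) := hcoef
        _ ≤ (L * 2 ^ p * (1 + Real.exp (2*θ*r^2))) * (1+t) ^ (-p) := by
            apply mul_le_mul_of_nonneg_left hlow
            have := Real.exp_pos (2*θ*r^2)
            have h0 : (0:ℝ) < L * 2 ^ p := mul_pos hL h2ppos
            nlinarith
    calc (∫ ξ in S,
        (∫ k in (-r)..r, Real.exp (-θ * (k ^ 2 + ‖ξ‖ ^ 2) * t) *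
          (k ^ 2 + ‖ξ‖ ^ 2) ^ (-(3 / 4 : ℝ))) ^ 2)
        ≤ (64 * Real.exp (2*θ*r^2)) * (κ * (2*θ) ^ (-p)) := by
          rw [← step3]; exact step1.trans step2
      _ ≤ (L * 2 ^ p * (1 + Real.exp (2*θ*r^2))) * (1+t) ^ (-p) := hfin
end

section
/- Let θ > 0 and C₀ > 0. There exists a constant C > 0, depending only on θ and C₀, such that for every ρ ∈ (0,1], every measurable kernel K : ℝ × ℝ → ℂ satisfying |K(x,y)| ≤ C₀ ( ρ^{−1} e^{−θ|x|} ( ρ e^{−θρ|y|} + e^{−θ|y|} ) + e^{−ρ|x−y|} ( ρ + e^{−θ|y|} ) ) for almost every (x,y), and every f ∈ L¹(ℝ), the function V(x) := ∫_ℝ K(x,y) f(y) dy satisfies ‖V‖_{L^p(ℝ)} ≤ C ρ^{−1} ‖f‖_{L¹(ℝ)} for every p ∈ [1,∞]. -/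
open MeasureTheory Real
open scoped ENNReal
open Set

lemma myIntExpAbs {b : ℝ} (hb : 0 < b) :
    Integrable (fun x : ℝ => Real.exp (-(b * |x|))) := by
  have hIoi : IntegrableOn (fun x : ℝ => Real.exp (-(b * |x|))) (Ioi 0) :=
    (exp_neg_integrableOn_Ioi 0 hb).congr_fun
      (fun x hx => by rw [abs_of_pos hx]; simp only [neg_mul]) measurableSet_Ioi
  have hIci : IntegrableOn (fun x : ℝ => Real.exp (-(b * |x|))) (Ici 0) :=
    Iff.mpr integrableOn_Ici_iff_integrableOn_Ioi hIoi
  have hIic : IntegrableOn (fun x : ℝ => Real.exp (-(b * |x|))) (Iic 0) := by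
    have hmap : (volume : Measure ℝ).restrict (Iic 0)
        = ((volume : Measure ℝ).restrict (Ici 0)).map Neg.neg := by
      conv_lhs => rw [← Measure.map_neg_eq_self (volume : Measure ℝ)]
      rw [Measure.restrict_map measurable_neg measurableSet_Iic]
      congr 1
      ext x
      simp [neg_nonpos]
    have A : MeasurableEmbedding (fun x : ℝ => -x) :=
      (Homeomorph.neg ℝ).isClosedEmbedding.measurableEmbedding
    rw [IntegrableOn, hmap, show (Neg.neg : ℝ → ℝ) = fun x : ℝ => -x from rfl,
      A.integrable_map_iff]
    simpa [Function.comp_def, abs_neg] using hIci.integrable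
  have := hIic.union hIoi
  rwa [Iic_union_Ioi, integrableOn_univ] at this

lemma myIntExpAbsVal {b : ℝ} (hb : 0 < b) :
    ∫ x : ℝ, Real.exp (-(b * |x|)) = 2 / b := by
  have hint := myIntExpAbs hb
  have hsplit := integral_add_compl (measurableSet_Iic (a := (0:ℝ))) hint
  rw [compl_Iic] at hsplit
  have hIoi : ∫ x in Ioi (0:ℝ), Real.exp (-(b * |x|)) = 1 / b := by
    rw [setIntegral_congr_fun measurableSet_Ioi
      (fun x hx => by rw [abs_of_pos hx] : EqOn _ (fun x => Real.exp (-(b * x))) (Ioi 0))]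
    have := integral_comp_mul_left_Ioi (fun t => Real.exp (-t)) 0 hb
    simp only [mul_zero, neg_zero] at this
    rw [show (fun x : ℝ => Real.exp (-(b * x))) = (fun x => Real.exp (-(b * x))) from rfl]
    calc ∫ x in Ioi (0:ℝ), Real.exp (-(b * x)) = b⁻¹ • ∫ x in Ioi (0:ℝ), Real.exp (-x) := this
      _ = 1 / b := by rw [integral_exp_neg_Ioi_zero]; simp [one_div]
  have hIic : ∫ x in Iic (0:ℝ), Real.exp (-(b * |x|)) = 1 / b := by
    have := integral_comp_neg_Iic (0:ℝ) (fun x => Real.exp (-(b * |x|)))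
    simp only [abs_neg, neg_zero] at this
    rw [this, hIoi]
  rw [hIic, hIoi] at hsplit
  rw [← hsplit]; ring

lemma myInterp {G : ℝ → ℝ≥0∞} {B : ℝ≥0∞} (hB : B ≠ ∞)
    (hsup : ∀ᵐ x, G x ≤ B) (hint : ∫⁻ x, G x ≤ B) {q : ℝ} (hq : 1 ≤ q) :
    (∫⁻ x, (G x) ^ q) ^ (1/q) ≤ B := by
  have hq0 : (0:ℝ) < q := lt_of_lt_of_le one_pos hq
  have key : ∫⁻ x, G x ^ q ≤ B ^ q := by
    calc ∫⁻ x, G x ^ q ≤ ∫⁻ x, B ^ (q-1) * G x := by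
          refine lintegral_mono_ae (hsup.mono fun x hx => ?_)
          calc G x ^ q = G x ^ ((q-1)+1) := by norm_num
            _ = G x ^ (q-1) * G x ^ (1:ℝ) :=
                ENNReal.rpow_add_of_nonneg _ _ (by linarith) zero_le_one
            _ = G x ^ (q-1) * G x := by rw [ENNReal.rpow_one]
            _ ≤ B ^ (q-1) * G x :=
                mul_le_mul_left (ENNReal.rpow_le_rpow hx (by linarith)) _
      _ = B ^ (q-1) * ∫⁻ x, G x :=
          lintegral_const_mul' _ _ (ENNReal.rpow_ne_top_of_nonneg (by linarith) hB)
      _ ≤ B ^ (q-1) * B := by gcongr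
      _ = B ^ (q-1) * B ^ (1:ℝ) := by rw [ENNReal.rpow_one]
      _ = B ^ ((q-1)+1) := (ENNReal.rpow_add_of_nonneg _ _ (by linarith) zero_le_one).symm
      _ = B ^ q := by norm_num
  calc (∫⁻ x, G x ^ q) ^ (1/q) ≤ (B ^ q) ^ (1/q) := ENNReal.rpow_le_rpow key (by positivity)
    _ = B := by rw [← ENNReal.rpow_mul, mul_one_div, div_self hq0.ne', ENNReal.rpow_one]

/-- Kernel-to-operator bound underlying estimate (2.29), undercompressive case (α = 1):
a kernel dominated by `C₀(ρ⁻¹e^{-θ|x|}(ρe^{-θρ|y|} + e^{-θ|y|}) + e^{-ρ|x-y|}(ρ + e^{-θ|y|}))`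
maps `L¹(ℝ)` into `L^p(ℝ)` with operator norm at most `C ρ⁻¹`, for every `p ∈ [1,∞]`. -/
theorem stmt_9 (θ C₀ : ℝ) (hθ : 0 < θ) (hC₀ : 0 < C₀) :
    ∃ C : ℝ, 0 < C ∧
      ∀ ρ : ℝ, ρ ∈ Set.Ioc (0:ℝ) 1 →
      ∀ K : ℝ → ℝ → ℂ, Measurable (Function.uncurry K) →
        (∀ᵐ q : ℝ × ℝ, ‖K q.1 q.2‖ ≤
          C₀ * (ρ⁻¹ * Real.exp (-θ * |q.1|) *
              (ρ * Real.exp (-θ * ρ * |q.2|) + Real.exp (-θ * |q.2|))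
            + Real.exp (-ρ * |q.1 - q.2|) * (ρ + Real.exp (-θ * |q.2|)))) →
      ∀ f : ℝ → ℂ, Integrable f →
      ∀ p : ℝ≥0∞, 1 ≤ p →
        eLpNorm (fun x => ∫ y, K x y * f y) p volume ≤
          ENNReal.ofReal (C * ρ⁻¹ * ∫ y, ‖f y‖) := by
  refine ⟨4*C₀*(1+θ⁻¹), by positivity, ?_⟩
  rintro ρ ⟨hρ0, hρ1⟩ K hKm hK f hf p hp
  set C : ℝ := 4*C₀*(1+θ⁻¹) with hCdef
  set A : ℝ := ∫ y, ‖f y‖ with hAdef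
  have hA0 : 0 ≤ A := integral_nonneg (fun y => norm_nonneg _)
  have hρinv : (1:ℝ) ≤ ρ⁻¹ := (one_le_inv₀ hρ0).mpr hρ1
  have hρinv0 : (0:ℝ) < ρ⁻¹ := inv_pos.mpr hρ0
  -- integrability of the convolution integrand
  have hgint : ∀ x : ℝ, Integrable (fun y => Real.exp (-(ρ * |x - y|)) * ‖f y‖) := by
    intro x
    refine hf.norm.mono' ?_ ?_
    · exact (Continuous.aestronglyMeasurable (by fun_prop)).mul hf.norm.aestronglyMeasurable
    · filter_upwards with y
      rw [Real.norm_eq_abs, abs_mul, abs_of_pos (Real.exp_pos _),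
        abs_of_nonneg (norm_nonneg (f y))]
      exact mul_le_of_le_one_left (norm_nonneg _)
        (Real.exp_le_one_iff.mpr (neg_nonpos.mpr (by positivity)))
  set g : ℝ → ℝ := fun x => ∫ y, Real.exp (-(ρ * |x - y|)) * ‖f y‖ with hgdef
  have hgle : ∀ x, g x ≤ A := by
    intro x
    refine integral_mono (hgint x) hf.norm (fun y => ?_)
    exact mul_le_of_le_one_left (norm_nonneg _)
      (Real.exp_le_one_iff.mpr (neg_nonpos.mpr (by positivity)))
  have hgnn : ∀ x, 0 ≤ g x :=
    fun x => integral_nonneg fun y => mul_nonneg (Real.exp_pos _).le (norm_nonneg _)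
  set W : ℝ → ℝ := fun x => 2*C₀*ρ⁻¹*Real.exp (-(θ*|x|))*A + 2*C₀*(g x) with hWdef
  -- a.e. pointwise bound on V
  have hKae : ∀ᵐ x : ℝ, ∀ᵐ y : ℝ, ‖K x y‖ ≤
      C₀ * (ρ⁻¹ * Real.exp (-θ * |x|) *
          (ρ * Real.exp (-θ * ρ * |y|) + Real.exp (-θ * |y|))
        + Real.exp (-ρ * |x - y|) * (ρ + Real.exp (-θ * |y|))) := by
    rw [Measure.volume_eq_prod] at hK
    exact Measure.ae_ae_of_ae_prod hK
  have hVle : ∀ᵐ x : ℝ, ‖∫ y, K x y * f y‖ ≤ W x := by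
    filter_upwards [hKae] with x hx
    have hx' : ∀ᵐ y : ℝ, ‖K x y * f y‖ ≤
        2*C₀*ρ⁻¹*Real.exp (-(θ*|x|)) * ‖f y‖
          + 2*C₀*(Real.exp (-(ρ*|x - y|)) * ‖f y‖) := by
      filter_upwards [hx] with y hy
      rw [norm_mul]
      have key : ‖K x y‖ ≤
          2*C₀*ρ⁻¹*Real.exp (-(θ*|x|)) + 2*C₀*Real.exp (-(ρ*|x - y|)) := by
        refine hy.trans ?_
        simp only [neg_mul] at *
        have e1 : Real.exp (-(θ * ρ * |y|)) ≤ 1 :=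
          Real.exp_le_one_iff.mpr (neg_nonpos.mpr (by positivity))
        have e2 : Real.exp (-(θ * |y|)) ≤ 1 :=
          Real.exp_le_one_iff.mpr (neg_nonpos.mpr (by positivity))
        have e3 : (0:ℝ) ≤ Real.exp (-(θ * |x|)) := (Real.exp_pos _).le
        have e4 : (0:ℝ) ≤ Real.exp (-(ρ * |x - y|)) := (Real.exp_pos _).le
        have e5 : (0:ℝ) ≤ Real.exp (-(θ * ρ * |y|)) := (Real.exp_pos _).le
        have e6 : (0:ℝ) ≤ Real.exp (-(θ * |y|)) := (Real.exp_pos _).le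
        have h24 : ρ * Real.exp (-(θ * ρ * |y|)) + Real.exp (-(θ * |y|)) ≤ 2 := by
          nlinarith
        have h25 : ρ + Real.exp (-(θ * |y|)) ≤ 2 := by linarith
        calc C₀ * (ρ⁻¹ * Real.exp (-(θ * |x|)) *
                (ρ * Real.exp (-(θ * ρ * |y|)) + Real.exp (-(θ * |y|)))
              + Real.exp (-(ρ * |x - y|)) * (ρ + Real.exp (-(θ * |y|))))
            ≤ C₀ * (ρ⁻¹ * Real.exp (-(θ * |x|)) * 2
              + Real.exp (-(ρ * |x - y|)) * 2) := by
              refine mul_le_mul_of_nonneg_left ?_ hC₀.le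
              refine add_le_add ?_ ?_
              · exact mul_le_mul_of_nonneg_left h24 (by positivity)
              · exact mul_le_mul_of_nonneg_left h25 e4
          _ = 2*C₀*ρ⁻¹*Real.exp (-(θ*|x|)) + 2*C₀*Real.exp (-(ρ*|x - y|)) := by ring
      calc ‖K x y‖ * ‖f y‖
          ≤ (2*C₀*ρ⁻¹*Real.exp (-(θ*|x|)) + 2*C₀*Real.exp (-(ρ*|x - y|))) * ‖f y‖ :=
            mul_le_mul_of_nonneg_right key (norm_nonneg _)
        _ = 2*C₀*ρ⁻¹*Real.exp (-(θ*|x|)) * ‖f y‖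
              + 2*C₀*(Real.exp (-(ρ*|x - y|)) * ‖f y‖) := by ring
    calc ‖∫ y, K x y * f y‖ ≤ ∫ y, ‖K x y * f y‖ := norm_integral_le_integral_norm _
      _ ≤ ∫ y, (2*C₀*ρ⁻¹*Real.exp (-(θ*|x|)) * ‖f y‖
            + 2*C₀*(Real.exp (-(ρ*|x - y|)) * ‖f y‖)) :=
          integral_mono_of_nonneg (Filter.Eventually.of_forall fun y => norm_nonneg _)
            ((hf.norm.const_mul _).add ((hgint x).const_mul _)) hx'
      _ = W x := by
          rw [integral_add (hf.norm.const_mul _) ((hgint x).const_mul _),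
            integral_const_mul, integral_const_mul, hWdef, hAdef]
  -- uniform bound on W
  have hWtop : ∀ x, W x ≤ C * ρ⁻¹ * A := by
    intro x
    have h1 : Real.exp (-(θ*|x|)) ≤ 1 :=
      Real.exp_le_one_iff.mpr (neg_nonpos.mpr (by positivity))
    have h2 : (0:ℝ) ≤ Real.exp (-(θ*|x|)) := (Real.exp_pos _).le
    have hC4 : 4*C₀ ≤ C := by
      rw [hCdef]
      nlinarith [inv_pos.mpr hθ]
    have t1 : 2*C₀*ρ⁻¹*Real.exp (-(θ*|x|))*A ≤ 2*C₀*ρ⁻¹*A := by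
      nlinarith [mul_nonneg (mul_nonneg (by positivity : (0:ℝ) ≤ 2*C₀*ρ⁻¹)
        (sub_nonneg.mpr h1)) hA0]
    have t2 : 2*C₀*(g x) ≤ 2*C₀*(ρ⁻¹*A) := by
      have hga : g x ≤ ρ⁻¹ * A := by
        nlinarith [hgle x, mul_nonneg (sub_nonneg.mpr hρinv) hA0]
      nlinarith [hga]
    have t3 : 4*C₀*(ρ⁻¹*A) ≤ C*ρ⁻¹*A := by
      nlinarith [mul_nonneg (mul_nonneg (sub_nonneg.mpr hC4) hρinv0.le) hA0]
    have hWx : W x = 2*C₀*ρ⁻¹*Real.exp (-(θ*|x|))*A + 2*C₀*(g x) := rfl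
    linarith [t1, t2, t3]
  set B := ENNReal.ofReal (C * ρ⁻¹ * A) with hBdef
  -- lintegral bound on W
  have hWlint : ∫⁻ x, ENNReal.ofReal (W x) ≤ B := by
    have meas1 : Measurable fun x : ℝ =>
        ENNReal.ofReal (2*C₀*ρ⁻¹*Real.exp (-(θ*|x|))*A) :=
      (Continuous.measurable (by fun_prop)).ennreal_ofReal
    have term1 : ∫⁻ x : ℝ, ENNReal.ofReal (2*C₀*ρ⁻¹*Real.exp (-(θ*|x|))*A)
        = ENNReal.ofReal (2*C₀*ρ⁻¹*A*(2/θ)) := by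
      calc ∫⁻ x : ℝ, ENNReal.ofReal (2*C₀*ρ⁻¹*Real.exp (-(θ*|x|))*A)
          = ∫⁻ x : ℝ, ENNReal.ofReal (2*C₀*ρ⁻¹*A) *
              ENNReal.ofReal (Real.exp (-(θ*|x|))) := by
            refine lintegral_congr fun x => ?_
            rw [← ENNReal.ofReal_mul (by positivity)]
            congr 1; ring
        _ = ENNReal.ofReal (2*C₀*ρ⁻¹*A) *
              ∫⁻ x : ℝ, ENNReal.ofReal (Real.exp (-(θ*|x|))) :=
            lintegral_const_mul' _ _ ENNReal.ofReal_ne_top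
        _ = ENNReal.ofReal (2*C₀*ρ⁻¹*A) * ENNReal.ofReal (2/θ) := by
            rw [← ofReal_integral_eq_lintegral_ofReal (myIntExpAbs hθ)
              (Filter.Eventually.of_forall fun x => (Real.exp_pos _).le),
              myIntExpAbsVal hθ]
        _ = ENNReal.ofReal (2*C₀*ρ⁻¹*A*(2/θ)) :=
            (ENNReal.ofReal_mul (by positivity)).symm
    have term2 : ∫⁻ x : ℝ, ENNReal.ofReal (2*C₀*(g x))
        = ENNReal.ofReal (2*C₀*((2/ρ)*A)) := by
      have hswap : AEMeasurable
          (Function.uncurry fun x y : ℝ =>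
            ENNReal.ofReal (Real.exp (-(ρ*|x - y|)) * ‖f y‖))
          ((volume : Measure ℝ).prod volume) := by
        refine AEMeasurable.ennreal_ofReal ?_
        refine AEMeasurable.mul ?_ ?_
        · exact (Continuous.measurable (by fun_prop)).aemeasurable
        · exact (hf.norm.aemeasurable.comp_quasiMeasurePreserving
            Measure.quasiMeasurePreserving_snd)
      calc ∫⁻ x : ℝ, ENNReal.ofReal (2*C₀*(g x))
          = ENNReal.ofReal (2*C₀) * ∫⁻ x : ℝ, ENNReal.ofReal (g x) := by
            rw [← lintegral_const_mul' _ _ ENNReal.ofReal_ne_top]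
            refine lintegral_congr fun x => ?_
            rw [← ENNReal.ofReal_mul (by positivity)]
        _ = ENNReal.ofReal (2*C₀) *
              ∫⁻ x : ℝ, ∫⁻ y : ℝ, ENNReal.ofReal (Real.exp (-(ρ*|x - y|)) * ‖f y‖) := by
            congr 1
            refine lintegral_congr fun x => ?_
            exact ofReal_integral_eq_lintegral_ofReal (hgint x)
              (Filter.Eventually.of_forall fun y =>
                mul_nonneg (Real.exp_pos _).le (norm_nonneg _))
        _ = ENNReal.ofReal (2*C₀) *
              ∫⁻ y : ℝ, ∫⁻ x : ℝ, ENNReal.ofReal (Real.exp (-(ρ*|x - y|)) * ‖f y‖) := by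
            rw [lintegral_lintegral_swap hswap]
        _ = ENNReal.ofReal (2*C₀) *
              ∫⁻ y : ℝ, ENNReal.ofReal (2/ρ) * ENNReal.ofReal ‖f y‖ := by
            congr 1
            refine lintegral_congr fun y => ?_
            calc ∫⁻ x : ℝ, ENNReal.ofReal (Real.exp (-(ρ*|x - y|)) * ‖f y‖)
                = ∫⁻ x : ℝ, ENNReal.ofReal (Real.exp (-(ρ*|x - y|))) *
                    ENNReal.ofReal ‖f y‖ := by
                  refine lintegral_congr fun x => ?_
                  rw [← ENNReal.ofReal_mul (Real.exp_pos _).le]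
              _ = (∫⁻ x : ℝ, ENNReal.ofReal (Real.exp (-(ρ*|x - y|)))) *
                    ENNReal.ofReal ‖f y‖ :=
                  lintegral_mul_const' _ _ ENNReal.ofReal_ne_top
              _ = ENNReal.ofReal (2/ρ) * ENNReal.ofReal ‖f y‖ := by
                  congr 1
                  have hsub : ∫⁻ x : ℝ, ENNReal.ofReal (Real.exp (-(ρ*|x - y|)))
                      = ∫⁻ x : ℝ, ENNReal.ofReal (Real.exp (-(ρ*|x|))) :=
                    lintegral_sub_right_eq_self
                      (fun x => ENNReal.ofReal (Real.exp (-(ρ*|x|)))) y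
                  rw [hsub, ← ofReal_integral_eq_lintegral_ofReal (myIntExpAbs hρ0)
                    (Filter.Eventually.of_forall fun x => (Real.exp_pos _).le),
                    myIntExpAbsVal hρ0]
        _ = ENNReal.ofReal (2*C₀) * (ENNReal.ofReal (2/ρ) * ENNReal.ofReal A) := by
            rw [lintegral_const_mul' _ _ ENNReal.ofReal_ne_top,
              ← ofReal_integral_eq_lintegral_ofReal hf.norm
                (Filter.Eventually.of_forall fun y => norm_nonneg _)]
        _ = ENNReal.ofReal (2*C₀*((2/ρ)*A)) := by
            rw [← ENNReal.ofReal_mul (by positivity), ← ENNReal.ofReal_mul (by positivity)]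
    calc ∫⁻ x, ENNReal.ofReal (W x)
        ≤ ∫⁻ x, (ENNReal.ofReal (2*C₀*ρ⁻¹*Real.exp (-(θ*|x|))*A)
            + ENNReal.ofReal (2*C₀*(g x))) :=
          lintegral_mono fun x => ENNReal.ofReal_add_le
      _ = (∫⁻ x : ℝ, ENNReal.ofReal (2*C₀*ρ⁻¹*Real.exp (-(θ*|x|))*A))
            + ∫⁻ x : ℝ, ENNReal.ofReal (2*C₀*(g x)) := lintegral_add_left meas1 _
      _ = ENNReal.ofReal (2*C₀*ρ⁻¹*A*(2/θ)) + ENNReal.ofReal (2*C₀*((2/ρ)*A)) := by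
          rw [term1, term2]
      _ ≤ B := by
          rw [← ENNReal.ofReal_add (by positivity) (by positivity), hBdef]
          refine ENNReal.ofReal_le_ofReal ?_
          have : 2*C₀*ρ⁻¹*A*(2/θ) + 2*C₀*((2/ρ)*A) = C*ρ⁻¹*A := by
            rw [hCdef]; field_simp; ring
          linarith [this.le]
  -- conclude
  have hGsup : ∀ᵐ x : ℝ, (‖(∫ y, K x y * f y : ℂ)‖₊ : ℝ≥0∞) ≤ B := by
    filter_upwards [hVle] with x hx
    rw [← enorm_eq_nnnorm, ← ofReal_norm]
    exact ENNReal.ofReal_le_ofReal (hx.trans (hWtop x))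
  have hGint : ∫⁻ x, (‖(∫ y, K x y * f y : ℂ)‖₊ : ℝ≥0∞) ≤ B := by
    calc ∫⁻ x, (‖(∫ y, K x y * f y : ℂ)‖₊ : ℝ≥0∞)
        ≤ ∫⁻ x, ENNReal.ofReal (W x) := by
          refine lintegral_mono_ae ?_
          filter_upwards [hVle] with x hx
          rw [← enorm_eq_nnnorm, ← ofReal_norm]
          exact ENNReal.ofReal_le_ofReal hx
      _ ≤ B := hWlint
  by_cases hptop : p = ∞
  · rw [hptop, eLpNorm_exponent_top]
    exact eLpNormEssSup_le_of_ae_bound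
      (hVle.mono fun x hx => hx.trans (hWtop x))
  · have hp0 : p ≠ 0 := (zero_lt_one.trans_le hp).ne'
    rw [eLpNorm_eq_lintegral_rpow_enorm_toReal hp0 hptop]
    have hq : 1 ≤ p.toReal := by
      have := ENNReal.toReal_mono hptop hp
      simpa using this
    exact myInterp ENNReal.ofReal_ne_top hGsup hGint hq
end

section
/- Let ρ ∈ (0,1] and C₁, C₂ > 0, and let m_H, m₊, m₋ ≥ 1. Let H : [0,∞) → Mat(m_H,ℂ) and P₊ : [0,∞) → Mat(m₊,ℂ), P₋ : [0,∞) → Mat(m₋,ℂ) be continuous with ‖H(x)‖ ≤ C₁ρ and ‖P₊(x)‖, ‖P₋(x)‖ ≤ C₁ for all x ≥ 0. Let F_H, F_{P₊}, F_{P₋} be continuous integrable forcings and let u_H, u_{P₊}, u_{P₋} be bounded, square-integrable C¹ solutions on [0,∞) of u_H' = H u_H + F_H, u_{P₊}' = P₊ u_{P₊} + F_{P₊}, u_{P₋}' = P₋ u_{P₋} + F_{P₋}. Assume the maximal estimate: ρ²‖u_H‖²_{L²} + ‖u_{P₊}‖²_{L²} + ρ²‖u_{P₋}‖²_{L²} +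 |u_H(0)|² + |u_{P₊}(0)|² + ρ²|u_{P₋}(0)|² ≤ C₂ ( ∫₀^∞ |F_{P₊}||u_{P₊}| + ρ² ∫₀^∞ |F_{P₋}||u_{P₋}| + ∫₀^∞ |F_H||u_H| ). Then there is a constant C > 0 depending only on C₁ and C₂ (not on ρ) such that ρ² ( ‖u_H‖²_{L²} + ‖u_{P₊}‖²_{L²} + ‖u_{P₋}‖²_{L²} + ‖u_H‖²_{L∞} + ‖u_{P₊}‖²_{L∞} + ‖u_{P₋}‖²_{L∞} ) ≤ C ρ^{−1} ( ‖F_H‖_{L¹} + ‖F_{P₊}‖_{L¹} + ‖F_{P₋}‖_{L¹} )². In particular, for every p ∈ [2,∞], ‖(u_H, u_{P₊}, u_{P₋})‖_{L^p} ≤ C' ρ^{−3/2} ( ‖F_H‖_{L¹} + ‖F_{P₊}‖_{L¹} + ‖F_{P₋}‖_{L¹} ) with C' depending only on C₁, C₂. -/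
open MeasureTheory Set Matrix
open scoped ENNReal

set_option maxHeartbeats 2000000
open scoped InnerProductSpace

private lemma key_ode {n : ℕ} (a S : ℝ) (ha : 0 ≤ a) (hS0 : 0 ≤ S)
    (A : ℝ → Matrix (Fin n) (Fin n) ℂ) (F u : ℝ → EuclideanSpace ℂ (Fin n))
    (hA : ContinuousOn A (Ici 0))
    (hAb : ∀ x ∈ Ici (0:ℝ), ‖Matrix.toEuclideanCLM (𝕜 := ℂ) (A x)‖ ≤ a)
    (hF : ContinuousOn F (Ici 0))
    (hFi : IntegrableOn (fun x => ‖F x‖) (Ici 0))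
    (hu2 : IntegrableOn (fun x => ‖u x‖ ^ 2) (Ici 0))
    (hS : ∀ x ∈ Ici (0:ℝ), ‖u x‖ ≤ S)
    (hode : ∀ x ∈ Ici (0:ℝ), HasDerivWithinAt u
      (Matrix.toEuclideanLin (A x) (u x) + F x) (Ici 0) x) :
    ∀ x ∈ Ici (0:ℝ), ‖u x‖ ^ 2 ≤ ‖u 0‖ ^ 2 + 2 * a * (∫ z in Ici (0:ℝ), ‖u z‖ ^ 2)
      + 2 * S * (∫ z in Ici (0:ℝ), ‖F z‖) := by
  intro x hx
  simp only [mem_Ici] at hx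
  set d : ℝ → EuclideanSpace ℂ (Fin n) :=
    fun t => Matrix.toEuclideanLin (A t) (u t) + F t with hd
  have hu_cont : ContinuousOn u (Ici 0) := fun t ht => (hode t ht).continuousWithinAt
  -- continuity of d
  set g : Matrix (Fin n) (Fin n) ℂ →ₗ[ℂ]
      (EuclideanSpace ℂ (Fin n) →L[ℂ] EuclideanSpace ℂ (Fin n)) :=
    (Matrix.toEuclideanLin.trans LinearMap.toContinuousLinearMap).toLinearMap with hg
  have hgA : ContinuousOn (fun t => g (A t)) (Ici 0) :=
    g.continuous_of_finiteDimensional.comp_continuousOn hA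
  have heq : ∀ t, (g (A t)) (u t) = Matrix.toEuclideanLin (A t) (u t) := by
    intro t; simp [hg]
  have hd_cont : ContinuousOn d (Ici 0) := by
    have h := (hgA.clm_apply hu_cont).add hF
    refine h.congr ?_
    intro t ht
    simp [hd, heq t]
  -- norm bound on d
  have hdb : ∀ t ∈ Ici (0:ℝ), ‖d t‖ ≤ a * ‖u t‖ + ‖F t‖ := by
    intro t ht
    have h1 : Matrix.toEuclideanLin (A t) (u t)
        = Matrix.toEuclideanCLM (𝕜 := ℂ) (A t) (u t) := by
      have h := Matrix.coe_toEuclideanCLM_eq_toEuclideanLin (𝕜 := ℂ) (A t)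
      exact (congrFun (congrArg DFunLike.coe h) (u t)).symm
    have h2 : ‖Matrix.toEuclideanLin (A t) (u t)‖ ≤ a * ‖u t‖ := by
      rw [h1]
      calc ‖Matrix.toEuclideanCLM (𝕜 := ℂ) (A t) (u t)‖
          ≤ ‖Matrix.toEuclideanCLM (𝕜 := ℂ) (A t)‖ * ‖u t‖ :=
            (Matrix.toEuclideanCLM (𝕜 := ℂ) (A t)).le_opNorm (u t)
        _ ≤ a * ‖u t‖ := mul_le_mul_of_nonneg_right (hAb t ht) (norm_nonneg _)
    calc ‖d t‖ ≤ ‖Matrix.toEuclideanLin (A t) (u t)‖ + ‖F t‖ := norm_add_le _ _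
      _ ≤ a * ‖u t‖ + ‖F t‖ := by linarith
  -- derivative of the squared norm
  set φ : ℝ → ℝ := fun t => ‖u t‖ ^ 2 with hφ
  set φ' : ℝ → ℝ := fun t => 2 * RCLike.re (⟪u t, d t⟫_ℂ) with hφ'def
  have hφ' : ∀ t ∈ Ici (0:ℝ), HasDerivWithinAt φ (φ' t) (Ici 0) t := by
    intro t ht
    have h1 : HasDerivWithinAt (fun s => (⟪u s, u s⟫_ℂ))
        (⟪u t, d t⟫_ℂ + ⟪d t, u t⟫_ℂ) (Ici 0) t :=
      (hode t ht).inner ℂ (hode t ht)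
    have h2 := (RCLike.reCLM (K := ℂ)).hasFDerivAt.comp_hasDerivWithinAt t h1
    have h3 : RCLike.reCLM (K := ℂ) (⟪u t, d t⟫_ℂ + ⟪d t, u t⟫_ℂ) = φ' t := by
      simp only [RCLike.reCLM_apply, map_add, hφ'def]
      rw [inner_re_symm]
      ring
    rw [h3] at h2
    simp only [Function.comp_def, RCLike.reCLM_apply] at h2
    refine HasDerivWithinAt.congr h2 ?_ ?_
    · intro s _; simp [hφ, ← inner_self_eq_norm_sq (𝕜 := ℂ) (u s)]
    · simp [hφ, ← inner_self_eq_norm_sq (𝕜 := ℂ) (u t)]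
  -- continuity of φ'
  have hφ'_cont : ContinuousOn φ' (Ici 0) := by
    have h : ContinuousOn (fun t => (⟪u t, d t⟫_ℂ)) (Ici 0) := hu_cont.inner hd_cont
    exact continuousOn_const.mul (RCLike.continuous_re.comp_continuousOn h)
  have hIcc : Icc (0:ℝ) x ⊆ Ici 0 := Icc_subset_Ici_self
  -- FTC
  have hFTC : ∫ t in (0:ℝ)..x, φ' t = φ x - φ 0 := by
    apply intervalIntegral.integral_eq_sub_of_hasDeriv_right_of_le hx
      ((hu_cont.norm.pow 2).mono hIcc)
    · intro t ht
      exact (hφ' t (hIcc (Ioo_subset_Icc_self ht))).mono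
        (fun s hs => le_of_lt (lt_trans ht.1 hs))
    · apply ContinuousOn.intervalIntegrable
      rw [uIcc_of_le hx]
      exact hφ'_cont.mono hIcc
  -- pointwise bound
  have hpt : ∀ t ∈ Icc (0:ℝ) x, φ' t ≤ 2 * a * ‖u t‖ ^ 2 + 2 * S * ‖F t‖ := by
    intro t ht
    have ht' : t ∈ Ici (0:ℝ) := hIcc ht
    have h1 : RCLike.re (⟪u t, d t⟫_ℂ) ≤ ‖u t‖ * ‖d t‖ :=
      (RCLike.re_le_norm _).trans (norm_inner_le_norm _ _)
    have h2 := hdb t ht'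
    have h3 := hS t ht'
    have h4 : (0:ℝ) ≤ ‖F t‖ := norm_nonneg _
    have h5 : (0:ℝ) ≤ ‖u t‖ := norm_nonneg _
    have h6 : (0:ℝ) ≤ ‖d t‖ := norm_nonneg _
    have c1 : ‖u t‖ * ‖d t‖ ≤ ‖u t‖ * (a * ‖u t‖ + ‖F t‖) :=
      mul_le_mul_of_nonneg_left h2 h5
    have c2 : ‖u t‖ * ‖F t‖ ≤ S * ‖F t‖ := mul_le_mul_of_nonneg_right h3 h4
    simp only [hφ'def]
    nlinarith [h1, c1, c2]
  have hint1 : IntervalIntegrable φ' volume 0 x := by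
    apply ContinuousOn.intervalIntegrable
    rw [uIcc_of_le hx]
    exact hφ'_cont.mono hIcc
  have hintu : IntervalIntegrable (fun t => ‖u t‖ ^ 2) volume 0 x := by
    apply ContinuousOn.intervalIntegrable
    rw [uIcc_of_le hx]
    exact (hu_cont.norm.pow 2).mono hIcc
  have hintF : IntervalIntegrable (fun t => ‖F t‖) volume 0 x := by
    apply ContinuousOn.intervalIntegrable
    rw [uIcc_of_le hx]
    exact hF.norm.mono hIcc
  have hint2 : IntervalIntegrable (fun t => 2 * a * ‖u t‖ ^ 2 + 2 * S * ‖F t‖) volume 0 x :=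
    ((hintu.const_mul _).add (hintF.const_mul _))
  have hmono := intervalIntegral.integral_mono_on hx hint1 hint2 hpt
  have hsplit : ∫ t in (0:ℝ)..x, (2 * a * ‖u t‖ ^ 2 + 2 * S * ‖F t‖)
      = 2 * a * (∫ t in (0:ℝ)..x, ‖u t‖ ^ 2) + 2 * S * (∫ t in (0:ℝ)..x, ‖F t‖) := by
    rw [intervalIntegral.integral_add (hintu.const_mul _) (hintF.const_mul _),
      intervalIntegral.integral_const_mul, intervalIntegral.integral_const_mul]
  have hmu : (∫ t in (0:ℝ)..x, ‖u t‖ ^ 2) ≤ ∫ z in Ici (0:ℝ), ‖u z‖ ^ 2 := by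
    rw [intervalIntegral.integral_of_le hx]
    exact setIntegral_mono_set hu2 (ae_of_all _ fun z => sq_nonneg _)
      (HasSubset.Subset.eventuallyLE (fun z hz => le_of_lt hz.1))
  have hmF : (∫ t in (0:ℝ)..x, ‖F t‖) ≤ ∫ z in Ici (0:ℝ), ‖F z‖ := by
    rw [intervalIntegral.integral_of_le hx]
    exact setIntegral_mono_set hFi (ae_of_all _ fun z => norm_nonneg _)
      (HasSubset.Subset.eventuallyLE (fun z hz => le_of_lt hz.1))
  have h2a := mul_le_mul_of_nonneg_left hmu (by linarith : (0:ℝ) ≤ 2 * a)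
  have h2S := mul_le_mul_of_nonneg_left hmF (by linarith : (0:ℝ) ≤ 2 * S)
  have hfin : φ x ≤ φ 0 + 2 * a * (∫ z in Ici (0:ℝ), ‖u z‖ ^ 2)
      + 2 * S * (∫ z in Ici (0:ℝ), ‖F z‖) := by linarith [hsplit ▸ hmono]
  simpa [hφ] using hfin

private lemma lp_bound {α E : Type*} [MeasurableSpace α] [NormedAddCommGroup E]
    {μ : Measure α} {f : α → E} {B : ℝ}
    (hae : ∀ᵐ x ∂μ, ‖f x‖ ≤ B)
    (h2 : ∫⁻ x, (‖f x‖₊ : ℝ≥0∞) ^ (2:ℝ) ∂μ ≤ ENNReal.ofReal B ^ (2:ℝ)) :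
    ∀ p : ℝ≥0∞, 2 ≤ p → eLpNorm f p μ ≤ ENNReal.ofReal B := by
  intro p hp
  rcases eq_or_ne p ∞ with rfl | hne
  · rw [eLpNorm_exponent_top]
    exact eLpNormEssSup_le_of_ae_bound hae
  · have hp0 : p ≠ 0 := by
      intro h; rw [h] at hp; exact absurd hp (by simp)
    have hq2 : (2:ℝ) ≤ p.toReal := by
      have := (ENNReal.toReal_le_toReal (by norm_num : (2:ℝ≥0∞) ≠ ∞) hne).2 hp
      simpa using this
    set q := p.toReal with hq
    have hq0 : q ≠ 0 := by intro h; rw [h] at hq2; norm_num at hq2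
    rw [eLpNorm_eq_lintegral_rpow_enorm_toReal hp0 hne]
    have hpt : ∀ᵐ x ∂μ, (‖f x‖₊ : ℝ≥0∞) ^ q
        ≤ ENNReal.ofReal B ^ (q - 2) * (‖f x‖₊ : ℝ≥0∞) ^ (2:ℝ) := by
      filter_upwards [hae] with x hx
      have hfx : (‖f x‖₊ : ℝ≥0∞) ≤ ENNReal.ofReal B := by
        rw [← enorm_eq_nnnorm, ← ofReal_norm]
        exact ENNReal.ofReal_le_ofReal hx
      calc (‖f x‖₊ : ℝ≥0∞) ^ q
          = (‖f x‖₊ : ℝ≥0∞) ^ (q - 2) * (‖f x‖₊ : ℝ≥0∞) ^ (2:ℝ) := by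
            rw [← ENNReal.rpow_add_of_nonneg _ _ (by linarith) (by norm_num)]
            norm_num
        _ ≤ _ := mul_le_mul_left (ENNReal.rpow_le_rpow hfx (by linarith)) _
    calc (∫⁻ x, (‖f x‖₊ : ℝ≥0∞) ^ q ∂μ) ^ (1/q)
        ≤ (∫⁻ x, ENNReal.ofReal B ^ (q - 2) * (‖f x‖₊ : ℝ≥0∞) ^ (2:ℝ) ∂μ) ^ (1/q) :=
          ENNReal.rpow_le_rpow (lintegral_mono_ae hpt) (by positivity)
      _ = (ENNReal.ofReal B ^ (q - 2) * ∫⁻ x, (‖f x‖₊ : ℝ≥0∞) ^ (2:ℝ) ∂μ) ^ (1/q) := by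
          rw [lintegral_const_mul' _ _
            (ENNReal.rpow_ne_top_of_nonneg (by linarith) ENNReal.ofReal_ne_top)]
      _ ≤ (ENNReal.ofReal B ^ (q - 2) * ENNReal.ofReal B ^ (2:ℝ)) ^ (1/q) :=
          ENNReal.rpow_le_rpow (mul_le_mul_right h2 _) (by positivity)
      _ = (ENNReal.ofReal B ^ q) ^ (1/q) := by
          rw [← ENNReal.rpow_add_of_nonneg _ _ (by linarith) (by norm_num)]
          norm_num
      _ = ENNReal.ofReal B := by
          rw [← ENNReal.rpow_mul, mul_one_div, div_self hq0, ENNReal.rpow_one]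

private lemma sup_sq_le {s : Set ℝ} {R : ℝ} (h0 : 0 ≤ sSup s) (hne : s.Nonempty)
    (hR : 0 ≤ R) (h : ∀ y ∈ s, y ^ 2 ≤ R) : sSup s ^ 2 ≤ R := by
  have h1 : sSup s ≤ Real.sqrt R := csSup_le hne fun y hy => Real.le_sqrt_of_sq_le (h y hy)
  calc sSup s ^ 2 ≤ Real.sqrt R ^ 2 := pow_le_pow_left₀ h0 h1 2
    _ = R := Real.sq_sqrt hR


/-- The key new argument of the paper (proof of Proposition 2.4, case β = 0):
combining the pointwise ODE estimate for the hyperbolic block `H` (of size `O(ρ)`) and the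
parabolic blocks `P₊, P₋` (of size `O(1)`) with the GMWZ degenerate-symmetrizer maximal L²
estimate (taken as a hypothesis) yields
`ρ²(‖u‖²_{L²} + ‖u‖²_{L∞}) ≤ C ρ⁻¹ (‖F_H‖_{L¹} + ‖F_{P₊}‖_{L¹} + ‖F_{P₋}‖_{L¹})²`
and hence the `L¹ → L^p` bound `‖u‖_{L^p} ≤ C' ρ^{-3/2} ‖F‖_{L¹}` for all `p ∈ [2,∞]`,
with constants depending only on `C₁, C₂`. -/
theorem stmt_10 (C₁ C₂ : ℝ) (hC₁ : 0 < C₁) (hC₂ : 0 < C₂) :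
    ∃ C : ℝ, 0 < C ∧ ∃ C' : ℝ, 0 < C' ∧
      ∀ (ρ : ℝ), ρ ∈ Set.Ioc (0:ℝ) 1 →
      ∀ (mH mp mm : ℕ), 1 ≤ mH → 1 ≤ mp → 1 ≤ mm →
      ∀ (H : ℝ → Matrix (Fin mH) (Fin mH) ℂ)
        (Pp : ℝ → Matrix (Fin mp) (Fin mp) ℂ)
        (Pm : ℝ → Matrix (Fin mm) (Fin mm) ℂ)
        (FH uH : ℝ → EuclideanSpace ℂ (Fin mH))
        (Fp up : ℝ → EuclideanSpace ℂ (Fin mp))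
        (Fm um : ℝ → EuclideanSpace ℂ (Fin mm)),
        ContinuousOn H (Ici 0) → ContinuousOn Pp (Ici 0) → ContinuousOn Pm (Ici 0) →
        (∀ x ∈ Ici (0:ℝ), ‖Matrix.toEuclideanCLM (𝕜 := ℂ) (H x)‖ ≤ C₁ * ρ) →
        (∀ x ∈ Ici (0:ℝ), ‖Matrix.toEuclideanCLM (𝕜 := ℂ) (Pp x)‖ ≤ C₁) →
        (∀ x ∈ Ici (0:ℝ), ‖Matrix.toEuclideanCLM (𝕜 := ℂ) (Pm x)‖ ≤ C₁) →
        ContinuousOn FH (Ici 0) → ContinuousOn Fp (Ici 0) → ContinuousOn Fm (Ici 0) →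
        IntegrableOn (fun x => ‖FH x‖) (Ici 0) →
        IntegrableOn (fun x => ‖Fp x‖) (Ici 0) →
        IntegrableOn (fun x => ‖Fm x‖) (Ici 0) →
        (∃ M : ℝ, ∀ x ∈ Ici (0:ℝ), ‖uH x‖ ≤ M ∧ ‖up x‖ ≤ M ∧ ‖um x‖ ≤ M) →
        IntegrableOn (fun x => ‖uH x‖ ^ 2) (Ici 0) →
        IntegrableOn (fun x => ‖up x‖ ^ 2) (Ici 0) →
        IntegrableOn (fun x => ‖um x‖ ^ 2) (Ici 0) →
        (∀ x ∈ Ici (0:ℝ), HasDerivWithinAt uH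
            (Matrix.toEuclideanLin (H x) (uH x) + FH x) (Ici 0) x) →
        (∀ x ∈ Ici (0:ℝ), HasDerivWithinAt up
            (Matrix.toEuclideanLin (Pp x) (up x) + Fp x) (Ici 0) x) →
        (∀ x ∈ Ici (0:ℝ), HasDerivWithinAt um
            (Matrix.toEuclideanLin (Pm x) (um x) + Fm x) (Ici 0) x) →
        -- the GMWZ maximal L² estimate
        (ρ ^ 2 * (∫ x in Ici (0:ℝ), ‖uH x‖ ^ 2) + (∫ x in Ici (0:ℝ), ‖up x‖ ^ 2)
            + ρ ^ 2 * (∫ x in Ici (0:ℝ), ‖um x‖ ^ 2)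
            + ‖uH 0‖ ^ 2 + ‖up 0‖ ^ 2 + ρ ^ 2 * ‖um 0‖ ^ 2 ≤
          C₂ * ((∫ x in Ici (0:ℝ), ‖Fp x‖ * ‖up x‖)
            + ρ ^ 2 * (∫ x in Ici (0:ℝ), ‖Fm x‖ * ‖um x‖)
            + ∫ x in Ici (0:ℝ), ‖FH x‖ * ‖uH x‖)) →
        -- conclusions
        (∀ x ∈ Ici (0:ℝ),
          ρ ^ 2 * ((∫ z in Ici (0:ℝ), ‖uH z‖ ^ 2) + (∫ z in Ici (0:ℝ), ‖up z‖ ^ 2)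
              + (∫ z in Ici (0:ℝ), ‖um z‖ ^ 2)
              + ‖uH x‖ ^ 2 + ‖up x‖ ^ 2 + ‖um x‖ ^ 2) ≤
            C * ρ⁻¹ * ((∫ z in Ici (0:ℝ), ‖FH z‖) + (∫ z in Ici (0:ℝ), ‖Fp z‖)
              + ∫ z in Ici (0:ℝ), ‖Fm z‖) ^ 2) ∧
        ∀ p : ℝ≥0∞, 2 ≤ p →
          eLpNorm (fun x => (uH x, up x, um x)) p (volume.restrict (Ici 0)) ≤
            ENNReal.ofReal (C' * ρ ^ (-(3 / 2 : ℝ)) *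
              ((∫ z in Ici (0:ℝ), ‖FH z‖) + (∫ z in Ici (0:ℝ), ‖Fp z‖)
                + ∫ z in Ici (0:ℝ), ‖Fm z‖)) := by
  set K : ℝ := (1 + 2 * C₁) * C₂ + 2 with hK
  set C : ℝ := 3 * (C₂ * K) + 2 * K ^ 2 + (1 + 2 * C₁) * C₂ * K + 2 * K with hC
  clear_value K C
  have hK0 : (0:ℝ) < K := by rw [hK]; positivity
  have hC0 : (0:ℝ) < C := by rw [hC, hK]; positivity
  refine ⟨C, hC0, Real.sqrt C, Real.sqrt_pos.2 hC0, ?_⟩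
  rintro ρ ⟨hρ0, hρ1⟩ mH mp mm _ _ _ H Pp Pm FH uH Fp up Fm um
    hHc hPpc hPmc hHb hPpb hPmb hFHc hFpc hFmc hFHi hFpi hFmi hMex hu2H hu2p hu2m
    hodeH hodep hodem hmax
  obtain ⟨M, hM⟩ := hMex
  have hρinv0 : (0:ℝ) < ρ⁻¹ := inv_pos.2 hρ0
  have hρinv : (1:ℝ) ≤ ρ⁻¹ := by
    have h1 : ρ * ρ⁻¹ = 1 := mul_inv_cancel₀ (ne_of_gt hρ0)
    nlinarith only [h1, hρ1, hρ0, hρinv0]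
  have hρsq1 : (0:ℝ) ≤ 1 - ρ ^ 2 := by nlinarith only [hρ1, hρ0]
  -- abbreviations
  set IH := ∫ z in Ici (0:ℝ), ‖uH z‖ ^ 2 with hIHdef
  set Ip := ∫ z in Ici (0:ℝ), ‖up z‖ ^ 2 with hIpdef
  set Im := ∫ z in Ici (0:ℝ), ‖um z‖ ^ 2 with hImdef
  set NH := ∫ z in Ici (0:ℝ), ‖FH z‖ with hNHdef
  set Np := ∫ z in Ici (0:ℝ), ‖Fp z‖ with hNpdef
  set Nm := ∫ z in Ici (0:ℝ), ‖Fm z‖ with hNmdef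
  clear_value IH Ip Im NH Np Nm
  have hIH0 : 0 ≤ IH := by
    rw [hIHdef]; exact setIntegral_nonneg measurableSet_Ici fun z _ => sq_nonneg _
  have hIp0 : 0 ≤ Ip := by
    rw [hIpdef]; exact setIntegral_nonneg measurableSet_Ici fun z _ => sq_nonneg _
  have hIm0 : 0 ≤ Im := by
    rw [hImdef]; exact setIntegral_nonneg measurableSet_Ici fun z _ => sq_nonneg _
  have hNH0 : 0 ≤ NH := by
    rw [hNHdef]; exact setIntegral_nonneg measurableSet_Ici fun z _ => norm_nonneg _
  have hNp0 : 0 ≤ Np := by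
    rw [hNpdef]; exact setIntegral_nonneg measurableSet_Ici fun z _ => norm_nonneg _
  have hNm0 : 0 ≤ Nm := by
    rw [hNmdef]; exact setIntegral_nonneg measurableSet_Ici fun z _ => norm_nonneg _
  set N := NH + Np + Nm with hNdef
  clear_value N
  have hN0 : 0 ≤ N := by rw [hNdef]; linarith only [hNH0, hNp0, hNm0]
  have hNH_le : NH ≤ N := by rw [hNdef]; linarith only [hNp0, hNm0]
  have hNp_le : Np ≤ N := by rw [hNdef]; linarith only [hNH0, hNm0]
  have hNm_le : Nm ≤ N := by rw [hNdef]; linarith only [hNH0, hNp0]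
  -- continuity of solutions
  have huHc : ContinuousOn uH (Ici 0) := fun t ht => (hodeH t ht).continuousWithinAt
  have hupc : ContinuousOn up (Ici 0) := fun t ht => (hodep t ht).continuousWithinAt
  have humc : ContinuousOn um (Ici 0) := fun t ht => (hodem t ht).continuousWithinAt
  -- sups
  set SH := sSup ((fun x => ‖uH x‖) '' Ici 0) with hSHdef
  set Sp := sSup ((fun x => ‖up x‖) '' Ici 0) with hSpdef
  set Sm := sSup ((fun x => ‖um x‖) '' Ici 0) with hSmdef
  clear_value SH Sp Sm
  have hneH : ((fun x => ‖uH x‖) '' Ici 0).Nonempty := ⟨‖uH 0‖, 0, self_mem_Ici, rfl⟩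
  have hnep : ((fun x => ‖up x‖) '' Ici 0).Nonempty := ⟨‖up 0‖, 0, self_mem_Ici, rfl⟩
  have hnem : ((fun x => ‖um x‖) '' Ici 0).Nonempty := ⟨‖um 0‖, 0, self_mem_Ici, rfl⟩
  have hbddH : BddAbove ((fun x => ‖uH x‖) '' Ici 0) :=
    ⟨M, by rintro _ ⟨x, hx, rfl⟩; exact (hM x hx).1⟩
  have hbddp : BddAbove ((fun x => ‖up x‖) '' Ici 0) :=
    ⟨M, by rintro _ ⟨x, hx, rfl⟩; exact (hM x hx).2.1⟩
  have hbddm : BddAbove ((fun x => ‖um x‖) '' Ici 0) :=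
    ⟨M, by rintro _ ⟨x, hx, rfl⟩; exact (hM x hx).2.2⟩
  have hSH : ∀ x ∈ Ici (0:ℝ), ‖uH x‖ ≤ SH := fun x hx =>
    hSHdef ▸ le_csSup hbddH ⟨x, hx, rfl⟩
  have hSp : ∀ x ∈ Ici (0:ℝ), ‖up x‖ ≤ Sp := fun x hx =>
    hSpdef ▸ le_csSup hbddp ⟨x, hx, rfl⟩
  have hSm : ∀ x ∈ Ici (0:ℝ), ‖um x‖ ≤ Sm := fun x hx =>
    hSmdef ▸ le_csSup hbddm ⟨x, hx, rfl⟩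
  have hSH0 : 0 ≤ SH := le_trans (norm_nonneg _) (hSH 0 self_mem_Ici)
  have hSp0 : 0 ≤ Sp := le_trans (norm_nonneg _) (hSp 0 self_mem_Ici)
  have hSm0 : 0 ≤ Sm := le_trans (norm_nonneg _) (hSm 0 self_mem_Ici)
  -- key pointwise estimates
  have hkH := key_ode (C₁ * ρ) SH (by positivity) hSH0 H FH uH hHc hHb hFHc hFHi hu2H hSH hodeH
  have hkp := key_ode C₁ Sp hC₁.le hSp0 Pp Fp up hPpc hPpb hFpc hFpi hu2p hSp hodep
  have hkm := key_ode C₁ Sm hC₁.le hSm0 Pm Fm um hPmc hPmb hFmc hFmi hu2m hSm hodem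
  rw [← hIHdef, ← hNHdef] at hkH
  rw [← hIpdef, ← hNpdef] at hkp
  rw [← hImdef, ← hNmdef] at hkm
  -- sup squared bounds
  have hSH2 : SH ^ 2 ≤ ‖uH 0‖ ^ 2 + 2 * (C₁ * ρ) * IH + 2 * SH * NH := by
    have hR0 : 0 ≤ ‖uH 0‖ ^ 2 + 2 * (C₁ * ρ) * IH + 2 * SH * NH := by
      have h1 : 0 ≤ 2 * (C₁ * ρ) * IH := mul_nonneg (by positivity) hIH0
      have h2 : 0 ≤ 2 * SH * NH := mul_nonneg (by linarith only [hSH0]) hNH0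
      linarith only [h1, h2, sq_nonneg ‖uH 0‖]
    have hle : sSup ((fun x => ‖uH x‖) '' Ici 0) ≤ Real.sqrt (‖uH 0‖ ^ 2 + 2 * (C₁ * ρ) * IH + 2 * SH * NH) := by
      apply csSup_le hneH
      rintro _ ⟨x, hx, rfl⟩
      exact Real.le_sqrt_of_sq_le (hkH x hx)
    rw [← hSHdef] at hle
    calc SH ^ 2 ≤ Real.sqrt (‖uH 0‖ ^ 2 + 2 * (C₁ * ρ) * IH + 2 * SH * NH) ^ 2 := pow_le_pow_left₀ hSH0 hle 2
      _ = ‖uH 0‖ ^ 2 + 2 * (C₁ * ρ) * IH + 2 * SH * NH := Real.sq_sqrt hR0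
  have hSp2 : Sp ^ 2 ≤ ‖up 0‖ ^ 2 + 2 * C₁ * Ip + 2 * Sp * Np := by
    have hR0 : 0 ≤ ‖up 0‖ ^ 2 + 2 * C₁ * Ip + 2 * Sp * Np := by
      have h1 : 0 ≤ 2 * C₁ * Ip := mul_nonneg (by positivity) hIp0
      have h2 : 0 ≤ 2 * Sp * Np := mul_nonneg (by linarith only [hSp0]) hNp0
      linarith only [h1, h2, sq_nonneg ‖up 0‖]
    have hle : sSup ((fun x => ‖up x‖) '' Ici 0) ≤ Real.sqrt (‖up 0‖ ^ 2 + 2 * C₁ * Ip + 2 * Sp * Np) := by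
      apply csSup_le hnep
      rintro _ ⟨x, hx, rfl⟩
      exact Real.le_sqrt_of_sq_le (hkp x hx)
    rw [← hSpdef] at hle
    calc Sp ^ 2 ≤ Real.sqrt (‖up 0‖ ^ 2 + 2 * C₁ * Ip + 2 * Sp * Np) ^ 2 := pow_le_pow_left₀ hSp0 hle 2
      _ = ‖up 0‖ ^ 2 + 2 * C₁ * Ip + 2 * Sp * Np := Real.sq_sqrt hR0
  have hSm2 : Sm ^ 2 ≤ ‖um 0‖ ^ 2 + 2 * C₁ * Im + 2 * Sm * Nm := by
    have hR0 : 0 ≤ ‖um 0‖ ^ 2 + 2 * C₁ * Im + 2 * Sm * Nm := by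
      have h1 : 0 ≤ 2 * C₁ * Im := mul_nonneg (by positivity) hIm0
      have h2 : 0 ≤ 2 * Sm * Nm := mul_nonneg (by linarith only [hSm0]) hNm0
      linarith only [h1, h2, sq_nonneg ‖um 0‖]
    have hle : sSup ((fun x => ‖um x‖) '' Ici 0) ≤ Real.sqrt (‖um 0‖ ^ 2 + 2 * C₁ * Im + 2 * Sm * Nm) := by
      apply csSup_le hnem
      rintro _ ⟨x, hx, rfl⟩
      exact Real.le_sqrt_of_sq_le (hkm x hx)
    rw [← hSmdef] at hle
    calc Sm ^ 2 ≤ Real.sqrt (‖um 0‖ ^ 2 + 2 * C₁ * Im + 2 * Sm * Nm) ^ 2 := pow_le_pow_left₀ hSm0 hle 2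
      _ = ‖um 0‖ ^ 2 + 2 * C₁ * Im + 2 * Sm * Nm := Real.sq_sqrt hR0
  -- the maximal-estimate quantity
  set E := ρ ^ 2 * IH + Ip + ρ ^ 2 * Im + ‖uH 0‖ ^ 2 + ‖up 0‖ ^ 2 + ρ ^ 2 * ‖um 0‖ ^ 2
    with hEdef
  clear_value E
  have p1 : 0 ≤ ρ ^ 2 * IH := mul_nonneg (sq_nonneg ρ) hIH0
  have p2 : 0 ≤ Ip := hIp0
  have p3 : 0 ≤ ρ ^ 2 * Im := mul_nonneg (sq_nonneg ρ) hIm0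
  have p4 : 0 ≤ ‖uH 0‖ ^ 2 := sq_nonneg _
  have p5 : 0 ≤ ‖up 0‖ ^ 2 := sq_nonneg _
  have p6 : 0 ≤ ρ ^ 2 * ‖um 0‖ ^ 2 := mul_nonneg (sq_nonneg ρ) (sq_nonneg _)
  have hE0 : 0 ≤ E := by rw [hEdef]; linarith only [p1, p2, p3, p4, p5, p6]
  have hcIH : ρ ^ 2 * IH ≤ E := by rw [hEdef]; linarith only [p2, p3, p4, p5, p6]
  have hcIp : Ip ≤ E := by rw [hEdef]; linarith only [p1, p3, p4, p5, p6]
  have hcIm : ρ ^ 2 * Im ≤ E := by rw [hEdef]; linarith only [p1, p2, p4, p5, p6]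
  have hcuH0 : ‖uH 0‖ ^ 2 ≤ E := by rw [hEdef]; linarith only [p1, p2, p3, p5, p6]
  have hcup0 : ‖up 0‖ ^ 2 ≤ E := by rw [hEdef]; linarith only [p1, p2, p3, p4, p6]
  have hcum0 : ρ ^ 2 * ‖um 0‖ ^ 2 ≤ E := by rw [hEdef]; linarith only [p1, p2, p3, p4, p5]
  have hEρ : E ≤ ρ⁻¹ * E := by
    have h := mul_le_mul_of_nonneg_right hρinv hE0
    linarith only [h]
  -- bounds on the forcing integrals
  have hbp : (∫ z in Ici (0:ℝ), ‖Fp z‖ * ‖up z‖) ≤ Sp * Np := by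
    have hint : IntegrableOn (fun z => ‖Fp z‖ * ‖up z‖) (Ici 0) := by
      apply Integrable.mono (hFpi.const_mul Sp)
        ((hFpc.norm.mul hupc.norm).aestronglyMeasurable measurableSet_Ici)
      rw [ae_restrict_iff' measurableSet_Ici]
      refine ae_of_all _ fun z hz => ?_
      have h1 := mul_le_mul_of_nonneg_left (hSp z hz) (norm_nonneg (Fp z))
      have h2 := norm_nonneg (Fp z); have h3 := norm_nonneg (up z)
      simp only [Real.norm_eq_abs, Pi.mul_apply]
      rw [abs_of_nonneg (by positivity), abs_of_nonneg (by positivity)]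
      linarith only [h1]
    calc (∫ z in Ici (0:ℝ), ‖Fp z‖ * ‖up z‖) ≤ ∫ z in Ici (0:ℝ), Sp * ‖Fp z‖ := by
          apply setIntegral_mono_on hint (hFpi.const_mul Sp) measurableSet_Ici
          intro z hz
          have h1 := mul_le_mul_of_nonneg_left (hSp z hz) (norm_nonneg (Fp z))
          linarith only [h1]
      _ = Sp * Np := by rw [hNpdef]; exact integral_const_mul _ _
  have hbm : (∫ z in Ici (0:ℝ), ‖Fm z‖ * ‖um z‖) ≤ Sm * Nm := by
    have hint : IntegrableOn (fun z => ‖Fm z‖ * ‖um z‖) (Ici 0) := by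
      apply Integrable.mono (hFmi.const_mul Sm)
        ((hFmc.norm.mul humc.norm).aestronglyMeasurable measurableSet_Ici)
      rw [ae_restrict_iff' measurableSet_Ici]
      refine ae_of_all _ fun z hz => ?_
      have h1 := mul_le_mul_of_nonneg_left (hSm z hz) (norm_nonneg (Fm z))
      have h2 := norm_nonneg (Fm z); have h3 := norm_nonneg (um z)
      simp only [Real.norm_eq_abs, Pi.mul_apply]
      rw [abs_of_nonneg (by positivity), abs_of_nonneg (by positivity)]
      linarith only [h1]
    calc (∫ z in Ici (0:ℝ), ‖Fm z‖ * ‖um z‖) ≤ ∫ z in Ici (0:ℝ), Sm * ‖Fm z‖ := by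
          apply setIntegral_mono_on hint (hFmi.const_mul Sm) measurableSet_Ici
          intro z hz
          have h1 := mul_le_mul_of_nonneg_left (hSm z hz) (norm_nonneg (Fm z))
          linarith only [h1]
      _ = Sm * Nm := by rw [hNmdef]; exact integral_const_mul _ _
  have hbH : (∫ z in Ici (0:ℝ), ‖FH z‖ * ‖uH z‖) ≤ SH * NH := by
    have hint : IntegrableOn (fun z => ‖FH z‖ * ‖uH z‖) (Ici 0) := by
      apply Integrable.mono (hFHi.const_mul SH)
        ((hFHc.norm.mul huHc.norm).aestronglyMeasurable measurableSet_Ici)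
      rw [ae_restrict_iff' measurableSet_Ici]
      refine ae_of_all _ fun z hz => ?_
      have h1 := mul_le_mul_of_nonneg_left (hSH z hz) (norm_nonneg (FH z))
      have h2 := norm_nonneg (FH z); have h3 := norm_nonneg (uH z)
      simp only [Real.norm_eq_abs, Pi.mul_apply]
      rw [abs_of_nonneg (by positivity), abs_of_nonneg (by positivity)]
      linarith only [h1]
    calc (∫ z in Ici (0:ℝ), ‖FH z‖ * ‖uH z‖) ≤ ∫ z in Ici (0:ℝ), SH * ‖FH z‖ := by
          apply setIntegral_mono_on hint (hFHi.const_mul SH) measurableSet_Ici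
          intro z hz
          have h1 := mul_le_mul_of_nonneg_left (hSH z hz) (norm_nonneg (FH z))
          linarith only [h1]
      _ = SH * NH := by rw [hNHdef]; exact integral_const_mul _ _
  have hmax2 : E ≤ C₂ * (Sp * Np + ρ ^ 2 * (Sm * Nm) + SH * NH) := by
    refine le_trans hmax (mul_le_mul_of_nonneg_left ?_ hC₂.le)
    have h2 : ρ ^ 2 * (∫ z in Ici (0:ℝ), ‖Fm z‖ * ‖um z‖) ≤ ρ ^ 2 * (Sm * Nm) :=
      mul_le_mul_of_nonneg_left hbm (sq_nonneg ρ)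
    linarith only [hbp, hbH, h2]
  -- weighted sup
  set T := max SH (max Sp (ρ * Sm)) with hTdef
  clear_value T
  have hTSH : SH ≤ T := hTdef ▸ le_max_left _ _
  have hTSp : Sp ≤ T := hTdef ▸ le_trans (le_max_left _ _) (le_max_right _ _)
  have hTSm : ρ * Sm ≤ T := hTdef ▸ le_trans (le_max_right _ _) (le_max_right _ _)
  have hT0 : 0 ≤ T := le_trans hSH0 hTSH
  have hTN0 : 0 ≤ T * N := mul_nonneg hT0 hN0
  have hEub : E ≤ C₂ * (T * N) := by
    refine le_trans hmax2 (mul_le_mul_of_nonneg_left ?_ hC₂.le)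
    have h1 : Sp * Np ≤ T * Np := mul_le_mul_of_nonneg_right hTSp hNp0
    have h2 : SH * NH ≤ T * NH := mul_le_mul_of_nonneg_right hTSH hNH0
    have h3 : ρ ^ 2 * (Sm * Nm) ≤ T * Nm := by
      have hρNm : ρ * Nm ≤ Nm := by
        have := mul_nonneg (sub_nonneg.2 hρ1) hNm0
        linarith only [this]
      have he : ρ ^ 2 * (Sm * Nm) = (ρ * Sm) * (ρ * Nm) := by ring
      rw [he]
      exact mul_le_mul hTSm hρNm (by positivity) hT0
    have hTN : T * Np + T * Nm + T * NH = T * N := by rw [hNdef]; ring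
    linarith only [h1, h2, h3, hTN]
  -- the three block inequalities
  have hA : SH ^ 2 ≤ (1 + 2 * C₁) * (ρ⁻¹ * E) + 2 * (T * N) := by
    have h1 : 2 * (C₁ * ρ) * IH = 2 * C₁ * (ρ⁻¹ * (ρ ^ 2 * IH)) := by
      have hne : ρ ≠ 0 := ne_of_gt hρ0
      field_simp
    have h2 : ρ⁻¹ * (ρ ^ 2 * IH) ≤ ρ⁻¹ * E := mul_le_mul_of_nonneg_left hcIH hρinv0.le
    have h5 : ‖uH 0‖ ^ 2 ≤ ρ⁻¹ * E := le_trans hcuH0 hEρ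
    have h6 : 2 * C₁ * (ρ⁻¹ * (ρ ^ 2 * IH)) ≤ 2 * C₁ * (ρ⁻¹ * E) :=
      mul_le_mul_of_nonneg_left h2 (by positivity)
    have h4 : 2 * SH * NH ≤ 2 * (T * N) := by
      have := mul_le_mul hTSH hNH_le hNH0 hT0
      linarith only [this]
    calc SH ^ 2 ≤ ‖uH 0‖ ^ 2 + 2 * (C₁ * ρ) * IH + 2 * SH * NH := hSH2
      _ = ‖uH 0‖ ^ 2 + 2 * C₁ * (ρ⁻¹ * (ρ ^ 2 * IH)) + 2 * SH * NH := by rw [h1]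
      _ ≤ ρ⁻¹ * E + 2 * C₁ * (ρ⁻¹ * E) + 2 * (T * N) := by linarith only [h4, h5, h6]
      _ = (1 + 2 * C₁) * (ρ⁻¹ * E) + 2 * (T * N) := by ring
  have hB : Sp ^ 2 ≤ (1 + 2 * C₁) * (ρ⁻¹ * E) + 2 * (T * N) := by
    have h5 : ‖up 0‖ ^ 2 ≤ ρ⁻¹ * E := le_trans hcup0 hEρ
    have h2 : Ip ≤ ρ⁻¹ * E := le_trans hcIp hEρ
    have h6 : 2 * C₁ * Ip ≤ 2 * C₁ * (ρ⁻¹ * E) := mul_le_mul_of_nonneg_left h2 (by positivity)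
    have h4 : 2 * Sp * Np ≤ 2 * (T * N) := by
      have := mul_le_mul hTSp hNp_le hNp0 hT0
      linarith only [this]
    calc Sp ^ 2 ≤ ‖up 0‖ ^ 2 + 2 * C₁ * Ip + 2 * Sp * Np := hSp2
      _ ≤ ρ⁻¹ * E + 2 * C₁ * (ρ⁻¹ * E) + 2 * (T * N) := by linarith only [h4, h5, h6]
      _ = (1 + 2 * C₁) * (ρ⁻¹ * E) + 2 * (T * N) := by ring
  have hCm' : (ρ * Sm) ^ 2 ≤ (1 + 2 * C₁) * E + 2 * (T * N) := by
    have h0 : ρ ^ 2 * (Sm ^ 2) ≤ ρ ^ 2 * (‖um 0‖ ^ 2 + 2 * C₁ * Im + 2 * Sm * Nm) :=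
      mul_le_mul_of_nonneg_left hSm2 (sq_nonneg ρ)
    have h6 : 2 * C₁ * (ρ ^ 2 * Im) ≤ 2 * C₁ * E := mul_le_mul_of_nonneg_left hcIm (by positivity)
    have h4 : (ρ * Sm) * (ρ * Nm) ≤ T * N := by
      have hρNm : ρ * Nm ≤ N := by
        have := mul_nonneg (sub_nonneg.2 hρ1) hNm0
        linarith only [this, hNm_le]
      exact mul_le_mul hTSm hρNm (by positivity) hT0
    have hexp : ρ ^ 2 * (‖um 0‖ ^ 2 + 2 * C₁ * Im + 2 * Sm * Nm)
        = ρ ^ 2 * ‖um 0‖ ^ 2 + 2 * C₁ * (ρ ^ 2 * Im) + 2 * ((ρ * Sm) * (ρ * Nm)) := by ring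
    have hsq : (ρ * Sm) ^ 2 = ρ ^ 2 * Sm ^ 2 := by ring
    rw [hsq]
    rw [hexp] at h0
    calc ρ ^ 2 * Sm ^ 2
        ≤ ρ ^ 2 * ‖um 0‖ ^ 2 + 2 * C₁ * (ρ ^ 2 * Im) + 2 * ((ρ * Sm) * (ρ * Nm)) := h0
      _ ≤ E + 2 * C₁ * E + 2 * (T * N) := by linarith only [hcum0, h6, h4]
      _ = (1 + 2 * C₁) * E + 2 * (T * N) := by ring
  have hCm : (ρ * Sm) ^ 2 ≤ (1 + 2 * C₁) * (ρ⁻¹ * E) + 2 * (T * N) := by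
    refine le_trans hCm' ?_
    have h := mul_le_mul_of_nonneg_left hEρ (by positivity : (0:ℝ) ≤ 1 + 2 * C₁)
    linarith only [h]
  have hT2 : T ^ 2 ≤ (1 + 2 * C₁) * (ρ⁻¹ * E) + 2 * (T * N) := by
    have hcases : T = SH ∨ T = Sp ∨ T = ρ * Sm := by
      rw [hTdef]
      rcases max_cases SH (max Sp (ρ * Sm)) with ⟨h1, _⟩ | ⟨h1, _⟩
      · exact Or.inl h1
      · rcases max_cases Sp (ρ * Sm) with ⟨h2, _⟩ | ⟨h2, _⟩
        · exact Or.inr (Or.inl (h1.trans h2))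
        · exact Or.inr (Or.inr (h1.trans h2))
    rcases hcases with h | h | h
    · calc T ^ 2 = SH ^ 2 := by rw [h]
        _ ≤ _ := hA
    · calc T ^ 2 = Sp ^ 2 := by rw [h]
        _ ≤ _ := hB
    · calc T ^ 2 = (ρ * Sm) ^ 2 := by rw [h]
        _ ≤ _ := hCm
  have hTK : T ≤ K * (ρ⁻¹ * N) := by
    have h1 : T ^ 2 ≤ K * (ρ⁻¹ * N) * T := by
      have h2 : (1 + 2 * C₁) * (ρ⁻¹ * E) ≤ (1 + 2 * C₁) * (ρ⁻¹ * (C₂ * (T * N))) :=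
        mul_le_mul_of_nonneg_left (mul_le_mul_of_nonneg_left hEub hρinv0.le) (by positivity)
      have h3 : 2 * (T * N) ≤ 2 * (ρ⁻¹ * (T * N)) := by
        have := mul_le_mul_of_nonneg_right hρinv hTN0
        linarith only [this]
      have h4 : (1 + 2 * C₁) * (ρ⁻¹ * (C₂ * (T * N))) + 2 * (ρ⁻¹ * (T * N))
          = K * (ρ⁻¹ * N) * T := by rw [hK]; ring
      linarith only [hT2, h2, h3, h4]
    rcases eq_or_lt_of_le hT0 with h | h
    · rw [← h]
      exact mul_nonneg hK0.le (mul_nonneg hρinv0.le hN0)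
    · nlinarith only [h1, h]
  have hEN : E ≤ C₂ * K * (ρ⁻¹ * N ^ 2) := by
    calc E ≤ C₂ * (T * N) := hEub
      _ ≤ C₂ * ((K * (ρ⁻¹ * N)) * N) :=
        mul_le_mul_of_nonneg_left (mul_le_mul_of_nonneg_right hTK hN0) hC₂.le
      _ = C₂ * K * (ρ⁻¹ * N ^ 2) := by ring
  -- Part 1
  have part1 : ∀ x ∈ Ici (0:ℝ),
      ρ ^ 2 * (IH + Ip + Im + ‖uH x‖ ^ 2 + ‖up x‖ ^ 2 + ‖um x‖ ^ 2)
        ≤ C * ρ⁻¹ * N ^ 2 := by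
    intro x hx
    have e1 : ρ ^ 2 * IH ≤ C₂ * K * (ρ⁻¹ * N ^ 2) := le_trans hcIH hEN
    have e2 : ρ ^ 2 * Ip ≤ C₂ * K * (ρ⁻¹ * N ^ 2) := by
      have h1 : ρ ^ 2 * Ip ≤ Ip := by
        have := mul_nonneg hρsq1 hIp0
        linarith only [this]
      exact le_trans h1 (le_trans hcIp hEN)
    have e3 : ρ ^ 2 * Im ≤ C₂ * K * (ρ⁻¹ * N ^ 2) := le_trans hcIm hEN
    have eH : ρ * ‖uH x‖ ≤ K * N := by
      have h1 : ‖uH x‖ ≤ K * (ρ⁻¹ * N) := le_trans (hSH x hx) (le_trans hTSH hTK)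
      calc ρ * ‖uH x‖ ≤ ρ * (K * (ρ⁻¹ * N)) := mul_le_mul_of_nonneg_left h1 hρ0.le
        _ = (ρ * ρ⁻¹) * (K * N) := by ring
        _ = K * N := by rw [mul_inv_cancel₀ (ne_of_gt hρ0), one_mul]
    have e4 : ρ ^ 2 * ‖uH x‖ ^ 2 ≤ K ^ 2 * (ρ⁻¹ * N ^ 2) := by
      have h1 : (ρ * ‖uH x‖) ^ 2 ≤ (K * N) ^ 2 :=
        pow_le_pow_left₀ (mul_nonneg hρ0.le (norm_nonneg _)) eH 2
      have h2 := mul_le_mul_of_nonneg_right hρinv (sq_nonneg (K * N))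
      nlinarith only [h1, h2]
    have ep' : ρ * ‖up x‖ ≤ K * N := by
      have h1 : ‖up x‖ ≤ K * (ρ⁻¹ * N) := le_trans (hSp x hx) (le_trans hTSp hTK)
      calc ρ * ‖up x‖ ≤ ρ * (K * (ρ⁻¹ * N)) := mul_le_mul_of_nonneg_left h1 hρ0.le
        _ = (ρ * ρ⁻¹) * (K * N) := by ring
        _ = K * N := by rw [mul_inv_cancel₀ (ne_of_gt hρ0), one_mul]
    have e5 : ρ ^ 2 * ‖up x‖ ^ 2 ≤ K ^ 2 * (ρ⁻¹ * N ^ 2) := by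
      have h1 : (ρ * ‖up x‖) ^ 2 ≤ (K * N) ^ 2 :=
        pow_le_pow_left₀ (mul_nonneg hρ0.le (norm_nonneg _)) ep' 2
      have h2 := mul_le_mul_of_nonneg_right hρinv (sq_nonneg (K * N))
      nlinarith only [h1, h2]
    have e6 : ρ ^ 2 * ‖um x‖ ^ 2 ≤ ((1 + 2 * C₁) * C₂ * K + 2 * K) * (ρ⁻¹ * N ^ 2) := by
      have h1 : ρ * ‖um x‖ ≤ ρ * Sm := mul_le_mul_of_nonneg_left (hSm x hx) hρ0.le
      have h2 : ρ ^ 2 * ‖um x‖ ^ 2 ≤ (ρ * Sm) ^ 2 := by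
        have := pow_le_pow_left₀ (mul_nonneg hρ0.le (norm_nonneg _)) h1 2
        nlinarith only [this]
      have h4 : (1 + 2 * C₁) * E ≤ (1 + 2 * C₁) * (C₂ * K * (ρ⁻¹ * N ^ 2)) :=
        mul_le_mul_of_nonneg_left hEN (by positivity)
      have h5 : T * N ≤ K * (ρ⁻¹ * N ^ 2) := by
        have h := mul_le_mul_of_nonneg_right hTK hN0
        calc T * N ≤ K * (ρ⁻¹ * N) * N := h
          _ = K * (ρ⁻¹ * N ^ 2) := by ring
      have h6 : (1 + 2 * C₁) * (C₂ * K * (ρ⁻¹ * N ^ 2)) + 2 * (K * (ρ⁻¹ * N ^ 2))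
          = ((1 + 2 * C₁) * C₂ * K + 2 * K) * (ρ⁻¹ * N ^ 2) := by ring
      linarith only [h2, hCm', h4, h5, h6]
    rw [hC]
    linarith only [e1, e2, e3, e4, e5, e6]
  constructor
  · exact part1
  -- Part 2
  · have hsqC : 0 ≤ Real.sqrt C := Real.sqrt_nonneg _
    set P3 := ρ ^ (-(3 / 2 : ℝ)) with hP3def
    clear_value P3
    have hP30 : 0 < P3 := hP3def ▸ Real.rpow_pos_of_pos hρ0 _
    have hP3sq : P3 ^ 2 = (ρ ^ 3)⁻¹ := by
      rw [hP3def, ← Real.rpow_natCast (ρ ^ (-(3 / 2 : ℝ))) 2, ← Real.rpow_mul hρ0.le]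
      norm_num
    set B := Real.sqrt C * P3 * N with hBdef
    clear_value B
    have hB0 : 0 ≤ B := hBdef ▸ mul_nonneg (mul_nonneg hsqC hP30.le) hN0
    have hB2 : B ^ 2 = C * ((ρ ^ 3)⁻¹ * N ^ 2) := by
      rw [hBdef, mul_pow, mul_pow, hP3sq, Real.sq_sqrt hC0.le]
      ring
    have hdiv : ∀ A : ℝ, ρ ^ 2 * A ≤ C * ρ⁻¹ * N ^ 2 → A ≤ B ^ 2 := by
      intro A h
      rw [hB2]
      have h2 := mul_le_mul_of_nonneg_left h (le_of_lt (inv_pos.2 (pow_pos hρ0 2)))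
      have hne : ρ ≠ 0 := ne_of_gt hρ0
      calc A = (ρ ^ 2)⁻¹ * (ρ ^ 2 * A) := by
            rw [← mul_assoc, inv_mul_cancel₀ (pow_ne_zero 2 hne), one_mul]
        _ ≤ (ρ ^ 2)⁻¹ * (C * ρ⁻¹ * N ^ 2) := h2
        _ = C * ((ρ ^ 3)⁻¹ * N ^ 2) := by
            rw [show (ρ ^ 3)⁻¹ = (ρ ^ 2)⁻¹ * ρ⁻¹ by rw [pow_succ, mul_inv]]
            ring
    have hptw : ∀ x ∈ Ici (0:ℝ), ‖(uH x, up x, um x)‖ ≤ B := by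
      intro x hx
      have h := part1 x hx
      have q1 : 0 ≤ ρ ^ 2 * IH := mul_nonneg (sq_nonneg ρ) hIH0
      have q2 : 0 ≤ ρ ^ 2 * Ip := mul_nonneg (sq_nonneg ρ) hIp0
      have q3 : 0 ≤ ρ ^ 2 * Im := mul_nonneg (sq_nonneg ρ) hIm0
      have q4 : 0 ≤ ρ ^ 2 * ‖uH x‖ ^ 2 := mul_nonneg (sq_nonneg ρ) (sq_nonneg _)
      have q5 : 0 ≤ ρ ^ 2 * ‖up x‖ ^ 2 := mul_nonneg (sq_nonneg ρ) (sq_nonneg _)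
      have q6 : 0 ≤ ρ ^ 2 * ‖um x‖ ^ 2 := mul_nonneg (sq_nonneg ρ) (sq_nonneg _)
      have hsH : ρ ^ 2 * ‖uH x‖ ^ 2 ≤ C * ρ⁻¹ * N ^ 2 := by
        linarith only [h, q1, q2, q3, q5, q6]
      have hsp : ρ ^ 2 * ‖up x‖ ^ 2 ≤ C * ρ⁻¹ * N ^ 2 := by
        linarith only [h, q1, q2, q3, q4, q6]
      have hsm : ρ ^ 2 * ‖um x‖ ^ 2 ≤ C * ρ⁻¹ * N ^ 2 := by
        linarith only [h, q1, q2, q3, q4, q5]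
      have b1 : ‖uH x‖ ≤ B := by nlinarith only [hdiv _ hsH, norm_nonneg (uH x), hB0]
      have b2 : ‖up x‖ ≤ B := by nlinarith only [hdiv _ hsp, norm_nonneg (up x), hB0]
      have b3 : ‖um x‖ ≤ B := by nlinarith only [hdiv _ hsm, norm_nonneg (um x), hB0]
      have hnorm : ‖(uH x, up x, um x)‖ = max ‖uH x‖ (max ‖up x‖ ‖um x‖) := by
        simp [Prod.norm_def]
      rw [hnorm]
      exact max_le b1 (max_le b2 b3)
    have hsum_int : IntegrableOn (fun x : ℝ => ‖uH x‖ ^ 2 + ‖up x‖ ^ 2 + ‖um x‖ ^ 2)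
        (Ici 0) := (hu2H.add hu2p).add hu2m
    have hsum_le : IH + Ip + Im ≤ B ^ 2 := by
      apply hdiv
      have h := part1 0 self_mem_Ici
      have q4 : 0 ≤ ρ ^ 2 * ‖uH 0‖ ^ 2 := mul_nonneg (sq_nonneg ρ) (sq_nonneg _)
      have q5 : 0 ≤ ρ ^ 2 * ‖up 0‖ ^ 2 := mul_nonneg (sq_nonneg ρ) (sq_nonneg _)
      have q6 : 0 ≤ ρ ^ 2 * ‖um 0‖ ^ 2 := mul_nonneg (sq_nonneg ρ) (sq_nonneg _)
      linarith only [h, q4, q5, q6]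
    apply lp_bound
    · rw [ae_restrict_iff' measurableSet_Ici]
      exact ae_of_all _ hptw
    · have hpt2 : ∀ x : ℝ, (‖(uH x, up x, um x)‖₊ : ℝ≥0∞) ^ (2:ℝ)
          = ENNReal.ofReal (‖(uH x, up x, um x)‖ ^ 2) := by
        intro x
        rw [← enorm_eq_nnnorm, ← ofReal_norm,
          ENNReal.ofReal_rpow_of_nonneg (norm_nonneg _) (by norm_num : (0:ℝ) ≤ 2)]
        rw [show ((2:ℝ)) = ((2:ℕ):ℝ) by norm_num, Real.rpow_natCast]
      calc ∫⁻ x in Ici (0:ℝ), (‖(uH x, up x, um x)‖₊ : ℝ≥0∞) ^ (2:ℝ)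
          = ∫⁻ x in Ici (0:ℝ), ENNReal.ofReal (‖(uH x, up x, um x)‖ ^ 2) :=
            lintegral_congr fun x => hpt2 x
        _ ≤ ∫⁻ x in Ici (0:ℝ), ENNReal.ofReal (‖uH x‖ ^ 2 + ‖up x‖ ^ 2 + ‖um x‖ ^ 2) := by
            refine lintegral_mono fun x => ENNReal.ofReal_le_ofReal ?_
            have hnorm : ‖(uH x, up x, um x)‖ = max ‖uH x‖ (max ‖up x‖ ‖um x‖) := by
              simp [Prod.norm_def]
            rw [hnorm]
            rcases max_cases ‖uH x‖ (max ‖up x‖ ‖um x‖) with ⟨h1, _⟩ | ⟨h1, _⟩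
            · rw [h1]; linarith only [sq_nonneg ‖up x‖, sq_nonneg ‖um x‖]
            · rw [h1]
              rcases max_cases ‖up x‖ ‖um x‖ with ⟨h2, _⟩ | ⟨h2, _⟩
              · rw [h2]; linarith only [sq_nonneg ‖uH x‖, sq_nonneg ‖um x‖]
              · rw [h2]; linarith only [sq_nonneg ‖uH x‖, sq_nonneg ‖up x‖]
        _ = ENNReal.ofReal (∫ x in Ici (0:ℝ), (‖uH x‖ ^ 2 + ‖up x‖ ^ 2 + ‖um x‖ ^ 2)) :=
            (ofReal_integral_eq_lintegral_ofReal hsum_int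
              (ae_of_all _ fun x => by positivity)).symm
        _ ≤ ENNReal.ofReal (B ^ 2) := by
            apply ENNReal.ofReal_le_ofReal
            have hsplit : (∫ x in Ici (0:ℝ), (‖uH x‖ ^ 2 + ‖up x‖ ^ 2 + ‖um x‖ ^ 2))
                = IH + Ip + Im := by
              have e1 := integral_add (μ := volume.restrict (Ici 0)) hu2H hu2p
              have e2 := integral_add (μ := volume.restrict (Ici 0)) (hu2H.add hu2p) hu2m
              simp only [Pi.add_apply] at e1 e2
              rw [hIHdef, hIpdef, hImdef, e2, e1]
            rw [hsplit]
            exact hsum_le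
        _ = ENNReal.ofReal B ^ (2:ℝ) := by
            rw [ENNReal.ofReal_rpow_of_nonneg hB0 (by norm_num : (0:ℝ) ≤ 2)]
            rw [show ((2:ℝ)) = ((2:ℕ):ℝ) by norm_num, Real.rpow_natCast]
end

section
/- Let n₊, n₋ ≥ 1, θ > 0 and c ≥ 0. Let Q₊ : [0,∞) → Mat(n₊,ℂ) and Q₋ : [0,∞) → Mat(n₋,ℂ) be continuous, let F₊, F₋ be continuous and integrable, and let U₊ : [0,∞) → ℂ^{n₊}, U₋ : [0,∞) → ℂ^{n₋} be bounded, square-integrable C¹ solutions of U₊' = Q₊U₊ + F₊ and U₋' = Q₋U₋ + F₋ with U₊(z), U₋(z) → 0 as z → ∞. Suppose there are Hermitian matrices S₊, S₋ with ⟨S₊u,u⟩ ≥ |u|², Re(S₊Q₊(z)) ≥ θ·Id for all z, and ⟨S₋u,u⟩ ≤ −|u|², Re(S₋Q₋(z)) ≥ θ·Id for all z, and that the boundary values satisfy |U₋(0)| ≤ c |U₊(0)|. Then there is a constant C > 0 depending only on ‖S₊‖, ‖S₋‖ and c (not on θ) such that sup_{z≥0}(|U₊(z)|² + |U₋(z)|²)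 + θ ∫₀^∞ (|U₊|² + |U₋|²) ≤ C ( ∫₀^∞ |F₊| + ∫₀^∞ |F₋| )². -/
open MeasureTheory Set Matrix

set_option maxHeartbeats 2000000

lemma energy_core {n : ℕ} (θ K : ℝ)
    (Q : ℝ → Matrix (Fin n) (Fin n) ℂ)
    (F U : ℝ → EuclideanSpace ℂ (Fin n))
    (S : Matrix (Fin n) (Fin n) ℂ)
    (hQ : ContinuousOn Q (Ici 0))
    (hF : ContinuousOn F (Ici 0))
    (hU : ∀ z ∈ Ici (0:ℝ), HasDerivWithinAt U
        (Matrix.toEuclideanLin (Q z) (U z) + F z) (Ici 0) z)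
    (hS : S.IsHermitian)
    (hSQ : ∀ z ∈ Ici (0:ℝ), ∀ u : EuclideanSpace ℂ (Fin n),
        θ * ‖u‖ ^ 2 ≤
          (inner (𝕜 := ℂ) (Matrix.toEuclideanLin
            ((2⁻¹ : ℂ) • (S * Q z + (S * Q z)ᴴ)) u) u).re)
    (hSK : ‖Matrix.toEuclideanCLM (𝕜 := ℂ) S‖ ≤ K)
    {a b : ℝ} (ha : (0:ℝ) ≤ a) (hab : a ≤ b) :
    2*θ*(∫ x in a..b, ‖U x‖^2) - 2*K*(∫ x in a..b, ‖F x‖*‖U x‖)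
      ≤ (inner (𝕜 := ℂ) (Matrix.toEuclideanLin S (U b)) (U b)).re
        - (inner (𝕜 := ℂ) (Matrix.toEuclideanLin S (U a)) (U a)).re := by
  set T := Matrix.toEuclideanCLM (𝕜 := ℂ) (n := Fin n)
  have key0 : ∀ (M : Matrix (Fin n) (Fin n) ℂ) (x : EuclideanSpace ℂ (Fin n)),
      Matrix.toEuclideanLin M x = T M x := fun M x => rfl
  have hK0 : (0:ℝ) ≤ K := le_trans (norm_nonneg _) hSK
  -- U continuous on Ici 0
  have hUc : ContinuousOn U (Ici 0) := fun z hz => (hU z hz).continuousWithinAt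
  -- derivative function
  set U' : ℝ → EuclideanSpace ℂ (Fin n) :=
    fun z => Matrix.toEuclideanLin (Q z) (U z) + F z with hU'def
  have hU'c : ContinuousOn U' (Ici 0) := by
    have h1 : ContinuousOn
        (fun z => (Q z) *ᵥ ((WithLp.equiv 2 (Fin n → ℂ)) (U z))) (Ici 0) :=
      (continuous_fst.matrix_mulVec continuous_snd).comp_continuousOn
        (f := fun z => (Q z, (WithLp.equiv 2 (Fin n → ℂ)) (U z)))
        (hQ.prodMk ((PiLp.continuous_ofLp (p := 2) (β := fun _ : Fin n => ℂ)).comp_continuousOn hUc))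
    have h2 : ContinuousOn (fun z => Matrix.toEuclideanLin (Q z) (U z)) (Ici 0) := by
      refine ((PiLp.continuous_toLp (p := 2)
        (β := fun _ : Fin n => ℂ)).comp_continuousOn h1).congr fun z hz => ?_
      rw [Matrix.toEuclideanLin_apply]
      rfl
    exact h2.add hF
  -- self-adjointness of T S
  have hsa : star (T S) = T S := by
    have hstar : star S = S := by
      simpa [Matrix.star_eq_conjTranspose] using hS.eq
    rw [← map_star, hstar]
  -- the effective coercivity hypothesis
  have hSQ' : ∀ z ∈ Ici (0:ℝ), ∀ u : EuclideanSpace ℂ (Fin n),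
      θ * ‖u‖ ^ 2 ≤ (inner (𝕜 := ℂ) (T (S * Q z) u) u).re := by
    intro z hz u
    have h := hSQ z hz u
    rw [_root_.map_smul, map_add, LinearMap.smul_apply, LinearMap.add_apply,
      Matrix.toEuclideanLin_conjTranspose_eq_adjoint,
      inner_smul_left, inner_add_left, LinearMap.adjoint_inner_left] at h
    have hre : ∀ w : ℂ, ((starRingEnd ℂ) (2⁻¹:ℂ) * (w + (starRingEnd ℂ) w)).re = w.re := by
      intro w
      simp [Complex.mul_re, Complex.add_re, Complex.add_im]
      ring
    rw [← inner_conj_symm u (Matrix.toEuclideanLin (S * Q z) u), hre] at h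
    rw [key0] at h
    exact h
  -- energy and its derivative
  set E : ℝ → ℝ := fun z => (inner (𝕜 := ℂ) (T S (U z)) (U z)).re with hEdef
  set D : ℝ → ℝ := fun z =>
    ((inner (𝕜 := ℂ) (T S (U z)) (U' z) + inner (𝕜 := ℂ) (T S (U' z)) (U z)) : ℂ).re
    with hDdef
  have hE : ∀ z ∈ Ici (0:ℝ), HasDerivWithinAt E (D z) (Ici 0) z := by
    intro z hz
    have h1 : HasDerivWithinAt (fun w => T S (U w)) (T S (U' z)) (Ici 0) z := by
      have h0 := (((T S).restrictScalars ℝ).hasFDerivAt (x := U z)).comp_hasDerivWithinAt z (hU z hz)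
      exact h0
    have h2 := h1.inner ℂ (hU z hz)
    exact (Complex.reCLM.hasFDerivAt).comp_hasDerivWithinAt z h2
  -- continuity of D
  have hDc : ContinuousOn D (Ici 0) := by
    have c1 : ContinuousOn (fun z => T S (U z)) (Ici 0) :=
      (T S).continuous.comp_continuousOn hUc
    have c2 : ContinuousOn (fun z => T S (U' z)) (Ici 0) :=
      (T S).continuous.comp_continuousOn hU'c
    exact Complex.continuous_re.comp_continuousOn ((c1.inner hU'c).add (c2.inner hUc))
  -- pointwise coercivity bound on D
  have esa : ∀ v w : EuclideanSpace ℂ (Fin n),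
      (inner (𝕜 := ℂ) (T S v) w).re = (inner (𝕜 := ℂ) (T S w) v).re := by
    intro v w
    conv_lhs => rw [← hsa]
    rw [ContinuousLinearMap.star_eq_adjoint, ContinuousLinearMap.adjoint_inner_left]
    simpa using inner_re_symm (𝕜 := ℂ) v (T S w)
  have hPt : ∀ x ∈ Ici (0:ℝ),
      2*θ*‖U x‖^2 - 2*K*(‖F x‖*‖U x‖) ≤ D x := by
    intro x hx
    have e2 : T S (Matrix.toEuclideanLin (Q x) (U x)) = T (S * Q x) (U x) := by
      rw [key0, ← ContinuousLinearMap.mul_apply, ← _root_.map_mul]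
    have hDx : D x
        = (inner (𝕜 := ℂ) (T S (U x)) (Matrix.toEuclideanLin (Q x) (U x))).re
        + (inner (𝕜 := ℂ) (T S (U x)) (F x)).re
        + ((inner (𝕜 := ℂ) (T S (Matrix.toEuclideanLin (Q x) (U x))) (U x)).re
        + (inner (𝕜 := ℂ) (T S (F x)) (U x)).re) := by
      simp only [hDdef, hU'def, inner_add_right, inner_add_left, map_add, Complex.add_re]
      try ring
    have h1 : (inner (𝕜 := ℂ) (T S (U x)) (Matrix.toEuclideanLin (Q x) (U x))).re
        = (inner (𝕜 := ℂ) (T (S * Q x) (U x)) (U x)).re := by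
      rw [esa, e2]
    have h2 : (inner (𝕜 := ℂ) (T S (U x)) (F x)).re
        = (inner (𝕜 := ℂ) (T S (F x)) (U x)).re := esa _ _
    have hcoer := hSQ' x hx (U x)
    have hb : -(K * ‖F x‖ * ‖U x‖) ≤ (inner (𝕜 := ℂ) (T S (F x)) (U x)).re := by
      have n1 : ‖(inner (𝕜 := ℂ) (T S (F x)) (U x) : ℂ)‖ ≤ K * ‖F x‖ * ‖U x‖ := by
        refine le_trans (norm_inner_le_norm _ _) ?_
        have : ‖T S (F x)‖ ≤ K * ‖F x‖ :=
          le_trans ((T S).le_opNorm (F x))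
            (mul_le_mul_of_nonneg_right hSK (norm_nonneg _))
        exact mul_le_mul_of_nonneg_right this (norm_nonneg _)
      have n2 : |(inner (𝕜 := ℂ) (T S (F x)) (U x) : ℂ).re|
          ≤ ‖(inner (𝕜 := ℂ) (T S (F x)) (U x) : ℂ)‖ := by
        exact Complex.abs_re_le_norm _
      have := neg_abs_le (inner (𝕜 := ℂ) (T S (F x)) (U x) : ℂ).re
      linarith
    rw [hDx, h1, h2, e2]
    nlinarith [norm_nonneg (U x), norm_nonneg (F x)]
  -- FTC and comparison
  have hIcc : Icc a b ⊆ Ici (0:ℝ) := fun x hx => le_trans ha hx.1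
  have huIcc : uIcc a b = Icc a b := uIcc_of_le hab
  have hDint : IntervalIntegrable D volume a b := by
    apply ContinuousOn.intervalIntegrable
    rw [huIcc]; exact hDc.mono hIcc
  have hU2int : IntervalIntegrable (fun x => ‖U x‖^2) volume a b := by
    apply ContinuousOn.intervalIntegrable
    rw [huIcc]; exact ((hUc.mono hIcc).norm.pow 2)
  have hFUint : IntervalIntegrable (fun x => ‖F x‖*‖U x‖) volume a b := by
    apply ContinuousOn.intervalIntegrable
    rw [huIcc]; exact ((hF.mono hIcc).norm.mul (hUc.mono hIcc).norm)
  have hGint : IntervalIntegrable (fun x => 2*θ*‖U x‖^2 - 2*K*(‖F x‖*‖U x‖)) volume a b :=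
    (hU2int.const_mul (2*θ)).sub (hFUint.const_mul (2*K))
  have hFTC : ∫ x in a..b, D x = E b - E a := by
    refine intervalIntegral.integral_eq_sub_of_hasDeriv_right_of_le hab
      ?_ (fun x hx => (hE x (hIcc ⟨le_of_lt hx.1, le_of_lt hx.2⟩)).mono ?_) hDint
    · refine (Complex.continuous_re.comp_continuousOn
        (((T S).continuous.comp_continuousOn hUc).inner hUc)).mono hIcc
    · exact fun y hy => le_trans (le_trans ha (le_of_lt hx.1)) (le_of_lt hy)
  have hmono : (∫ x in a..b, (2*θ*‖U x‖^2 - 2*K*(‖F x‖*‖U x‖)))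
      ≤ ∫ x in a..b, D x :=
    intervalIntegral.integral_mono_on hab hGint hDint (fun x hx => hPt x (hIcc hx))
  have hsplit : (∫ x in a..b, (2*θ*‖U x‖^2 - 2*K*(‖F x‖*‖U x‖)))
      = 2*θ*(∫ x in a..b, ‖U x‖^2) - 2*K*(∫ x in a..b, ‖F x‖*‖U x‖) := by
    rw [intervalIntegral.integral_sub (hU2int.const_mul (2*θ)) (hFUint.const_mul (2*K)),
      intervalIntegral.integral_const_mul, intervalIntegral.integral_const_mul]
  rw [key0, key0]
  calc 2*θ*(∫ x in a..b, ‖U x‖^2) - 2*K*(∫ x in a..b, ‖F x‖*‖U x‖)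
      = ∫ x in a..b, (2*θ*‖U x‖^2 - 2*K*(‖F x‖*‖U x‖)) := hsplit.symm
    _ ≤ ∫ x in a..b, D x := hmono
    _ = E b - E a := hFTC


/-- Combination of the two halves of the symmetrizer energy lemma (Lemma 4.2) with the
Evans-condition boundary control: for coupled incoming (positive symmetrizer `S₊`) and
outgoing (negative symmetrizer `S₋`) blocks with boundary coupling `|U₋(0)| ≤ c|U₊(0)|`,
`sup (|U₊|² + |U₋|²) + θ ∫ (|U₊|² + |U₋|²) ≤ C (∫|F₊| + ∫|F₋|)²`,
with `C` depending only on `‖S₊‖, ‖S₋‖, c`. -/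
theorem stmt_11 (Kp Km c : ℝ) (hc : 0 ≤ c) :
    ∃ C : ℝ, 0 < C ∧
      ∀ (np nm : ℕ), 1 ≤ np → 1 ≤ nm →
      ∀ (θ : ℝ), 0 < θ →
      ∀ (Qp : ℝ → Matrix (Fin np) (Fin np) ℂ)
        (Qm : ℝ → Matrix (Fin nm) (Fin nm) ℂ)
        (Fp Up : ℝ → EuclideanSpace ℂ (Fin np))
        (Fm Um : ℝ → EuclideanSpace ℂ (Fin nm))
        (Sp : Matrix (Fin np) (Fin np) ℂ)
        (Sm : Matrix (Fin nm) (Fin nm) ℂ),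
        ContinuousOn Qp (Ici 0) → ContinuousOn Qm (Ici 0) →
        ContinuousOn Fp (Ici 0) → ContinuousOn Fm (Ici 0) →
        IntegrableOn (fun z => ‖Fp z‖) (Ici 0) →
        IntegrableOn (fun z => ‖Fm z‖) (Ici 0) →
        (∃ M : ℝ, ∀ z ∈ Ici (0:ℝ), ‖Up z‖ ≤ M ∧ ‖Um z‖ ≤ M) →
        IntegrableOn (fun z => ‖Up z‖ ^ 2) (Ici 0) →
        IntegrableOn (fun z => ‖Um z‖ ^ 2) (Ici 0) →
        (∀ z ∈ Ici (0:ℝ), HasDerivWithinAt Up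
            (Matrix.toEuclideanLin (Qp z) (Up z) + Fp z) (Ici 0) z) →
        (∀ z ∈ Ici (0:ℝ), HasDerivWithinAt Um
            (Matrix.toEuclideanLin (Qm z) (Um z) + Fm z) (Ici 0) z) →
        Filter.Tendsto Up Filter.atTop (nhds 0) →
        Filter.Tendsto Um Filter.atTop (nhds 0) →
        Sp.IsHermitian → Sm.IsHermitian →
        (∀ u : EuclideanSpace ℂ (Fin np),
            ‖u‖ ^ 2 ≤ (inner (𝕜 := ℂ) (Matrix.toEuclideanLin Sp u) u).re) →
        (∀ u : EuclideanSpace ℂ (Fin nm),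
            (inner (𝕜 := ℂ) (Matrix.toEuclideanLin Sm u) u).re ≤ -‖u‖ ^ 2) →
        (∀ z ∈ Ici (0:ℝ), ∀ u : EuclideanSpace ℂ (Fin np),
            θ * ‖u‖ ^ 2 ≤
              (inner (𝕜 := ℂ) (Matrix.toEuclideanLin
                ((2⁻¹ : ℂ) • (Sp * Qp z + (Sp * Qp z)ᴴ)) u) u).re) →
        (∀ z ∈ Ici (0:ℝ), ∀ u : EuclideanSpace ℂ (Fin nm),
            θ * ‖u‖ ^ 2 ≤
              (inner (𝕜 := ℂ) (Matrix.toEuclideanLin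
                ((2⁻¹ : ℂ) • (Sm * Qm z + (Sm * Qm z)ᴴ)) u) u).re) →
        ‖Matrix.toEuclideanCLM (𝕜 := ℂ) Sp‖ ≤ Kp →
        ‖Matrix.toEuclideanCLM (𝕜 := ℂ) Sm‖ ≤ Km →
        ‖Um 0‖ ≤ c * ‖Up 0‖ →
        ∀ z ∈ Ici (0:ℝ),
          ‖Up z‖ ^ 2 + ‖Um z‖ ^ 2
            + θ * ((∫ x in Ici (0:ℝ), ‖Up x‖ ^ 2) + ∫ x in Ici (0:ℝ), ‖Um x‖ ^ 2) ≤
          C * ((∫ x in Ici (0:ℝ), ‖Fp x‖) + ∫ x in Ici (0:ℝ), ‖Fm x‖) ^ 2 := by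
  refine ⟨6*Kp^2 + 12*Km^2*c^2*Kp^2 + 6*Km^2 + 1, by positivity, ?_⟩
  intro np nm hnp hnm θ hθ Qp Qm Fp Up Fm Um Sp Sm hQp hQm hFp hFm hFpInt hFmInt hbdd
    hUp2 hUm2 hUp' hUm' hUp0 hUm0 hSpH hSmH hSpPos hSmNeg hSQp hSQm hKp hKm hbc z hz
  obtain ⟨M, hM⟩ := hbdd
  have key0p : ∀ (A : Matrix (Fin np) (Fin np) ℂ) (x : EuclideanSpace ℂ (Fin np)),
      Matrix.toEuclideanLin A x = Matrix.toEuclideanCLM (𝕜 := ℂ) A x := fun A x => rfl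
  have key0m : ∀ (A : Matrix (Fin nm) (Fin nm) ℂ) (x : EuclideanSpace ℂ (Fin nm)),
      Matrix.toEuclideanLin A x = Matrix.toEuclideanCLM (𝕜 := ℂ) A x := fun A x => rfl
  -- Kp ≥ 1 and Km ≥ 1
  have hKp1 : (1:ℝ) ≤ Kp := by
    obtain ⟨u, hu⟩ : ∃ u : EuclideanSpace ℂ (Fin np), ‖u‖ = 1 :=
      ⟨EuclideanSpace.single ⟨0, hnp⟩ 1, by simp [EuclideanSpace.norm_single]⟩
    have h := hSpPos u
    have hn : ‖(inner (𝕜 := ℂ) (Matrix.toEuclideanLin Sp u) u : ℂ)‖ ≤ Kp := by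
      refine le_trans (norm_inner_le_norm _ _) ?_
      rw [key0p, hu, mul_one]
      refine le_trans ((Matrix.toEuclideanCLM (𝕜 := ℂ) Sp).le_opNorm u) ?_
      rw [hu, mul_one]; exact hKp
    have hre := Complex.abs_re_le_norm (inner (𝕜 := ℂ) (Matrix.toEuclideanLin Sp u) u : ℂ)
    have := le_abs_self (inner (𝕜 := ℂ) (Matrix.toEuclideanLin Sp u) u : ℂ).re
    rw [hu, one_pow] at h; linarith
  have hKm1 : (1:ℝ) ≤ Km := by
    obtain ⟨u, hu⟩ : ∃ u : EuclideanSpace ℂ (Fin nm), ‖u‖ = 1 :=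
      ⟨EuclideanSpace.single ⟨0, hnm⟩ 1, by simp [EuclideanSpace.norm_single]⟩
    have h := hSmNeg u
    have hn : ‖(inner (𝕜 := ℂ) (Matrix.toEuclideanLin Sm u) u : ℂ)‖ ≤ Km := by
      refine le_trans (norm_inner_le_norm _ _) ?_
      rw [key0m, hu, mul_one]
      refine le_trans ((Matrix.toEuclideanCLM (𝕜 := ℂ) Sm).le_opNorm u) ?_
      rw [hu, mul_one]; exact hKm
    have hre := Complex.abs_re_le_norm (inner (𝕜 := ℂ) (Matrix.toEuclideanLin Sm u) u : ℂ)
    have := neg_abs_le (inner (𝕜 := ℂ) (Matrix.toEuclideanLin Sm u) u : ℂ).re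
    rw [hu, one_pow] at h; linarith
  have hUpc : ContinuousOn Up (Ici 0) := fun t ht => (hUp' t ht).continuousWithinAt
  have hUmc : ContinuousOn Um (Ici 0) := fun t ht => (hUm' t ht).continuousWithinAt
  -- suprema
  set mp : ℝ := sSup ((fun t => ‖Up t‖) '' Ici 0) with hmpdef
  set mm : ℝ := sSup ((fun t => ‖Um t‖) '' Ici 0) with hmmdef
  have nep : ((fun t => ‖Up t‖) '' Ici 0).Nonempty := ⟨‖Up 0‖, ⟨0, self_mem_Ici, rfl⟩⟩
  have nem : ((fun t => ‖Um t‖) '' Ici 0).Nonempty := ⟨‖Um 0‖, ⟨0, self_mem_Ici, rfl⟩⟩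
  have bddp : BddAbove ((fun t => ‖Up t‖) '' Ici 0) := by
    refine ⟨M, ?_⟩; rintro r ⟨t, ht, rfl⟩; exact (hM t ht).1
  have bddm : BddAbove ((fun t => ‖Um t‖) '' Ici 0) := by
    refine ⟨M, ?_⟩; rintro r ⟨t, ht, rfl⟩; exact (hM t ht).2
  have hmple : ∀ t ∈ Ici (0:ℝ), ‖Up t‖ ≤ mp := fun t ht => le_csSup bddp ⟨t, ht, rfl⟩
  have hmmle : ∀ t ∈ Ici (0:ℝ), ‖Um t‖ ≤ mm := fun t ht => le_csSup bddm ⟨t, ht, rfl⟩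
  have hmp0 : 0 ≤ mp := le_trans (norm_nonneg _) (hmple 0 self_mem_Ici)
  have hmm0 : 0 ≤ mm := le_trans (norm_nonneg _) (hmmle 0 self_mem_Ici)
  have hmpsup : ∀ B : ℝ, (∀ t ∈ Ici (0:ℝ), ‖Up t‖ ≤ B) → mp ≤ B := by
    intro B hB
    refine csSup_le nep ?_
    rintro r ⟨t, ht, rfl⟩; exact hB t ht
  have hmmsup : ∀ B : ℝ, (∀ t ∈ Ici (0:ℝ), ‖Um t‖ ≤ B) → mm ≤ B := by
    intro B hB
    refine csSup_le nem ?_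
    rintro r ⟨t, ht, rfl⟩; exact hB t ht
  -- integrals of the sources
  set Ip : ℝ := ∫ x in Ici (0:ℝ), ‖Fp x‖ with hIpdef
  set Im : ℝ := ∫ x in Ici (0:ℝ), ‖Fm x‖ with hImdef
  have hIp0 : 0 ≤ Ip := setIntegral_nonneg measurableSet_Ici (fun x _ => norm_nonneg _)
  have hIm0 : 0 ≤ Im := setIntegral_nonneg measurableSet_Ici (fun x _ => norm_nonneg _)
  -- bound on ∫ ‖F‖‖U‖ over intervals
  have hFUp : ∀ a b : ℝ, 0 ≤ a → a ≤ b →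
      (∫ x in a..b, ‖Fp x‖ * ‖Up x‖) ≤ mp * Ip := by
    intro a b ha hab
    have hIcc : Icc a b ⊆ Ici (0:ℝ) := fun x hx => le_trans ha hx.1
    have h1 : IntervalIntegrable (fun x => ‖Fp x‖ * ‖Up x‖) volume a b := by
      apply ContinuousOn.intervalIntegrable
      rw [uIcc_of_le hab]
      exact ((hFp.mono hIcc).norm.mul ((hUpc.mono hIcc).norm))
    have h2 : IntervalIntegrable (fun x => mp * ‖Fp x‖) volume a b := by
      apply IntervalIntegrable.const_mul
      apply ContinuousOn.intervalIntegrable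
      rw [uIcc_of_le hab]
      exact (hFp.mono hIcc).norm
    have step1 : (∫ x in a..b, ‖Fp x‖ * ‖Up x‖) ≤ ∫ x in a..b, mp * ‖Fp x‖ := by
      refine intervalIntegral.integral_mono_on hab h1 h2 (fun x hx => ?_)
      have := hmple x (hIcc hx)
      nlinarith [norm_nonneg (Fp x)]
    have step2 : (∫ x in a..b, ‖Fp x‖) ≤ Ip := by
      rw [intervalIntegral.integral_of_le hab, hIpdef]
      rw [integral_Ici_eq_integral_Ioi]
      refine setIntegral_mono_set (hFpInt.mono_set Ioi_subset_Ici_self)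
        (Filter.Eventually.of_forall fun x => norm_nonneg _) ?_
      exact HasSubset.Subset.eventuallyLE (fun x hx => lt_of_le_of_lt ha hx.1)
    calc (∫ x in a..b, ‖Fp x‖ * ‖Up x‖) ≤ ∫ x in a..b, mp * ‖Fp x‖ := step1
      _ = mp * ∫ x in a..b, ‖Fp x‖ := intervalIntegral.integral_const_mul _ _
      _ ≤ mp * Ip := mul_le_mul_of_nonneg_left step2 hmp0
  have hFUm : ∀ a b : ℝ, 0 ≤ a → a ≤ b →
      (∫ x in a..b, ‖Fm x‖ * ‖Um x‖) ≤ mm * Im := by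
    intro a b ha hab
    have hIcc : Icc a b ⊆ Ici (0:ℝ) := fun x hx => le_trans ha hx.1
    have h1 : IntervalIntegrable (fun x => ‖Fm x‖ * ‖Um x‖) volume a b := by
      apply ContinuousOn.intervalIntegrable
      rw [uIcc_of_le hab]
      exact ((hFm.mono hIcc).norm.mul ((hUmc.mono hIcc).norm))
    have h2 : IntervalIntegrable (fun x => mm * ‖Fm x‖) volume a b := by
      apply IntervalIntegrable.const_mul
      apply ContinuousOn.intervalIntegrable
      rw [uIcc_of_le hab]
      exact (hFm.mono hIcc).norm
    have step1 : (∫ x in a..b, ‖Fm x‖ * ‖Um x‖) ≤ ∫ x in a..b, mm * ‖Fm x‖ := by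
      refine intervalIntegral.integral_mono_on hab h1 h2 (fun x hx => ?_)
      have := hmmle x (hIcc hx)
      nlinarith [norm_nonneg (Fm x)]
    have step2 : (∫ x in a..b, ‖Fm x‖) ≤ Im := by
      rw [intervalIntegral.integral_of_le hab, hImdef]
      rw [integral_Ici_eq_integral_Ioi]
      refine setIntegral_mono_set (hFmInt.mono_set Ioi_subset_Ici_self)
        (Filter.Eventually.of_forall fun x => norm_nonneg _) ?_
      exact HasSubset.Subset.eventuallyLE (fun x hx => lt_of_le_of_lt ha hx.1)
    calc (∫ x in a..b, ‖Fm x‖ * ‖Um x‖) ≤ ∫ x in a..b, mm * ‖Fm x‖ := step1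
      _ = mm * ∫ x in a..b, ‖Fm x‖ := intervalIntegral.integral_const_mul _ _
      _ ≤ mm * Im := mul_le_mul_of_nonneg_left step2 hmm0
  -- energies
  set Ep : ℝ → ℝ := fun t => (inner (𝕜 := ℂ) (Matrix.toEuclideanLin Sp (Up t)) (Up t)).re
    with hEpdef
  set Em : ℝ → ℝ := fun t => (inner (𝕜 := ℂ) (Matrix.toEuclideanLin Sm (Um t)) (Um t)).re
    with hEmdef
  -- energy tends to zero at infinity (plus block)
  have hEp0 : Filter.Tendsto Ep Filter.atTop (nhds 0) := by
    have h1 : Filter.Tendsto (fun t => Matrix.toEuclideanCLM (𝕜 := ℂ) Sp (Up t))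
        Filter.atTop (nhds (Matrix.toEuclideanCLM (𝕜 := ℂ) Sp 0)) :=
      ((Matrix.toEuclideanCLM (𝕜 := ℂ) Sp).continuous.tendsto 0).comp hUp0
    have h2 := Filter.Tendsto.inner (𝕜 := ℂ) h1 hUp0
    have h3 := (Complex.continuous_re.tendsto _).comp h2
    simp only [map_zero, inner_zero_right, Complex.zero_re] at h3
    convert h3 using 2
    rfl
  -- interval integral nonnegativity helper
  have hintnonnegp : ∀ a b : ℝ, a ≤ b → 0 ≤ ∫ x in a..b, ‖Up x‖^2 := by
    intro a b hab
    exact intervalIntegral.integral_nonneg hab (fun u _ => sq_nonneg _)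
  have hintnonnegm : ∀ a b : ℝ, a ≤ b → 0 ≤ ∫ x in a..b, ‖Um x‖^2 := by
    intro a b hab
    exact intervalIntegral.integral_nonneg hab (fun u _ => sq_nonneg _)
  -- (P1): pointwise bound for the plus block
  have P1 : ∀ t ∈ Ici (0:ℝ), ‖Up t‖^2 ≤ 2*Kp*(mp*Ip) := by
    intro t ht
    have key : ∀ b, t ≤ b → ‖Up t‖^2 - 2*Kp*(mp*Ip) ≤ Ep b := by
      intro b hb
      have hcore := energy_core θ Kp Qp Fp Up Sp hQp hFp hUp' hSpH hSQp hKp ht hb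
      have e1 := hSpPos (Up t)
      have e2 := hFUp t b ht hb
      have e3 := hintnonnegp t b hb
      have e4 : 0 ≤ 2*θ*(∫ x in t..b, ‖Up x‖^2) := by positivity
      nlinarith
    have := ge_of_tendsto hEp0 ((Filter.eventually_ge_atTop t).mono fun b hb => key b hb)
    linarith
  -- sup bound for the plus block
  have hmp2 : mp^2 ≤ 2*Kp*(mp*Ip) := by
    have hB : (0:ℝ) ≤ 2*Kp*(mp*Ip) := by positivity
    have h1 : mp ≤ Real.sqrt (2*Kp*(mp*Ip)) := by
      refine hmpsup _ fun t ht => ?_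
      exact Real.le_sqrt_of_sq_le (P1 t ht)
    calc mp^2 ≤ Real.sqrt (2*Kp*(mp*Ip))^2 := by
          exact pow_le_pow_left₀ hmp0 h1 2
      _ = 2*Kp*(mp*Ip) := Real.sq_sqrt hB
  have hmpIp : mp ≤ 2*Kp*Ip := by
    rcases eq_or_lt_of_le hmp0 with h0 | h0
    · rw [← h0]; positivity
    · have h' : mp*mp ≤ (2*Kp*Ip)*mp := by nlinarith
      exact le_of_mul_le_mul_right h' h0
  -- (P2): integral bound for the plus block
  have P2 : θ * (∫ x in Ici (0:ℝ), ‖Up x‖^2) ≤ Kp*(mp*Ip) := by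
    have key : ∀ b, (0:ℝ) ≤ b → 2*θ*(∫ x in (0:ℝ)..b, ‖Up x‖^2) ≤ Ep b + 2*Kp*(mp*Ip) := by
      intro b hb
      have hcore := energy_core θ Kp Qp Fp Up Sp hQp hFp hUp' hSpH hSQp hKp (le_refl (0:ℝ)) hb
      have e1 := hSpPos (Up 0)
      have e2 := hFUp 0 b (le_refl _) hb
      nlinarith [sq_nonneg ‖Up 0‖]
    have hlim1 : Filter.Tendsto (fun b => 2*θ*(∫ x in (0:ℝ)..b, ‖Up x‖^2))
        Filter.atTop (nhds (2*θ*(∫ x in Ioi (0:ℝ), ‖Up x‖^2))) :=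
      (MeasureTheory.intervalIntegral_tendsto_integral_Ioi 0
        (hUp2.mono_set Ioi_subset_Ici_self) Filter.tendsto_id).const_mul (2*θ)
    have hlim2 : Filter.Tendsto (fun b => Ep b + 2*Kp*(mp*Ip))
        Filter.atTop (nhds (0 + 2*Kp*(mp*Ip))) := hEp0.add tendsto_const_nhds
    have := le_of_tendsto_of_tendsto hlim1 hlim2
      ((Filter.eventually_ge_atTop (0:ℝ)).mono fun b hb => key b hb)
    rw [integral_Ici_eq_integral_Ioi]
    linarith
  -- minus block
  have hKm0 : (0:ℝ) ≤ Km := by linarith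
  have hKp0 : (0:ℝ) ≤ Kp := by linarith
  have hEm0b : -(inner (𝕜 := ℂ) (Matrix.toEuclideanLin Sm (Um 0)) (Um 0)).re
      ≤ Km * ‖Um 0‖^2 := by
    have hn : ‖(inner (𝕜 := ℂ) (Matrix.toEuclideanLin Sm (Um 0)) (Um 0) : ℂ)‖
        ≤ Km * ‖Um 0‖^2 := by
      refine le_trans (norm_inner_le_norm _ _) ?_
      rw [key0m]
      have h1 : ‖Matrix.toEuclideanCLM (𝕜 := ℂ) Sm (Um 0)‖ ≤ Km * ‖Um 0‖ :=
        le_trans ((Matrix.toEuclideanCLM (𝕜 := ℂ) Sm).le_opNorm (Um 0))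
          (mul_le_mul_of_nonneg_right hKm (norm_nonneg _))
      calc ‖Matrix.toEuclideanCLM (𝕜 := ℂ) Sm (Um 0)‖ * ‖Um 0‖
          ≤ (Km * ‖Um 0‖) * ‖Um 0‖ := mul_le_mul_of_nonneg_right h1 (norm_nonneg _)
        _ = Km * ‖Um 0‖^2 := by ring
    have hre := Complex.abs_re_le_norm
      (inner (𝕜 := ℂ) (Matrix.toEuclideanLin Sm (Um 0)) (Um 0) : ℂ)
    have := neg_abs_le (inner (𝕜 := ℂ) (Matrix.toEuclideanLin Sm (Um 0)) (Um 0) : ℂ).re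
    linarith
  have hUm0sq : ‖Um 0‖^2 ≤ c^2 * mp^2 := by
    have h1 := hmple 0 self_mem_Ici
    have h2 : ‖Um 0‖ ≤ c*mp := le_trans hbc (mul_le_mul_of_nonneg_left h1 hc)
    have h3 := mul_self_le_mul_self (norm_nonneg (Um 0)) h2
    nlinarith
  have keym : ∀ b, (0:ℝ) ≤ b →
      ‖Um b‖^2 + 2*θ*(∫ x in (0:ℝ)..b, ‖Um x‖^2)
        ≤ Km*(c^2*mp^2) + 2*Km*(mm*Im) := by
    intro b hb
    have hcore := energy_core θ Km Qm Fm Um Sm hQm hFm hUm' hSmH hSQm hKm (le_refl (0:ℝ)) hb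
    have e1 := hSmNeg (Um b)
    have e2 := hFUm 0 b (le_refl _) hb
    have e3 : Km*‖Um 0‖^2 ≤ Km*(c^2*mp^2) := mul_le_mul_of_nonneg_left hUm0sq hKm0
    have e4 : 2*Km*(∫ x in (0:ℝ)..b, ‖Fm x‖ * ‖Um x‖) ≤ 2*Km*(mm*Im) := by
      apply mul_le_mul_of_nonneg_left e2; linarith
    linarith [hEm0b, hcore]
  have hX0 : (0:ℝ) ≤ Km*(c^2*mp^2) + 2*Km*(mm*Im) := by
    have h1 := mul_nonneg hKm0 (mul_nonneg (sq_nonneg c) (sq_nonneg mp))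
    have h2 := mul_nonneg (mul_nonneg hKm0 hmm0) hIm0
    nlinarith
  have M1 : ∀ t ∈ Ici (0:ℝ), ‖Um t‖^2 ≤ Km*(c^2*mp^2) + 2*Km*(mm*Im) := by
    intro t ht
    have h1 := keym t ht
    have h2 : 0 ≤ 2*θ*(∫ x in (0:ℝ)..t, ‖Um x‖^2) :=
      mul_nonneg (by linarith) (hintnonnegm 0 t ht)
    linarith
  have hmm2 : mm^2 ≤ Km*(c^2*mp^2) + 2*Km*(mm*Im) := by
    have h1 : mm ≤ Real.sqrt (Km*(c^2*mp^2) + 2*Km*(mm*Im)) :=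
      hmmsup _ fun t ht => Real.le_sqrt_of_sq_le (M1 t ht)
    calc mm^2 ≤ Real.sqrt (Km*(c^2*mp^2) + 2*Km*(mm*Im))^2 :=
          pow_le_pow_left₀ hmm0 h1 2
      _ = Km*(c^2*mp^2) + 2*Km*(mm*Im) := Real.sq_sqrt hX0
  have M2 : θ * (∫ x in Ici (0:ℝ), ‖Um x‖^2)
      ≤ (Km*(c^2*mp^2) + 2*Km*(mm*Im))/2 := by
    have key : ∀ b, (0:ℝ) ≤ b → 2*θ*(∫ x in (0:ℝ)..b, ‖Um x‖^2)
        ≤ Km*(c^2*mp^2) + 2*Km*(mm*Im) := by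
      intro b hb
      have := keym b hb
      nlinarith [sq_nonneg ‖Um b‖]
    have hlim1 : Filter.Tendsto (fun b => 2*θ*(∫ x in (0:ℝ)..b, ‖Um x‖^2))
        Filter.atTop (nhds (2*θ*(∫ x in Ioi (0:ℝ), ‖Um x‖^2))) :=
      (MeasureTheory.intervalIntegral_tendsto_integral_Ioi 0
        (hUm2.mono_set Ioi_subset_Ici_self) Filter.tendsto_id).const_mul (2*θ)
    have := le_of_tendsto hlim1
      ((Filter.eventually_ge_atTop (0:ℝ)).mono fun b hb => key b hb)
    rw [integral_Ici_eq_integral_Ioi]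
    linarith
  -- final aggregation
  have f1 := P1 z hz
  have f2 := M1 z hz
  have f5 : mp*Ip ≤ (2*Kp*Ip)*Ip := mul_le_mul_of_nonneg_right hmpIp hIp0
  have f15 : 2*Kp*(mp*Ip) ≤ 2*Kp*((2*Kp*Ip)*Ip) := by
    apply mul_le_mul_of_nonneg_left f5; linarith
  have f16 : Kp*(mp*Ip) ≤ Kp*((2*Kp*Ip)*Ip) := mul_le_mul_of_nonneg_left f5 hKp0
  have f6 : mp^2 ≤ 4*Kp^2*Ip^2 := by nlinarith [hmp2, f15]
  have g1 : Km*(c^2*mp^2) ≤ Km*(c^2*(4*Kp^2*Ip^2)) :=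
    mul_le_mul_of_nonneg_left (mul_le_mul_of_nonneg_left f6 (sq_nonneg c)) hKm0
  have g3 : 2*Km*(mm*Im) ≤ mm^2/2 + 2*Km^2*Im^2 := by
    nlinarith [sq_nonneg (mm - 2*Km*Im)]
  have g2 : mm^2 ≤ 2*(Km*(c^2*(4*Kp^2*Ip^2))) + 4*Km^2*Im^2 := by
    linarith [hmm2, g1, g3]
  have gX : Km*(c^2*mp^2) + 2*Km*(mm*Im)
      ≤ 8*Km*c^2*Kp^2*Ip^2 + 4*Km^2*Im^2 := by linarith [g1, g2, g3]
  have h_e1 : Ip^2 ≤ (Ip+Im)^2 := by nlinarith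
  have h_e2 : Im^2 ≤ (Ip+Im)^2 := by nlinarith
  have hKm2 : Km ≤ Km^2 := by nlinarith
  have t1 : 6*Kp^2*Ip^2 ≤ 6*Kp^2*(Ip+Im)^2 := by
    have := mul_le_mul_of_nonneg_left h_e1 (by positivity : (0:ℝ) ≤ 6*Kp^2)
    linarith
  have t3 : 6*Km^2*Im^2 ≤ 6*Km^2*(Ip+Im)^2 := by
    have := mul_le_mul_of_nonneg_left h_e2 (by positivity : (0:ℝ) ≤ 6*Km^2)
    linarith
  have t2 : 12*Km*c^2*Kp^2*Ip^2 ≤ 12*Km^2*c^2*Kp^2*(Ip+Im)^2 := by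
    have hmid : Km*Ip^2 ≤ Km^2*(Ip+Im)^2 :=
      mul_le_mul hKm2 h_e1 (sq_nonneg Ip) (sq_nonneg Km)
    have := mul_le_mul_of_nonneg_left hmid (by positivity : (0:ℝ) ≤ 12*c^2*Kp^2)
    nlinarith [this]
  linarith [f1, f2, P2, M2, f15, f16, gX, t1, t2, t3, sq_nonneg (Ip+Im)]
end
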